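/- arXiv:2005.13941 — 11 statements merged into one kernel-verified Lean document; each statement's English description precedes it below -/
import Mathlib

section
/- Let V be a real Banach space and let σ be a reversible conical geodesic bicombing on V (with the metric induced by the norm). Then σ(x,y,t) = (1−t)·x + t·y for all x, y ∈ V and t ∈ [0,1]. In particular, V admits exactly one reversible conical geodesic bicombing. -/
/-- A geodesic bicombing on a metric space `X`: a map `σ : X × X × [0,1] → X` such that
`σ x y 0 = x`, `σ x y 1 = y` and `dist (σ x y s) (σ x y t) = |s - t| * dist x y`
for all `s, t ∈ [0,1]`. -/
def IsGeodesicBicombing {X : Type*} [MetricSpace X] (σ : X → X → ℝ → X) : Prop :=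
  (∀ x y : X, σ x y 0 = x) ∧ (∀ x y : X, σ x y 1 = y) ∧
    ∀ x y : X, ∀ s ∈ Set.Icc (0:ℝ) 1, ∀ t ∈ Set.Icc (0:ℝ) 1,
      dist (σ x y s) (σ x y t) = |s - t| * dist x y

/-- A bicombing is conical if
`dist (σ x y t) (σ x' y' t) ≤ (1 - t) * dist x x' + t * dist y y'` for all `t ∈ [0,1]`. -/
def IsConical {X : Type*} [MetricSpace X] (σ : X → X → ℝ → X) : Prop :=
  ∀ x y x' y' : X, ∀ t ∈ Set.Icc (0:ℝ) 1,
    dist (σ x y t) (σ x' y' t) ≤ (1 - t) * dist x x' + t * dist y y'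

/-- A bicombing is reversible if `σ x y t = σ y x (1 - t)` for all `t ∈ [0,1]`. -/
def IsReversible {X : Type*} [MetricSpace X] (σ : X → X → ℝ → X) : Prop :=
  ∀ x y : X, ∀ t ∈ Set.Icc (0:ℝ) 1, σ x y t = σ y x (1 - t)


section BicombingAux

open Set Metric

section Nfun
variable {V : Type*} [NormedAddCommGroup V] [NormedSpace ℝ V]
variable (t : ℝ) (f : V →L[ℝ] ℝ)

noncomputable def Nfun (v : V) : ℝ := ⨅ z : V, (t * ‖v + z‖ + (1 - t) * ‖z‖ - f z)

variable {t f}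

lemma Nfun_bddBelow (ht0 : 0 ≤ t) (ht1 : t ≤ 1) (hf : ∀ v : V, f v ≤ ‖v‖) (v : V) :
    BddBelow (Set.range fun z : V => t * ‖v + z‖ + (1 - t) * ‖z‖ - f z) := by
  refine ⟨t * f v, ?_⟩
  rintro r ⟨z, rfl⟩
  dsimp only
  have h1 : f (v + z) ≤ ‖v + z‖ := hf _
  have h2 : f z ≤ ‖z‖ := hf _
  rw [map_add f v z] at h1
  nlinarith [mul_le_mul_of_nonneg_left h1 ht0,
    mul_le_mul_of_nonneg_left h2 (by linarith : (0:ℝ) ≤ 1 - t)]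

lemma Nfun_le (ht0 : 0 ≤ t) (ht1 : t ≤ 1) (hf : ∀ v : V, f v ≤ ‖v‖) (v z : V) :
    Nfun t f v ≤ t * ‖v + z‖ + (1 - t) * ‖z‖ - f z :=
  ciInf_le (Nfun_bddBelow ht0 ht1 hf v) z

lemma le_Nfun (v : V) {c : ℝ} (h : ∀ z : V, c ≤ t * ‖v + z‖ + (1 - t) * ‖z‖ - f z) :
    c ≤ Nfun t f v := le_ciInf h

lemma tf_le_Nfun (ht0 : 0 ≤ t) (ht1 : t ≤ 1) (hf : ∀ v : V, f v ≤ ‖v‖) (v : V) :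
    t * f v ≤ Nfun t f v := by
  refine le_Nfun v fun z => ?_
  have h1 : f (v + z) ≤ ‖v + z‖ := hf _
  have h2 : f z ≤ ‖z‖ := hf _
  rw [map_add f v z] at h1
  nlinarith [mul_le_mul_of_nonneg_left h1 ht0,
    mul_le_mul_of_nonneg_left h2 (by linarith : (0:ℝ) ≤ 1 - t)]

lemma Nfun_le_t_norm (ht0 : 0 ≤ t) (ht1 : t ≤ 1) (hf : ∀ v : V, f v ≤ ‖v‖) (v : V) :
    Nfun t f v ≤ t * ‖v‖ := by
  have := Nfun_le ht0 ht1 hf v 0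
  simpa using this

lemma Nfun_zero (ht0 : 0 ≤ t) (ht1 : t ≤ 1) (hf : ∀ v : V, f v ≤ ‖v‖) :
    Nfun t f (0 : V) = 0 := by
  have h1 := Nfun_le_t_norm ht0 ht1 hf (0 : V)
  have h2 := tf_le_Nfun ht0 ht1 hf (0 : V)
  simp at h1 h2
  linarith

lemma Nfun_add (ht0 : 0 ≤ t) (ht1 : t ≤ 1) (hf : ∀ v : V, f v ≤ ‖v‖) (v₁ v₂ : V) :
    Nfun t f (v₁ + v₂) ≤ Nfun t f v₁ + Nfun t f v₂ := by
  have key : ∀ z₁ z₂ : V, Nfun t f (v₁ + v₂) ≤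
      (t * ‖v₁ + z₁‖ + (1 - t) * ‖z₁‖ - f z₁) + (t * ‖v₂ + z₂‖ + (1 - t) * ‖z₂‖ - f z₂) := by
    intro z₁ z₂
    have h0 := Nfun_le ht0 ht1 hf (v₁ + v₂) (z₁ + z₂)
    have hn1 : ‖v₁ + v₂ + (z₁ + z₂)‖ ≤ ‖v₁ + z₁‖ + ‖v₂ + z₂‖ := by
      have h : v₁ + v₂ + (z₁ + z₂) = (v₁ + z₁) + (v₂ + z₂) := by abel
      rw [h]; exact norm_add_le _ _
    have hn2 : ‖z₁ + z₂‖ ≤ ‖z₁‖ + ‖z₂‖ := norm_add_le _ _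
    have hf3 : f (z₁ + z₂) = f z₁ + f z₂ := map_add f z₁ z₂
    rw [hf3] at h0
    nlinarith [mul_le_mul_of_nonneg_left hn1 ht0,
      mul_le_mul_of_nonneg_left hn2 (by linarith : (0:ℝ) ≤ 1 - t)]
  have step : ∀ z₁ : V, Nfun t f (v₁ + v₂) - (t * ‖v₁ + z₁‖ + (1 - t) * ‖z₁‖ - f z₁)
      ≤ Nfun t f v₂ := by
    intro z₁
    refine le_Nfun v₂ fun z₂ => ?_
    linarith [key z₁ z₂]
  have h : Nfun t f (v₁ + v₂) - Nfun t f v₂ ≤ Nfun t f v₁ := by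
    refine le_Nfun v₁ fun z₁ => ?_
    linarith [step z₁]
  linarith

lemma Nfun_smul (ht0 : 0 ≤ t) (ht1 : t ≤ 1) (hf : ∀ v : V, f v ≤ ‖v‖)
    {c : ℝ} (hc : 0 < c) (v : V) : Nfun t f (c • v) = c * Nfun t f v := by
  have expr_smul : ∀ z : V, t * ‖c • v + c • z‖ + (1 - t) * ‖c • z‖ - f (c • z)
      = c * (t * ‖v + z‖ + (1 - t) * ‖z‖ - f z) := by
    intro z
    have h1 : ‖c • v + c • z‖ = c * ‖v + z‖ := by
      rw [← smul_add, norm_smul, Real.norm_eq_abs, abs_of_pos hc]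
    have h2 : ‖c • z‖ = c * ‖z‖ := by rw [norm_smul, Real.norm_eq_abs, abs_of_pos hc]
    have h3 : f (c • z) = c * f z := by rw [map_smul]; simp
    rw [h1, h2, h3]; ring
  apply le_antisymm
  · -- Nfun (c • v) ≤ c * Nfun v
    rw [mul_comm, ← div_le_iff₀ hc]
    refine le_Nfun v fun z => ?_
    rw [div_le_iff₀ hc, mul_comm]
    calc Nfun t f (c • v) ≤ t * ‖c • v + c • z‖ + (1 - t) * ‖c • z‖ - f (c • z) :=
          Nfun_le ht0 ht1 hf (c • v) (c • z)
      _ = c * (t * ‖v + z‖ + (1 - t) * ‖z‖ - f z) := expr_smul z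
  · -- c * Nfun v ≤ Nfun (c • v)
    refine le_Nfun (c • v) fun z => ?_
    have hz : z = c • (c⁻¹ • z) := by rw [smul_smul, mul_inv_cancel₀ hc.ne', one_smul]
    calc c * Nfun t f v ≤ c * (t * ‖v + c⁻¹ • z‖ + (1 - t) * ‖c⁻¹ • z‖ - f (c⁻¹ • z)) := by
          exact mul_le_mul_of_nonneg_left (Nfun_le ht0 ht1 hf v (c⁻¹ • z)) hc.le
      _ = t * ‖c • v + c • (c⁻¹ • z)‖ + (1 - t) * ‖c • (c⁻¹ • z)‖ - f (c • (c⁻¹ • z)) :=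
          (expr_smul (c⁻¹ • z)).symm
      _ = t * ‖c • v + z‖ + (1 - t) * ‖z‖ - f z := by rw [← hz]

end Nfun

lemma exists_extreme_norming {W : Type*} [NormedAddCommGroup W] [NormedSpace ℝ W]
    [FiniteDimensional ℝ W] (u : W) (hu : u ≠ 0) :
    ∃ φ : W →L[ℝ] ℝ, ‖φ‖ ≤ 1 ∧ φ u = ‖u‖ ∧
      ∀ ⦃a : W →L[ℝ] ℝ⦄, ‖a‖ ≤ 1 → ∀ ⦃b : W →L[ℝ] ℝ⦄, ‖b‖ ≤ 1 →
        φ ∈ openSegment ℝ a b → a = φ ∧ b = φ := by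
  obtain ⟨φ₀, hφ₀norm, hφ₀u⟩ := exists_dual_vector ℝ u (norm_ne_zero_iff.mpr hu)
  set L : (W →L[ℝ] ℝ) →L[ℝ] ℝ := ContinuousLinearMap.apply ℝ ℝ u with hL
  set B : Set (W →L[ℝ] ℝ) := closedBall 0 1 with hB
  set S : Set (W →L[ℝ] ℝ) := {x ∈ B | ∀ y ∈ B, L y ≤ L x} with hS
  have hmem_le : ∀ χ ∈ B, χ u ≤ ‖u‖ := by
    intro χ hχ
    have h1 : ‖χ‖ ≤ 1 := mem_closedBall_zero_iff.mp hχ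
    calc χ u ≤ |χ u| := le_abs_self _
      _ = ‖χ u‖ := (Real.norm_eq_abs _).symm
      _ ≤ ‖χ‖ * ‖u‖ := χ.le_opNorm u
      _ ≤ 1 * ‖u‖ := by
          exact mul_le_mul_of_nonneg_right h1 (norm_nonneg _)
      _ = ‖u‖ := one_mul _
  have hφ₀B : φ₀ ∈ B := by
    rw [hB, mem_closedBall_zero_iff, hφ₀norm]
  have hφ₀S : φ₀ ∈ S := by
    refine ⟨hφ₀B, fun χ hχ => ?_⟩
    show χ u ≤ φ₀ u
    rw [hφ₀u]
    exact_mod_cast hmem_le χ hχ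
  have hBcomp : IsCompact B := isCompact_closedBall _ _
  have hSclosed : IsClosed S := by
    have hrw : S = B ∩ ⋂ χ ∈ B, {ψ | L χ ≤ L ψ} := by
      ext ψ
      simp only [hS, Set.mem_setOf_eq, Set.mem_inter_iff, Set.mem_iInter]
    rw [hrw]
    exact Metric.isClosed_closedBall.inter
      (isClosed_biInter fun χ _ => isClosed_le continuous_const L.continuous)
  have hScomp : IsCompact S := hBcomp.of_isClosed_subset hSclosed fun ψ hψ => hψ.1
  obtain ⟨φ, hφS⟩ := hScomp.extremePoints_nonempty ⟨φ₀, hφ₀S⟩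
  have hexp : IsExposed ℝ B S := fun _ => ⟨L, rfl⟩
  have hφBext : φ ∈ B.extremePoints ℝ :=
    hexp.isExtreme.extremePoints_subset_extremePoints hφS
  have hφmem : φ ∈ S := hφS.1
  have hφu : φ u = ‖u‖ := by
    have h1 : φ₀ u ≤ φ u := hφmem.2 φ₀ hφ₀B
    have h2 : φ u ≤ ‖u‖ := hmem_le φ hφmem.1
    have h3 : φ₀ u = ‖u‖ := by exact_mod_cast hφ₀u
    linarith
  refine ⟨φ, mem_closedBall_zero_iff.mp hφBext.1, hφu, ?_⟩
  intro a ha b hb hseg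
  exact (mem_extremePoints.mp hφBext).2 _ (mem_closedBall_zero_iff.mpr ha) _ (mem_closedBall_zero_iff.mpr hb) hseg

section minorantsec
variable {V : Type*} [NormedAddCommGroup V] [NormedSpace ℝ V]

lemma exists_minorant {t : ℝ} {f : V →L[ℝ] ℝ} (ht0 : 0 < t) (ht1 : t < 1)
    (hf : ∀ v : V, f v ≤ ‖v‖) {w : V} (hw : w ≠ 0) :
    ∃ G : V →L[ℝ] ℝ, G w = Nfun t f w ∧ (∀ v, |G v| ≤ t * ‖v‖) ∧
      (∀ v, |f v - G v| ≤ (1 - t) * ‖v‖) := by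
  have hneg : ∀ v : V, -Nfun t f (-v) ≤ Nfun t f v := by
    intro v
    have h := Nfun_add ht0.le ht1.le hf v (-v)
    rw [add_neg_cancel, Nfun_zero ht0.le ht1.le hf] at h
    linarith
  -- the partial linear map on span {w}
  set pm : V →ₗ.[ℝ] ℝ := LinearPMap.mkSpanSingleton w (Nfun t f w) hw with hpm
  have hdom : ∀ ξ : pm.domain, pm ξ ≤ Nfun t f ξ := by
    rintro ⟨ξv, hξv⟩
    obtain ⟨c, rfl⟩ := Submodule.mem_span_singleton.mp hξv
    have happ : pm ⟨c • w, hξv⟩ = c • Nfun t f w :=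
      LinearPMap.mkSpanSingleton'_apply _ _ _ c _
    rw [happ]
    rcases lt_trichotomy c 0 with hc | hc | hc
    · have h1 : c • w = (-c) • (-w) := by rw [smul_neg, neg_smul, neg_neg]
      have h2 : Nfun t f ((-c) • (-w)) = (-c) * Nfun t f (-w) :=
        Nfun_smul ht0.le ht1.le hf (by linarith) _
      have h3 := hneg w
      show c * Nfun t f w ≤ Nfun t f (c • w)
      rw [h1, h2]
      nlinarith [h3]
    · subst hc
      simp [Nfun_zero ht0.le ht1.le hf]
    · show c * Nfun t f w ≤ Nfun t f (c • w)
      rw [Nfun_smul ht0.le ht1.le hf hc]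
  obtain ⟨g, hg_eq, hg_le⟩ := exists_extension_of_le_sublinear pm (Nfun t f)
    (fun c hc x => Nfun_smul ht0.le ht1.le hf hc x)
    (Nfun_add ht0.le ht1.le hf) hdom
  have hgw : g w = Nfun t f w := by
    have h1 := hg_eq ⟨w, Submodule.mem_span_singleton_self w⟩
    have h2 : pm ⟨w, Submodule.mem_span_singleton_self w⟩ = Nfun t f w :=
      LinearPMap.mkSpanSingleton_apply ℝ ℝ hw (Nfun t f w)
    rw [h1, h2]
  have habs : ∀ v, |g v| ≤ t * ‖v‖ := by
    intro v
    rw [abs_le]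
    constructor
    · have h := (hg_le (-v)).trans (Nfun_le_t_norm ht0.le ht1.le hf (-v))
      rw [map_neg, norm_neg] at h
      linarith
    · exact (hg_le v).trans (Nfun_le_t_norm ht0.le ht1.le hf v)
  refine ⟨g.mkContinuous t (fun v => by rw [Real.norm_eq_abs]; exact habs v), hgw, habs, ?_⟩
  intro v
  show |f v - g v| ≤ (1 - t) * ‖v‖
  rw [abs_le]
  have hub : g v - f v ≤ (1 - t) * ‖v‖ := by
    have h := (hg_le v).trans (Nfun_le ht0.le ht1.le hf v (-v))
    simp only [add_neg_cancel, norm_zero, mul_zero, zero_add, norm_neg, map_neg] at h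
    linarith
  have hlb : f v - g v ≤ (1 - t) * ‖v‖ := by
    have h := (hg_le (-v)).trans (Nfun_le ht0.le ht1.le hf (-v) v)
    simp only [neg_add_cancel, norm_zero, mul_zero, zero_add, map_neg] at h
    linarith
  exact ⟨by linarith, by linarith⟩

lemma key_contradiction {t : ℝ} (ht0 : 0 < t) (ht1 : t < 1) {u w : V}
    (hu : u ≠ 0) (hw : w ≠ 0)
    (key : ∀ f : V →L[ℝ] ℝ, ‖f‖ ≤ 1 → ∀ z : V,
      f u ≤ t * ‖w + z‖ + (1 - t) * ‖z‖ - f z - t * f w) : False := by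
  classical
  set W : Submodule ℝ V := Submodule.span ℝ ({u, w} : Set V) with hWdef
  haveI : FiniteDimensional ℝ W := FiniteDimensional.span_of_finite ℝ (Set.toFinite _)
  have huW : u ∈ W := Submodule.subset_span (by simp)
  have hwW : w ∈ W := Submodule.subset_span (by simp)
  set u' : W := ⟨u, huW⟩ with hu'def
  set w' : W := ⟨w, hwW⟩ with hw'def
  have hu' : u' ≠ 0 := by
    intro h
    exact hu (by simpa [hu'def, Submodule.mk_eq_zero] using h)
  obtain ⟨φ, hφball, hφu, hφext⟩ := exists_extreme_norming u' hu'
  obtain ⟨f, hf_eq, hf_norm⟩ := exists_extension_norm_eq W φ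
  have hf1 : ‖f‖ ≤ 1 := by rw [hf_norm]; exact hφball
  have hfle : ∀ v : V, f v ≤ ‖v‖ := by
    intro v
    calc f v ≤ |f v| := le_abs_self _
      _ = ‖f v‖ := (Real.norm_eq_abs _).symm
      _ ≤ ‖f‖ * ‖v‖ := f.le_opNorm v
      _ ≤ 1 * ‖v‖ := mul_le_mul_of_nonneg_right hf1 (norm_nonneg _)
      _ = ‖v‖ := one_mul _
  obtain ⟨G, hGw, hGabs, hfGabs⟩ := exists_minorant ht0 ht1 hfle hw
  set ψ : W →L[ℝ] ℝ := G.comp W.subtypeL with hψdef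
  have hψ_app : ∀ ξ : W, ψ ξ = G (ξ : V) := fun _ => rfl
  set a : W →L[ℝ] ℝ := t⁻¹ • ψ with hadef
  set b : W →L[ℝ] ℝ := (1 - t)⁻¹ • (φ - ψ) with hbdef
  have haB : ‖a‖ ≤ 1 := by
    refine ContinuousLinearMap.opNorm_le_bound _ zero_le_one fun ξ => ?_
    have : a ξ = t⁻¹ * G (ξ : V) := rfl
    rw [this, one_mul, Real.norm_eq_abs, abs_mul, abs_of_pos (inv_pos.mpr ht0)]
    have h1 : |G (ξ : V)| ≤ t * ‖(ξ : V)‖ := hGabs _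
    have h2 : ‖(ξ : V)‖ = ‖ξ‖ := rfl
    rw [h2] at h1
    calc t⁻¹ * |G (ξ : V)| ≤ t⁻¹ * (t * ‖ξ‖) :=
          mul_le_mul_of_nonneg_left h1 (inv_pos.mpr ht0).le
      _ = ‖ξ‖ := by rw [← mul_assoc, inv_mul_cancel₀ ht0.ne', one_mul]
  have hbB : ‖b‖ ≤ 1 := by
    refine ContinuousLinearMap.opNorm_le_bound _ zero_le_one fun ξ => ?_
    have h0 : b ξ = (1 - t)⁻¹ * (φ ξ - G (ξ : V)) := rfl
    have hφξ : φ ξ = f (ξ : V) := (hf_eq ξ).symm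
    rw [h0, hφξ, one_mul, Real.norm_eq_abs, abs_mul,
      abs_of_pos (inv_pos.mpr (by linarith : (0:ℝ) < 1 - t))]
    have h1 : |f (ξ : V) - G (ξ : V)| ≤ (1 - t) * ‖(ξ : V)‖ := hfGabs _
    have h2 : ‖(ξ : V)‖ = ‖ξ‖ := rfl
    rw [h2] at h1
    calc (1 - t)⁻¹ * |f (ξ : V) - G (ξ : V)| ≤ (1 - t)⁻¹ * ((1 - t) * ‖ξ‖) :=
          mul_le_mul_of_nonneg_left h1 (inv_pos.mpr (by linarith)).le
      _ = ‖ξ‖ := by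
          rw [← mul_assoc, inv_mul_cancel₀ (by linarith : (1:ℝ) - t ≠ 0), one_mul]
  have hseg : φ ∈ openSegment ℝ a b := by
    refine ⟨t, 1 - t, ht0, by linarith, by ring, ?_⟩
    rw [hadef, hbdef, smul_smul, smul_smul, mul_inv_cancel₀ ht0.ne',
      mul_inv_cancel₀ (by linarith : (1:ℝ) - t ≠ 0), one_smul, one_smul]
    abel
  have ha_eq : a = φ := (hφext haB hbB hseg).1
  have hψφ : ψ = t • φ := by
    rw [← ha_eq, hadef, smul_smul, mul_inv_cancel₀ ht0.ne', one_smul]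
  -- compute Nfun t f w
  have hNw : Nfun t f w = t * φ w' := by
    rw [← hGw, ← hψ_app w', hψφ]
    rfl
  -- the chain inequality
  have hchain : f u + t * f w ≤ Nfun t f w := by
    refine le_Nfun w fun z => ?_
    have := key f hf1 z
    linarith
  have hfw : f w = φ w' := hf_eq w'
  have hfu : f u = ‖u‖ := by
    have h1 : f u = φ u' := hf_eq u'
    rw [h1, hφu]
    rfl
  rw [hNw, ← hfw, hfu] at hchain
  have : ‖u‖ ≤ 0 := by linarith
  exact absurd this (not_le.mpr (norm_pos_iff.mpr hu))

end minorantsec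

end BicombingAux

/-- **A Banach space admits only one reversible conical geodesic bicombing**, namely the one
given by linear segments: every reversible conical geodesic bicombing `σ` on a real Banach
space satisfies `σ x y t = (1 - t) • x + t • y` for all `x, y` and `t ∈ [0,1]`. -/
theorem banach_reversible_conical_bicombing_eq_linear
    {V : Type*} [NormedAddCommGroup V] [NormedSpace ℝ V] [CompleteSpace V]
    (σ : V → V → ℝ → V) (hgeo : IsGeodesicBicombing σ) (hcon : IsConical σ)
    (hrev : IsReversible σ) :
    ∀ x y : V, ∀ t ∈ Set.Icc (0:ℝ) 1, σ x y t = (1 - t) • x + t • y := by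
  intro x y t ht
  obtain ⟨ht0, ht1⟩ := ht
  -- first endpoint distances along any geodesic
  have hstart : ∀ (a b : V) (s : ℝ), 0 ≤ s → s ≤ 1 → ‖σ a b s - a‖ = s * ‖b - a‖ := by
    intro a b s hs0 hs1
    have h := hgeo.2.2 a b 0 ⟨le_refl 0, zero_le_one⟩ s ⟨hs0, hs1⟩
    rw [hgeo.1 a b] at h
    have habs : |0 - s| = s := by rw [zero_sub, abs_neg, abs_of_nonneg hs0]
    rw [habs] at h
    rw [← dist_eq_norm, dist_comm, h, dist_eq_norm]
    rw [show ‖a - b‖ = ‖b - a‖ from norm_sub_rev a b]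
  rcases eq_or_lt_of_le ht0 with h0 | h0
  · -- t = 0
    rw [← h0]
    rw [hgeo.1 x y]
    simp
  rcases eq_or_lt_of_le ht1 with h1 | h1
  · -- t = 1
    rw [h1]
    rw [hgeo.2.1 x y]
    simp
  -- main case 0 < t < 1
  by_contra hne
  set u : V := σ x y t - ((1 - t) • x + t • y) with hudef
  have hu : u ≠ 0 := fun h => hne (by rwa [sub_eq_zero] at h)
  set w : V := y - x with hwdef
  have hw : w ≠ 0 := by
    intro h
    have hxy : y = x := by
      have := sub_eq_zero.mp h
      exact this
    apply hu
    rw [hudef, hxy]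
    have hs : ‖σ x x t - x‖ = t * ‖x - x‖ := hstart x x t ht0 ht1
    simp at hs
    rw [sub_eq_zero, sub_eq_zero.mp hs, ← add_smul]
    simp
  exact key_contradiction h0 h1 hu hw (by
    intro f hf1 z
    have hfle : ∀ v : V, f v ≤ ‖v‖ := by
      intro v
      calc f v ≤ |f v| := le_abs_self _
        _ = ‖f v‖ := (Real.norm_eq_abs _).symm
        _ ≤ ‖f‖ * ‖v‖ := f.le_opNorm v
        _ ≤ 1 * ‖v‖ := mul_le_mul_of_nonneg_right hf1 (norm_nonneg _)
        _ = ‖v‖ := one_mul _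
    -- conical comparison between (x, y) and (x - z, y)
    have hA : dist (σ x y t) (σ (x - z) y t) ≤ (1 - t) * ‖z‖ := by
      have h := hcon x y (x - z) y t ⟨ht0, ht1⟩
      rw [dist_self] at h
      have hd : dist x (x - z) = ‖z‖ := by
        rw [dist_eq_norm]
        simp
      rw [hd] at h
      linarith
    -- geodesic endpoint distance for the pair (x - z, y)
    have hB : ‖σ (x - z) y t - (x - z)‖ = t * ‖w + z‖ := by
      have h := hstart (x - z) y t ht0 ht1
      rw [h]
      congr 1
      rw [hwdef]
      abel_nf
    -- assemble
    have e1 : f (σ x y t) - f (σ (x - z) y t) ≤ (1 - t) * ‖z‖ := by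
      have h := hfle (σ x y t - σ (x - z) y t)
      rw [map_sub] at h
      calc f (σ x y t) - f (σ (x - z) y t) ≤ ‖σ x y t - σ (x - z) y t‖ := h
        _ = dist (σ x y t) (σ (x - z) y t) := (dist_eq_norm _ _).symm
        _ ≤ (1 - t) * ‖z‖ := hA
    have e2 : f (σ (x - z) y t) - (f x - f z) ≤ t * ‖w + z‖ := by
      have h := hfle (σ (x - z) y t - (x - z))
      rw [map_sub, map_sub] at h
      rw [hB] at h
      linarith
    have hfu : f u = f (σ x y t) - ((1 - t) * f x + t * f y) := by
      rw [hudef, map_sub, map_add, map_smul, map_smul, smul_eq_mul, smul_eq_mul]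
    have hfw : f w = f y - f x := by rw [hwdef, map_sub]
    rw [hfu, hfw]
    nlinarith [e1, e2])
end

section
/- Let H = { (s,t) ∈ ℝ² : t ≥ 0 } be the closed upper half-plane equipped with the metric induced by the supremum norm ‖(s,t)‖_∞ = max(|s|,|t|) on ℝ². Then there exist two distinct reversible conical geodesic bicombings on H; in particular, H admits a reversible conical geodesic bicombing σ with σ((−1,0),(1,0),1/2) = (0,1), which differs from the conical bicombing given by linear segments (x,y,t) ↦ (1−t)·x + t·y. -/
/-- The closed upper half-plane in `ℝ²` with the supremum norm. (The product metric on
`ℝ × ℝ` in mathlib is exactly the supremum metric `dist p q = max |p₁ - q₁| |p₂ - q₂|`.) -/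
abbrev UpperHalfPlaneSup : Type := {p : ℝ × ℝ // 0 ≤ p.2}

/- ### Auxiliary development -/

/-- The family of bicombings: linear in the first coordinate, and in the second coordinate
the maximum of the linear interpolation with the "tent" `c * min t (1-t) * dist x y`
(and with `0`, which is redundant for `t ∈ [0,1]` but keeps the map in the half-plane). -/
noncomputable def biComb (c : ℝ) (x y : UpperHalfPlaneSup) (t : ℝ) : UpperHalfPlaneSup :=
  ⟨((1 - t) * x.1.1 + t * y.1.1,
    max (max ((1 - t) * x.1.2 + t * y.1.2) (c * min t (1 - t) * dist x y)) 0),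
   le_max_right _ _⟩

lemma uhp_dist_eq (x y : UpperHalfPlaneSup) :
    dist x y = max |x.1.1 - y.1.1| |x.1.2 - y.1.2| := by
  rw [Subtype.dist_eq, Prod.dist_eq, Real.dist_eq, Real.dist_eq]

lemma lin_nonneg {t x₂ y₂ : ℝ} (ht : t ∈ Set.Icc (0:ℝ) 1) (hx : 0 ≤ x₂) (hy : 0 ≤ y₂) :
    0 ≤ (1 - t) * x₂ + t * y₂ := by
  obtain ⟨h0, h1⟩ := ht
  have := mul_nonneg (by linarith : (0:ℝ) ≤ 1 - t) hx
  have := mul_nonneg h0 hy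
  linarith

/-- For `t ∈ [0,1]`, the outer `max … 0` in `biComb` is redundant. -/
lemma biComb_snd (c : ℝ) (x y : UpperHalfPlaneSup) {t : ℝ} (ht : t ∈ Set.Icc (0:ℝ) 1) :
    (biComb c x y t).1.2
      = max ((1 - t) * x.1.2 + t * y.1.2) (c * min t (1 - t) * dist x y) := by
  apply max_eq_left
  exact le_trans (lin_nonneg ht x.2 y.2) (le_max_left _ _)

/-- On `[0,1]`, when the distance is bounded by `x₂ + y₂`, the tent lies below the linear
interpolation. -/
lemma tent_le_lin {c t d x₂ y₂ : ℝ} (hc0 : 0 ≤ c) (hc1 : c ≤ 1)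
    (ht : t ∈ Set.Icc (0:ℝ) 1) (hx : 0 ≤ x₂) (hy : 0 ≤ y₂)
    (hd0 : 0 ≤ d) (hd : d ≤ x₂ + y₂) :
    c * min t (1 - t) * d ≤ (1 - t) * x₂ + t * y₂ := by
  obtain ⟨h0, h1⟩ := ht
  rcases le_total t (1 - t) with h | h
  · rw [min_eq_left h]
    nlinarith [mul_nonneg h0 hd0, mul_nonneg h0 hy, mul_nonneg h0 hx]
  · rw [min_eq_right h]
    nlinarith [mul_nonneg (by linarith : (0:ℝ) ≤ 1 - t) hd0,
      mul_nonneg (by linarith : (0:ℝ) ≤ 1 - t) hx,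
      mul_nonneg (by linarith : (0:ℝ) ≤ 1 - t) hy]

lemma biComb_zero (c : ℝ) (x y : UpperHalfPlaneSup) : biComb c x y 0 = x := by
  apply Subtype.ext
  apply Prod.ext <;> simp [biComb, x.2]

lemma biComb_one (c : ℝ) (x y : UpperHalfPlaneSup) : biComb c x y 1 = y := by
  apply Subtype.ext
  apply Prod.ext <;> simp [biComb, y.2]

lemma biComb_geodesic {c : ℝ} (hc0 : 0 ≤ c) (hc1 : c ≤ 1) (x y : UpperHalfPlaneSup)
    {s : ℝ} (hs : s ∈ Set.Icc (0:ℝ) 1) {t : ℝ} (ht : t ∈ Set.Icc (0:ℝ) 1) :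
    dist (biComb c x y s) (biComb c x y t) = |s - t| * dist x y := by
  set A := |x.1.1 - y.1.1| with hA
  set B := |x.1.2 - y.1.2| with hB
  have hdxy : dist x y = max A B := uhp_dist_eq x y
  have hfst : |(biComb c x y s).1.1 - (biComb c x y t).1.1| = |s - t| * A := by
    have : (biComb c x y s).1.1 - (biComb c x y t).1.1 = (s - t) * (y.1.1 - x.1.1) := by
      simp only [biComb]; ring
    rw [this, abs_mul, hA, abs_sub_comm x.1.1 y.1.1]
  -- second coordinate values on [0,1]
  have hmin : |min s (1 - s) - min t (1 - t)| ≤ |s - t| := by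
    have h := abs_min_sub_min_le_max s (1 - s) t (1 - t)
    have : |(1 - s) - (1 - t)| = |s - t| := by rw [abs_sub_comm]; ring_nf
    rw [this, max_self] at h
    exact h
  have hsnd_le : |(biComb c x y s).1.2 - (biComb c x y t).1.2| ≤ |s - t| * max A B := by
    rw [biComb_snd c x y hs, biComb_snd c x y ht]
    refine le_trans (abs_max_sub_max_le_max _ _ _ _) (max_le ?_ ?_)
    · have : ((1 - s) * x.1.2 + s * y.1.2) - ((1 - t) * x.1.2 + t * y.1.2)
          = (s - t) * (y.1.2 - x.1.2) := by ring
      rw [this, abs_mul, abs_sub_comm y.1.2 x.1.2]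
      exact mul_le_mul_of_nonneg_left (le_max_right A B) (abs_nonneg _)
    · have : c * min s (1 - s) * dist x y - c * min t (1 - t) * dist x y
          = c * (min s (1 - s) - min t (1 - t)) * dist x y := by ring
      rw [this, abs_mul, abs_mul, abs_of_nonneg hc0, abs_of_nonneg dist_nonneg, hdxy]
      calc c * |min s (1 - s) - min t (1 - t)| * max A B
          ≤ 1 * |s - t| * max A B := by
            apply mul_le_mul_of_nonneg_right _ (le_trans (abs_nonneg _) (le_max_left _ _))
            exact mul_le_mul hc1 hmin (abs_nonneg _) zero_le_one
        _ = |s - t| * max A B := by ring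
  rw [uhp_dist_eq, hfst, hdxy]
  rcases le_total B A with h | h
  · rw [max_eq_left h]
    exact max_eq_left (by rw [max_eq_left h] at hsnd_le; exact hsnd_le)
  · -- here the second coordinate is exactly the linear interpolation
    have hBle : B ≤ x.1.2 + y.1.2 := by
      rw [hB]
      rcases abs_cases (x.1.2 - y.1.2) with ⟨h1, _⟩ | ⟨h1, _⟩ <;>
        [skip; skip] <;> rw [h1] <;> [linarith [y.2]; linarith [x.2]]
    have hd' : dist x y ≤ x.1.2 + y.1.2 := by rw [hdxy, max_eq_right h]; exact hBle
    have key : ∀ u ∈ Set.Icc (0:ℝ) 1, (biComb c x y u).1.2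
        = (1 - u) * x.1.2 + u * y.1.2 := by
      intro u hu
      rw [biComb_snd c x y hu]
      exact max_eq_left (tent_le_lin hc0 hc1 hu x.2 y.2 dist_nonneg hd')
    have hsnd : |(biComb c x y s).1.2 - (biComb c x y t).1.2| = |s - t| * B := by
      rw [key s hs, key t ht]
      have : ((1 - s) * x.1.2 + s * y.1.2) - ((1 - t) * x.1.2 + t * y.1.2)
          = (s - t) * (y.1.2 - x.1.2) := by ring
      rw [this, abs_mul, hB, abs_sub_comm x.1.2 y.1.2]
    rw [hsnd, max_eq_right h]
    exact max_eq_right (mul_le_mul_of_nonneg_left h (abs_nonneg _))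

lemma biComb_conical {c : ℝ} (hc0 : 0 ≤ c) (hc1 : c ≤ 1)
    (x y x' y' : UpperHalfPlaneSup) {t : ℝ} (ht : t ∈ Set.Icc (0:ℝ) 1) :
    dist (biComb c x y t) (biComb c x' y' t)
      ≤ (1 - t) * dist x x' + t * dist y y' := by
  obtain ⟨h0, h1⟩ := ht
  have hxx1 : |x.1.1 - x'.1.1| ≤ dist x x' := by rw [uhp_dist_eq]; exact le_max_left _ _
  have hxx2 : |x.1.2 - x'.1.2| ≤ dist x x' := by rw [uhp_dist_eq]; exact le_max_right _ _
  have hyy1 : |y.1.1 - y'.1.1| ≤ dist y y' := by rw [uhp_dist_eq]; exact le_max_left _ _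
  have hyy2 : |y.1.2 - y'.1.2| ≤ dist y y' := by rw [uhp_dist_eq]; exact le_max_right _ _
  have h1t : (0:ℝ) ≤ 1 - t := by linarith
  rw [uhp_dist_eq]
  apply max_le
  · -- first coordinate
    have : (biComb c x y t).1.1 - (biComb c x' y' t).1.1
        = (1 - t) * (x.1.1 - x'.1.1) + t * (y.1.1 - y'.1.1) := by
      simp only [biComb]; ring
    rw [this]
    refine le_trans (abs_add_le _ _) ?_
    rw [abs_mul, abs_mul, abs_of_nonneg h1t, abs_of_nonneg h0]
    exact add_le_add (mul_le_mul_of_nonneg_left hxx1 h1t)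
      (mul_le_mul_of_nonneg_left hyy1 h0)
  · -- second coordinate
    rw [biComb_snd c x y ⟨h0, h1⟩, biComb_snd c x' y' ⟨h0, h1⟩]
    refine le_trans (abs_max_sub_max_le_max _ _ _ _) (max_le ?_ ?_)
    · have : ((1 - t) * x.1.2 + t * y.1.2) - ((1 - t) * x'.1.2 + t * y'.1.2)
          = (1 - t) * (x.1.2 - x'.1.2) + t * (y.1.2 - y'.1.2) := by ring
      rw [this]
      refine le_trans (abs_add_le _ _) ?_
      rw [abs_mul, abs_mul, abs_of_nonneg h1t, abs_of_nonneg h0]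
      exact add_le_add (mul_le_mul_of_nonneg_left hxx2 h1t)
        (mul_le_mul_of_nonneg_left hyy2 h0)
    · have heq : c * min t (1 - t) * dist x y - c * min t (1 - t) * dist x' y'
          = c * min t (1 - t) * (dist x y - dist x' y') := by ring
      have hdd : |dist x y - dist x' y'| ≤ dist x x' + dist y y' := by
        have := dist_dist_dist_le x y x' y'
        rwa [Real.dist_eq] at this
      have hm0 : 0 ≤ min t (1 - t) := le_min h0 h1t
      rw [heq, abs_mul, abs_mul, abs_of_nonneg hc0, abs_of_nonneg hm0]
      calc c * min t (1 - t) * |dist x y - dist x' y'|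
          ≤ 1 * min t (1 - t) * (dist x x' + dist y y') := by
            apply mul_le_mul (mul_le_mul_of_nonneg_right hc1 hm0) hdd (abs_nonneg _)
            exact mul_nonneg zero_le_one hm0
        _ = min t (1 - t) * dist x x' + min t (1 - t) * dist y y' := by ring
        _ ≤ (1 - t) * dist x x' + t * dist y y' :=
            add_le_add (mul_le_mul_of_nonneg_right (min_le_right _ _) dist_nonneg)
              (mul_le_mul_of_nonneg_right (min_le_left _ _) dist_nonneg)

lemma biComb_reversible (c : ℝ) (x y : UpperHalfPlaneSup) (t : ℝ) :
    biComb c x y t = biComb c y x (1 - t) := by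
  apply Subtype.ext
  apply Prod.ext
  · simp only [biComb]; ring
  · simp only [biComb]
    rw [dist_comm, min_comm]
    ring_nf

lemma isBicombing (c : ℝ) (hc0 : 0 ≤ c) (hc1 : c ≤ 1) :
    IsGeodesicBicombing (biComb c) ∧ IsConical (biComb c) ∧ IsReversible (biComb c) := by
  refine ⟨⟨biComb_zero c, biComb_one c, fun x y s hs t ht =>
      biComb_geodesic hc0 hc1 x y hs ht⟩,
    fun x y x' y' t ht => biComb_conical hc0 hc1 x y x' y' ht,
    fun x y t _ => biComb_reversible c x y t⟩

/-- **The upper half-plane `H ⊆ ℓ∞²` admits two distinct reversible conical geodesic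
bicombings**: besides the bicombing `τ` given by linear segments, there is a reversible
conical geodesic bicombing `σ` with `σ (-1,0) (1,0) (1/2) = (0,1)`, which therefore differs
from `τ`. -/
theorem upperHalfPlane_two_distinct_reversible_conical_bicombings :
    ∃ σ τ : UpperHalfPlaneSup → UpperHalfPlaneSup → ℝ → UpperHalfPlaneSup,
      (IsGeodesicBicombing σ ∧ IsConical σ ∧ IsReversible σ) ∧
      (IsGeodesicBicombing τ ∧ IsConical τ ∧ IsReversible τ) ∧
      (∀ x y : UpperHalfPlaneSup, ∀ t ∈ Set.Icc (0:ℝ) 1,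
        (τ x y t : ℝ × ℝ) = (1 - t) • (x : ℝ × ℝ) + t • (y : ℝ × ℝ)) ∧
      σ ⟨(-1, 0), le_refl 0⟩ ⟨(1, 0), le_refl 0⟩ (1/2) = ⟨(0, 1), zero_le_one⟩ ∧
      σ ⟨(-1, 0), le_refl 0⟩ ⟨(1, 0), le_refl 0⟩ (1/2) ≠
        τ ⟨(-1, 0), le_refl 0⟩ ⟨(1, 0), le_refl 0⟩ (1/2) := by
  refine ⟨biComb 1, biComb 0, isBicombing 1 zero_le_one le_rfl,
    isBicombing 0 le_rfl zero_le_one, ?_, ?_, ?_⟩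
  · -- τ is the linear bicombing
    intro x y t ht
    have h2 := biComb_snd 0 x y ht
    simp only [zero_mul] at h2
    have h2' : (biComb 0 x y t).1.2 = (1 - t) * x.1.2 + t * y.1.2 := by
      rw [h2]; exact max_eq_left (lin_nonneg ht x.2 y.2)
    apply Prod.ext
    · simp [biComb, Prod.smul_def, smul_eq_mul]
    · simpa [Prod.smul_def, smul_eq_mul] using h2'
  · -- the midpoint value of σ
    have hd : dist (⟨(-1, 0), le_refl 0⟩ : UpperHalfPlaneSup) ⟨(1, 0), le_refl 0⟩ = 2 := by
      rw [uhp_dist_eq]; norm_num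
    apply Subtype.ext
    apply Prod.ext
    · simp [biComb]; norm_num
    · simp only [biComb, hd]; norm_num
  · -- σ ≠ τ at the midpoint
    intro h
    have h2 := congrArg (fun z : UpperHalfPlaneSup => z.1.2) h
    have hd : dist (⟨(-1, 0), le_refl 0⟩ : UpperHalfPlaneSup) ⟨(1, 0), le_refl 0⟩ = 2 := by
      rw [uhp_dist_eq]; norm_num
    simp only [biComb, hd] at h2
    norm_num at h2
end

section
/- Let (X,d) be a metric space, let x₁, x₂, y₁, y₂ ∈ X, and let s, t ∈ [0,1]. Then W₁((1−s)·δ_{x₁} + s·δ_{x₂}, (1−t)·δ_{y₁} + t·δ_{y₂}) = min over λ ∈ [max(s+t−1, 0), min(s,t)] of (1−(s+t)+λ)·d(x₁,y₁) + (s−λ)·d(x₂,y₁) + (t−λ)·d(x₁,y₂) + λ·d(x₂,y₂). -/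
open scoped ENNReal
open MeasureTheory

/-- The first Wasserstein distance between two (probability) measures: the infimum of
`∫ d(x,y) dγ` over all couplings `γ` of the pair, i.e. probability measures on `X × X`
with first marginal `μ` and second marginal `ν`. -/
noncomputable def W1 {X : Type*} [MetricSpace X] [MeasurableSpace X]
    (μ ν : MeasureTheory.Measure X) : ℝ≥0∞ :=
  ⨅ (γ : MeasureTheory.Measure (X × X)) (_ : MeasureTheory.IsProbabilityMeasure γ ∧
      γ.map Prod.fst = μ ∧ γ.map Prod.snd = ν),
    ∫⁻ p, edist p.1 p.2 ∂γ

/-- Membership in `P₁(X)`: a Radon probability measure with finite first moment. -/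
def MemP1 {X : Type*} [MetricSpace X] [MeasurableSpace X]
    (μ : MeasureTheory.Measure X) : Prop :=
  MeasureTheory.IsProbabilityMeasure μ ∧ μ.InnerRegular ∧
    ∀ x₀ : X, (∫⁻ x, edist x x₀ ∂μ) ≠ ⊤

/-- `P₁(X)`: the space of Radon probability measures on `X` with finite first moment. -/
abbrev P1 (X : Type*) [MetricSpace X] [MeasurableSpace X] : Type _ :=
  {μ : MeasureTheory.Measure X // MemP1 μ}

/-- A contracting barycenter map: a `1`-Lipschitz map `β : P₁(X) → X` (with respect to the
first Wasserstein distance) such that `β δ_x = x` for every `x`. -/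
def IsContractingBarycenter {X : Type*} [MetricSpace X] [MeasurableSpace X]
    (β : P1 X → X) : Prop :=
  (∀ μ ν : P1 X, edist (β μ) (β ν) ≤ W1 μ.1 ν.1) ∧
    ∀ (x : X) (μ : P1 X), μ.1 = MeasureTheory.Measure.dirac x → β μ = x


section myhelpers
variable {X : Type*} [MetricSpace X] [MeasurableSpace X] [BorelSpace X]

variable {X : Type*} [MetricSpace X] [MeasurableSpace X] [BorelSpace X]

lemma my_integrable_dirac {u : X → ℝ} (hu : Continuous u) (x : X) :
    Integrable u (Measure.dirac x) := by
  refine Integrable.mono' (integrable_const ‖u x‖) hu.aestronglyMeasurable ?_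
  rw [MeasureTheory.ae_dirac_eq]
  simp

lemma my_integral_two_dirac {u : X → ℝ} (hu : Continuous u) (x₁ x₂ : X) {a b : ℝ}
    (ha : 0 ≤ a) (hb : 0 ≤ b) :
    ∫ z, u z ∂(ENNReal.ofReal a • Measure.dirac x₁ + ENNReal.ofReal b • Measure.dirac x₂)
      = a * u x₁ + b * u x₂ := by
  rw [integral_add_measure ((my_integrable_dirac hu x₁).smul_measure ENNReal.ofReal_ne_top)
    ((my_integrable_dirac hu x₂).smul_measure ENNReal.ofReal_ne_top),
    integral_smul_measure, integral_smul_measure, integral_dirac, integral_dirac,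
    ENNReal.toReal_ofReal ha, ENNReal.toReal_ofReal hb]
  simp

lemma my_lower_aux (x₁ x₂ y₁ y₂ : X) (s t : ℝ) (hs0 : 0 ≤ s) (hs1 : s ≤ 1)
    (ht0 : 0 ≤ t) (ht1 : t ≤ 1)
    (u v : X → ℝ) (hu : Continuous u) (hv : Continuous v)
    (h11 : u x₁ + v y₁ ≤ dist x₁ y₁) (h21 : u x₂ + v y₁ ≤ dist x₂ y₁)
    (h12 : u x₁ + v y₂ ≤ dist x₁ y₂) (h22 : u x₂ + v y₂ ≤ dist x₂ y₂)
    (γ : Measure (X × X)) (hγ : IsProbabilityMeasure γ)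
    (h1 : γ.map Prod.fst
      = ENNReal.ofReal (1 - s) • Measure.dirac x₁ + ENNReal.ofReal s • Measure.dirac x₂)
    (h2 : γ.map Prod.snd
      = ENNReal.ofReal (1 - t) • Measure.dirac y₁ + ENNReal.ofReal t • Measure.dirac y₂) :
    ENNReal.ofReal ((1 - s) * u x₁ + s * u x₂ + (1 - t) * v y₁ + t * v y₂) ≤
      ∫⁻ p, edist p.1 p.2 ∂γ := by
  classical
  have haemem : ∀ᵐ p ∂γ, (p.1 = x₁ ∨ p.1 = x₂) ∧ (p.2 = y₁ ∨ p.2 = y₂) := by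
    have hA : γ (Prod.fst ⁻¹' ({x₁, x₂} : Set X)ᶜ) = 0 := by
      rw [← Measure.map_apply measurable_fst (by measurability), h1]
      simp [Measure.dirac_apply]
    have hB : γ (Prod.snd ⁻¹' ({y₁, y₂} : Set X)ᶜ) = 0 := by
      rw [← Measure.map_apply measurable_snd (by measurability), h2]
      simp [Measure.dirac_apply]
    have h1' : ∀ᵐ p ∂γ, p.1 = x₁ ∨ p.1 = x₂ := by
      rw [ae_iff]; convert hA using 2; ext p; simp
    have h2' : ∀ᵐ p ∂γ, p.2 = y₁ ∨ p.2 = y₂ := by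
      rw [ae_iff]; convert hB using 2; ext p; simp
    exact h1'.and h2'
  -- a measurable a.e.-version of the distance function
  set g : X × X → ℝ := fun p => if p.1 = x₁ then (if p.2 = y₁ then dist x₁ y₁ else dist x₁ y₂)
    else (if p.2 = y₁ then dist x₂ y₁ else dist x₂ y₂) with hgdef
  have hy1 : MeasurableSet {p : X × X | p.2 = y₁} :=
    measurable_snd (measurableSet_singleton y₁)
  have hmg : Measurable g := by
    refine Measurable.ite (p := fun p : X × X => p.1 = x₁)
      (measurable_fst (measurableSet_singleton x₁)) ?_ ?_ <;>
    exact Measurable.ite (p := fun p : X × X => p.2 = y₁) hy1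
      measurable_const measurable_const
  have hfg : (fun p : X × X => dist p.1 p.2) =ᵐ[γ] g := by
    filter_upwards [haemem] with p hp
    rcases hp with ⟨hx, hy⟩
    show dist p.1 p.2 = g p
    by_cases e1 : p.1 = x₁ <;> by_cases e2 : p.2 = y₁
    · simp only [hgdef, if_pos e1, if_pos e2]; rw [e1, e2]
    · have h' := hy.resolve_left e2
      simp only [hgdef, if_pos e1, if_neg e2]; rw [e1, h']
    · have h := hx.resolve_left e1
      simp only [hgdef, if_neg e1, if_pos e2]; rw [h, e2]
    · have h := hx.resolve_left e1
      have h' := hy.resolve_left e2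
      simp only [hgdef, if_neg e1, if_neg e2]; rw [h, h']
  have hdist_sm : AEStronglyMeasurable (fun p : X × X => dist p.1 p.2) γ :=
    hmg.aestronglyMeasurable.congr hfg.symm
  set M : ℝ := max (max (dist x₁ y₁) (dist x₂ y₁)) (max (dist x₁ y₂) (dist x₂ y₂)) with hM
  have hdist_bd : ∀ᵐ p ∂γ, ‖dist p.1 p.2‖ ≤ M := by
    filter_upwards [haemem] with p hp
    rw [Real.norm_eq_abs, abs_of_nonneg dist_nonneg]
    rcases hp.1 with h | h <;> rcases hp.2 with h' | h' <;> rw [h, h']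
    · exact le_max_of_le_left (le_max_left _ _)
    · exact le_max_of_le_right (le_max_left _ _)
    · exact le_max_of_le_left (le_max_right _ _)
    · exact le_max_of_le_right (le_max_right _ _)
  have hint_dist : Integrable (fun p : X × X => dist p.1 p.2) γ :=
    Integrable.mono' (integrable_const M) hdist_sm hdist_bd
  have hint_u : Integrable (fun p : X × X => u p.1) γ := by
    refine Integrable.mono' (integrable_const (max ‖u x₁‖ ‖u x₂‖))
      (hu.measurable.comp measurable_fst).aestronglyMeasurable ?_
    filter_upwards [haemem] with p hp
    rcases hp.1 with h | h <;> rw [h]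
    exacts [le_max_left _ _, le_max_right _ _]
  have hint_v : Integrable (fun p : X × X => v p.2) γ := by
    refine Integrable.mono' (integrable_const (max ‖v y₁‖ ‖v y₂‖))
      (hv.measurable.comp measurable_snd).aestronglyMeasurable ?_
    filter_upwards [haemem] with p hp
    rcases hp.2 with h | h <;> rw [h]
    exacts [le_max_left _ _, le_max_right _ _]
  have hmono : ∫ p, (u p.1 + v p.2) ∂γ ≤ ∫ p, dist p.1 p.2 ∂γ := by
    refine integral_mono_ae (hint_u.add hint_v) hint_dist ?_
    filter_upwards [haemem] with p hp
    rcases hp.1 with h | h <;> rcases hp.2 with h' | h' <;> rw [h, h']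
    exacts [h11, h12, h21, h22]
  have hval : ∫ p, (u p.1 + v p.2) ∂γ
      = (1 - s) * u x₁ + s * u x₂ + ((1 - t) * v y₁ + t * v y₂) := by
    rw [integral_add hint_u hint_v]
    have e1 : ∫ p, u p.1 ∂γ = (1 - s) * u x₁ + s * u x₂ := by
      have h := integral_map (φ := Prod.fst (α := X) (β := X)) (f := u)
        measurable_fst.aemeasurable (μ := γ)
        (by rw [h1]; exact hu.aestronglyMeasurable)
      rw [h1] at h
      rw [← h, my_integral_two_dirac hu x₁ x₂ (by linarith) hs0]
    have e2 : ∫ p, v p.2 ∂γ = (1 - t) * v y₁ + t * v y₂ := by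
      have h := integral_map (φ := Prod.snd (α := X) (β := X)) (f := v)
        measurable_snd.aemeasurable (μ := γ)
        (by rw [h2]; exact hv.aestronglyMeasurable)
      rw [h2] at h
      rw [← h, my_integral_two_dirac hv y₁ y₂ (by linarith) ht0]
    rw [e1, e2]
  have key : ∫⁻ p, edist p.1 p.2 ∂γ = ENNReal.ofReal (∫ p, dist p.1 p.2 ∂γ) := by
    rw [ofReal_integral_eq_lintegral_ofReal hint_dist
      (Filter.Eventually.of_forall fun p => dist_nonneg)]
    simp_rw [edist_dist]
  rw [key]
  apply ENNReal.ofReal_le_ofReal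
  calc (1 - s) * u x₁ + s * u x₂ + (1 - t) * v y₁ + t * v y₂
      = ∫ p, (u p.1 + v p.2) ∂γ := by rw [hval]; ring
    _ ≤ _ := hmono


lemma my_upper_aux (x₁ x₂ y₁ y₂ : X) (s t l : ℝ) (h0 : 0 ≤ l) (hst : s + t - 1 ≤ l)
    (hls : l ≤ s) (hlt : l ≤ t) :
    W1 (ENNReal.ofReal (1 - s) • Measure.dirac x₁ + ENNReal.ofReal s • Measure.dirac x₂)
        (ENNReal.ofReal (1 - t) • Measure.dirac y₁ + ENNReal.ofReal t • Measure.dirac y₂) ≤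
      ENNReal.ofReal ((1 - (s + t) + l) * dist x₁ y₁ + (s - l) * dist x₂ y₁
        + (t - l) * dist x₁ y₂ + l * dist x₂ y₂) := by
  set γ₀ : Measure (X × X) :=
    ENNReal.ofReal (1 - (s + t) + l) • Measure.dirac (x₁, y₁)
      + ENNReal.ofReal (s - l) • Measure.dirac (x₂, y₁)
      + ENNReal.ofReal (t - l) • Measure.dirac (x₁, y₂)
      + ENNReal.ofReal l • Measure.dirac (x₂, y₂) with hγ₀
  have c1 : (0:ℝ) ≤ 1 - (s + t) + l := by linarith
  have c2 : (0:ℝ) ≤ s - l := by linarith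
  have c3 : (0:ℝ) ≤ t - l := by linarith
  have hprob : IsProbabilityMeasure γ₀ := by
    constructor
    rw [hγ₀]
    simp only [Measure.add_apply, Measure.smul_apply, Measure.dirac_apply_of_mem
      (Set.mem_univ _), smul_eq_mul, mul_one]
    rw [← ENNReal.ofReal_add c1 c2, ← ENNReal.ofReal_add (by linarith) c3,
      ← ENNReal.ofReal_add (by linarith) h0]
    rw [show 1 - (s + t) + l + (s - l) + (t - l) + l = 1 by ring, ENNReal.ofReal_one]
  have hm1 : γ₀.map Prod.fst
      = ENNReal.ofReal (1 - s) • Measure.dirac x₁ + ENNReal.ofReal s • Measure.dirac x₂ := by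
    rw [hγ₀]
    rw [Measure.map_add _ _ measurable_fst, Measure.map_add _ _ measurable_fst,
      Measure.map_add _ _ measurable_fst]
    simp only [Measure.map_smul, Measure.map_dirac' measurable_fst]
    have e1 : ENNReal.ofReal (1 - s) = ENNReal.ofReal (1 - (s + t) + l)
        + ENNReal.ofReal (t - l) := by
      rw [← ENNReal.ofReal_add c1 c3]; congr 1; ring
    have e2 : ENNReal.ofReal s = ENNReal.ofReal (s - l) + ENNReal.ofReal l := by
      rw [← ENNReal.ofReal_add c2 h0]; congr 1; ring
    rw [e1, e2, add_smul, add_smul]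
    abel
  have hm2 : γ₀.map Prod.snd
      = ENNReal.ofReal (1 - t) • Measure.dirac y₁ + ENNReal.ofReal t • Measure.dirac y₂ := by
    rw [hγ₀]
    rw [Measure.map_add _ _ measurable_snd, Measure.map_add _ _ measurable_snd,
      Measure.map_add _ _ measurable_snd]
    simp only [Measure.map_smul, Measure.map_dirac' measurable_snd]
    have e1 : ENNReal.ofReal (1 - t) = ENNReal.ofReal (1 - (s + t) + l)
        + ENNReal.ofReal (s - l) := by
      rw [← ENNReal.ofReal_add c1 c2]; congr 1; ring
    have e2 : ENNReal.ofReal t = ENNReal.ofReal (t - l) + ENNReal.ofReal l := by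
      rw [← ENNReal.ofReal_add c3 h0]; congr 1; ring
    rw [e1, e2, add_smul, add_smul]
    abel
  have hint : ∫⁻ p, edist p.1 p.2 ∂γ₀
      = ENNReal.ofReal ((1 - (s + t) + l) * dist x₁ y₁ + (s - l) * dist x₂ y₁
        + (t - l) * dist x₁ y₂ + l * dist x₂ y₂) := by
    rw [hγ₀]
    simp only [lintegral_add_measure, lintegral_smul_measure, lintegral_dirac]
    simp only [edist_dist, smul_eq_mul]
    rw [← ENNReal.ofReal_mul c1, ← ENNReal.ofReal_mul c2, ← ENNReal.ofReal_mul c3,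
      ← ENNReal.ofReal_mul h0,
      ← ENNReal.ofReal_add (mul_nonneg c1 dist_nonneg) (mul_nonneg c2 dist_nonneg),
      ← ENNReal.ofReal_add (by positivity) (mul_nonneg c3 dist_nonneg),
      ← ENNReal.ofReal_add (by positivity) (mul_nonneg h0 dist_nonneg)]
  calc W1 _ _ ≤ ∫⁻ p, edist p.1 p.2 ∂γ₀ := by
        apply iInf₂_le γ₀ ⟨hprob, hm1, hm2⟩
    _ = _ := hint
end myhelpers

/-- **Lemma 2.4.** For `s, t ∈ [0,1]`,
`W₁((1-s)δ_{x₁} + sδ_{x₂}, (1-t)δ_{y₁} + tδ_{y₂})` equals the minimum over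
`λ ∈ [max (s+t-1) 0, min s t]` of
`(1-(s+t)+λ)d(x₁,y₁) + (s-λ)d(x₂,y₁) + (t-λ)d(x₁,y₂) + λd(x₂,y₂)`. -/
theorem W1_two_point_measures
    {X : Type*} [MetricSpace X] [MeasurableSpace X] [BorelSpace X]
    (x₁ x₂ y₁ y₂ : X) (s t : ℝ) (hs : s ∈ Set.Icc (0:ℝ) 1) (ht : t ∈ Set.Icc (0:ℝ) 1) :
    ∃ l ∈ Set.Icc (max (s + t - 1) 0) (min s t),
      W1 (ENNReal.ofReal (1 - s) • Measure.dirac x₁ + ENNReal.ofReal s • Measure.dirac x₂)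
          (ENNReal.ofReal (1 - t) • Measure.dirac y₁ + ENNReal.ofReal t • Measure.dirac y₂) =
        ENNReal.ofReal ((1 - (s + t) + l) * dist x₁ y₁ + (s - l) * dist x₂ y₁
          + (t - l) * dist x₁ y₂ + l * dist x₂ y₂) ∧
      ∀ l' ∈ Set.Icc (max (s + t - 1) 0) (min s t),
        (1 - (s + t) + l) * dist x₁ y₁ + (s - l) * dist x₂ y₁
            + (t - l) * dist x₁ y₂ + l * dist x₂ y₂ ≤
          (1 - (s + t) + l') * dist x₁ y₁ + (s - l') * dist x₂ y₁
            + (t - l') * dist x₁ y₂ + l' * dist x₂ y₂ := by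
  obtain ⟨hs0, hs1⟩ := hs
  obtain ⟨ht0, ht1⟩ := ht
  set c : ℝ := dist x₁ y₁ - dist x₂ y₁ - dist x₁ y₂ + dist x₂ y₂ with hc_def
  set l₀ : ℝ := if 0 ≤ c then max (s + t - 1) 0 else min s t with hl₀
  have hIcc : l₀ ∈ Set.Icc (max (s + t - 1) 0) (min s t) := by
    have hbnds : max (s + t - 1) 0 ≤ min s t :=
      max_le (le_min (by linarith) (by linarith)) (le_min hs0 ht0)
    rw [hl₀]; split_ifs
    · exact ⟨le_refl _, hbnds⟩
    · exact ⟨hbnds, le_refl _⟩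
  have h0 : 0 ≤ l₀ := le_trans (le_max_right _ _) hIcc.1
  have hst : s + t - 1 ≤ l₀ := le_trans (le_max_left _ _) hIcc.1
  have hls : l₀ ≤ s := le_trans hIcc.2 (min_le_left _ _)
  have hlt : l₀ ≤ t := le_trans hIcc.2 (min_le_right _ _)
  refine ⟨l₀, hIcc, ?_, ?_⟩
  · -- equality
    refine le_antisymm (my_upper_aux x₁ x₂ y₁ y₂ s t l₀ h0 hst hls hlt) ?_
    rw [W1]
    refine le_iInf fun γ => le_iInf fun hγp => ?_
    obtain ⟨hγ, hmm1, hmm2⟩ := hγp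
    by_cases hc : 0 ≤ c
    · have hl0max : l₀ = max (s + t - 1) 0 := by rw [hl₀, if_pos hc]
      by_cases hst1 : s + t ≤ 1
      · -- l₀ = 0
        have hl00 : l₀ = 0 := by rw [hl0max, max_eq_right (by linarith)]
        refine le_trans ?_ (my_lower_aux x₁ x₂ y₁ y₂ s t hs0 hs1 ht0 ht1
          (fun x => dist x y₁) (fun y => dist x₁ y - dist x₁ y₁)
          (Continuous.dist continuous_id continuous_const)
          ((Continuous.dist continuous_const continuous_id).sub continuous_const)
          (by simp) (by simp) (by simp)
          (by simp [hc_def] at hc ⊢; linarith) γ hγ hmm1 hmm2)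
        exact ENNReal.ofReal_le_ofReal (le_of_eq (by rw [hl00]; ring))
      · -- l₀ = s + t - 1
        have hl00 : l₀ = s + t - 1 := by rw [hl0max, max_eq_left (by linarith)]
        refine le_trans ?_ (my_lower_aux x₁ x₂ y₁ y₂ s t hs0 hs1 ht0 ht1
          (fun x => dist x y₂ - dist x₂ y₂) (fun y => dist x₂ y)
          ((Continuous.dist continuous_id continuous_const).sub continuous_const)
          (Continuous.dist continuous_const continuous_id)
          (by simp [hc_def] at hc ⊢; linarith) (by simp)
          (by simp) (by simp) γ hγ hmm1 hmm2)
        exact ENNReal.ofReal_le_ofReal (le_of_eq (by rw [hl00]; ring))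
    · have hc' : c ≤ 0 := le_of_not_ge hc
      have hl0min : l₀ = min s t := by rw [hl₀, if_neg hc]
      by_cases hst2 : s ≤ t
      · -- l₀ = s
        have hl00 : l₀ = s := by rw [hl0min, min_eq_left hst2]
        refine le_trans ?_ (my_lower_aux x₁ x₂ y₁ y₂ s t hs0 hs1 ht0 ht1
          (fun x => dist x y₂ - dist x₁ y₂) (fun y => dist x₁ y)
          ((Continuous.dist continuous_id continuous_const).sub continuous_const)
          (Continuous.dist continuous_const continuous_id)
          (by simp) (by simp [hc_def] at hc' ⊢; linarith)
          (by simp) (by simp) γ hγ hmm1 hmm2)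
        exact ENNReal.ofReal_le_ofReal (le_of_eq (by rw [hl00]; ring))
      · -- l₀ = t
        have hl00 : l₀ = t := by rw [hl0min, min_eq_right (le_of_not_ge hst2)]
        refine le_trans ?_ (my_lower_aux x₁ x₂ y₁ y₂ s t hs0 hs1 ht0 ht1
          (fun x => dist x y₁) (fun y => dist x₂ y - dist x₂ y₁)
          (Continuous.dist continuous_id continuous_const)
          ((Continuous.dist continuous_const continuous_id).sub continuous_const)
          (by simp) (by simp)
          (by simp [hc_def] at hc' ⊢; linarith) (by simp) γ hγ hmm1 hmm2)
        exact ENNReal.ofReal_le_ofReal (le_of_eq (by rw [hl00]; ring))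
  · -- minimality
    intro l' hl'
    have h1' : max (s + t - 1) 0 ≤ l' := hl'.1
    have h2' : l' ≤ min s t := hl'.2
    have hkey : ((1 - (s + t) + l') * dist x₁ y₁ + (s - l') * dist x₂ y₁
          + (t - l') * dist x₁ y₂ + l' * dist x₂ y₂)
        - ((1 - (s + t) + l₀) * dist x₁ y₁ + (s - l₀) * dist x₂ y₁
          + (t - l₀) * dist x₁ y₂ + l₀ * dist x₂ y₂) = c * (l' - l₀) := by
      rw [hc_def]; ring
    by_cases hc : 0 ≤ c
    · have hll : l₀ ≤ l' := by rw [hl₀, if_pos hc]; exact h1'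
      nlinarith [mul_nonneg hc (sub_nonneg.2 hll)]
    · have hc' : c ≤ 0 := le_of_not_ge hc
      have hll : l' ≤ l₀ := by rw [hl₀, if_neg hc]; exact h2'
      nlinarith [mul_nonneg (neg_nonneg.2 hc') (sub_nonneg.2 hll)]
end

section
/- Let (X,d) be a metric space and let β : P₁(X) → X be a contracting barycenter map. Then the map σ_β : X × X × [0,1] → X defined by σ_β(x,y,t) = β((1−t)·δ_x + t·δ_y) is a reversible conical geodesic bicombing on X. -/
open scoped ENNReal
open MeasureTheory

section Aux

variable {X : Type*} [MetricSpace X] [MeasurableSpace X] [BorelSpace X]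

lemma memP1_mix_aux (a b : ℝ≥0∞) (hab : a + b = 1) (x y : X) :
    MemP1 (a • Measure.dirac x + b • Measure.dirac y) := by
  have ha : a ≠ ⊤ := by intro h; rw [h] at hab; simp at hab
  have hb : b ≠ ⊤ := by intro h; rw [h] at hab; simp [add_comm] at hab
  refine ⟨⟨by simp [hab]⟩, ?_, ?_⟩
  · constructor
    intro U hU r hr
    refine ⟨(U ∩ {x}) ∪ (U ∩ {y}), Set.union_subset Set.inter_subset_left Set.inter_subset_left,
      (((Set.finite_singleton x).inter_of_right U).union
        ((Set.finite_singleton y).inter_of_right U)).isCompact, ?_⟩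
    have hK : MeasurableSet ((U ∩ {x}) ∪ (U ∩ {y})) :=
      ((hU.inter (MeasurableSet.singleton x)).union (hU.inter (MeasurableSet.singleton y)))
    have h1 : (Measure.dirac x) ((U ∩ {x}) ∪ (U ∩ {y})) = (Measure.dirac x) U := by
      rw [Measure.dirac_apply' _ hK, Measure.dirac_apply' _ hU]
      by_cases hx : x ∈ U <;> simp [hx]
    have h2 : (Measure.dirac y) ((U ∩ {x}) ∪ (U ∩ {y})) = (Measure.dirac y) U := by
      rw [Measure.dirac_apply' _ hK, Measure.dirac_apply' _ hU]
      by_cases hy : y ∈ U <;> simp [hy]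
    simpa [Measure.add_apply, Measure.smul_apply, h1, h2] using hr
  · intro x₀
    rw [lintegral_add_measure, lintegral_smul_measure, lintegral_smul_measure,
      lintegral_dirac, lintegral_dirac]
    exact ENNReal.add_ne_top.2 ⟨ENNReal.mul_ne_top ha (edist_ne_top _ _),
      ENNReal.mul_ne_top hb (edist_ne_top _ _)⟩

lemma memP1_dirac_aux (x : X) : MemP1 (Measure.dirac x : Measure X) := by
  have := memP1_mix_aux 1 0 (by simp) x x
  simpa using this

lemma W1_le_coupling_aux {μ ν : Measure X} (γ : Measure (X × X)) (h : IsProbabilityMeasure γ)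
    (h1 : γ.map Prod.fst = μ) (h2 : γ.map Prod.snd = ν) :
    W1 μ ν ≤ ∫⁻ p, edist p.1 p.2 ∂γ :=
  iInf_le_of_le γ (iInf_le _ ⟨h, h1, h2⟩)

lemma W1_mix2_le_aux (a b : ℝ≥0∞) (hab : a + b = 1) (p q : X × X) :
    W1 (a • Measure.dirac p.1 + b • Measure.dirac q.1)
        (a • Measure.dirac p.2 + b • Measure.dirac q.2)
      ≤ a * edist p.1 p.2 + b * edist q.1 q.2 := by
  have h := W1_le_coupling_aux (μ := a • Measure.dirac p.1 + b • Measure.dirac q.1)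
    (ν := a • Measure.dirac p.2 + b • Measure.dirac q.2)
    (a • Measure.dirac p + b • Measure.dirac q) ⟨by simp [hab]⟩
    (by rw [Measure.map_add _ _ measurable_fst, Measure.map_smul, Measure.map_smul,
          Measure.map_dirac' measurable_fst, Measure.map_dirac' measurable_fst])
    (by rw [Measure.map_add _ _ measurable_snd, Measure.map_smul, Measure.map_smul,
          Measure.map_dirac' measurable_snd, Measure.map_dirac' measurable_snd])
  rwa [lintegral_add_measure, lintegral_smul_measure, lintegral_smul_measure,
    lintegral_dirac, lintegral_dirac] at h

lemma W1_mix3_le_aux (a b c : ℝ≥0∞) (hab : a + b + c = 1) (p q r : X × X) :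
    W1 (a • Measure.dirac p.1 + b • Measure.dirac q.1 + c • Measure.dirac r.1)
        (a • Measure.dirac p.2 + b • Measure.dirac q.2 + c • Measure.dirac r.2)
      ≤ a * edist p.1 p.2 + b * edist q.1 q.2 + c * edist r.1 r.2 := by
  have h := W1_le_coupling_aux
    (μ := a • Measure.dirac p.1 + b • Measure.dirac q.1 + c • Measure.dirac r.1)
    (ν := a • Measure.dirac p.2 + b • Measure.dirac q.2 + c • Measure.dirac r.2)
    (a • Measure.dirac p + b • Measure.dirac q + c • Measure.dirac r) ⟨by simp [hab]⟩
    (by rw [Measure.map_add _ _ measurable_fst, Measure.map_add _ _ measurable_fst,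
          Measure.map_smul, Measure.map_smul, Measure.map_smul,
          Measure.map_dirac' measurable_fst, Measure.map_dirac' measurable_fst,
          Measure.map_dirac' measurable_fst])
    (by rw [Measure.map_add _ _ measurable_snd, Measure.map_add _ _ measurable_snd,
          Measure.map_smul, Measure.map_smul, Measure.map_smul,
          Measure.map_dirac' measurable_snd, Measure.map_dirac' measurable_snd,
          Measure.map_dirac' measurable_snd])
  rwa [lintegral_add_measure, lintegral_add_measure, lintegral_smul_measure,
    lintegral_smul_measure, lintegral_smul_measure, lintegral_dirac, lintegral_dirac,
    lintegral_dirac] at h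

/-- dist from edist bound of the form `edist A B ≤ ofReal c * edist x y`. -/
lemma dist_le_of_edist_le_aux {A B x y : X} {c : ℝ} (hc : 0 ≤ c)
    (h : edist A B ≤ ENNReal.ofReal c * edist x y) : dist A B ≤ c * dist x y := by
  rw [← edist_le_ofReal (by positivity), ENNReal.ofReal_mul hc, ← edist_dist]
  exact h

end Aux

/-- **Lemma 2.6.** If `β : P₁(X) → X` is a contracting barycenter map, then the map
`σ_β (x, y, t) = β ((1-t)δ_x + tδ_y)` is a reversible conical geodesic bicombing on `X`.
(The map `σ` below is required to agree with `σ_β` for all `t ∈ [0,1]`.) -/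
theorem contracting_barycenter_gives_reversible_conical_bicombing
    {X : Type*} [MetricSpace X] [MeasurableSpace X] [BorelSpace X]
    (β : P1 X → X) (hβ : IsContractingBarycenter β)
    (σ : X → X → ℝ → X)
    (hσ : ∀ x y : X, ∀ t ∈ Set.Icc (0:ℝ) 1, ∀ μ : P1 X,
      μ.1 = ENNReal.ofReal (1 - t) • Measure.dirac x + ENNReal.ofReal t • Measure.dirac y →
        σ x y t = β μ) :
    IsGeodesicBicombing σ ∧ IsConical σ ∧ IsReversible σ := by
  obtain ⟨hLip, hdir⟩ := hβ
  have hone : ∀ t : ℝ, t ∈ Set.Icc (0:ℝ) 1 →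
      ENNReal.ofReal (1 - t) + ENNReal.ofReal t = 1 := by
    intro t ht
    rw [← ENNReal.ofReal_add (by linarith [ht.2]) ht.1]
    norm_num
  -- the canonical representative
  have hσβ : ∀ x y : X, ∀ t, ∀ ht : t ∈ Set.Icc (0:ℝ) 1,
      σ x y t = β ⟨ENNReal.ofReal (1 - t) • Measure.dirac x + ENNReal.ofReal t • Measure.dirac y,
        memP1_mix_aux _ _ (hone t ht) x y⟩ := by
    intro x y t ht
    exact hσ x y t ht _ rfl
  have hβdirac : ∀ x : X, β ⟨Measure.dirac x, memP1_dirac_aux x⟩ = x := fun x => hdir x _ rfl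
  -- endpoint values
  have h0 : ∀ x y : X, σ x y 0 = x := by
    intro x y
    have h := hσ x y 0 (by norm_num) ⟨Measure.dirac x, memP1_dirac_aux x⟩ (by simp)
    rw [h, hβdirac]
  have h1 : ∀ x y : X, σ x y 1 = y := by
    intro x y
    have h := hσ x y 1 (by norm_num) ⟨Measure.dirac y, memP1_dirac_aux y⟩ (by simp)
    rw [h, hβdirac]
  -- bound B: dist x (σ x y s) ≤ s * dist x y
  have hB : ∀ (x y : X) (s : ℝ), ∀ hs : s ∈ Set.Icc (0:ℝ) 1,
      dist x (σ x y s) ≤ s * dist x y := by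
    intro x y s hs
    apply dist_le_of_edist_le_aux hs.1
    have hW := W1_mix2_le_aux (ENNReal.ofReal (1 - s)) (ENNReal.ofReal s) (hone s hs)
      (x, x) (x, y)
    rw [← add_smul, hone s hs, one_smul] at hW
    simp only [edist_self, mul_zero, zero_add] at hW
    calc edist x (σ x y s)
        = edist (β ⟨Measure.dirac x, memP1_dirac_aux x⟩)
            (β ⟨ENNReal.ofReal (1 - s) • Measure.dirac x + ENNReal.ofReal s • Measure.dirac y,
              memP1_mix_aux _ _ (hone s hs) x y⟩) := by rw [hβdirac, ← hσβ x y s hs]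
      _ ≤ _ := le_trans (hLip _ _) hW
  -- bound C: dist (σ x y t) y ≤ (1 - t) * dist x y
  have hC : ∀ (x y : X) (t : ℝ), ∀ ht : t ∈ Set.Icc (0:ℝ) 1,
      dist (σ x y t) y ≤ (1 - t) * dist x y := by
    intro x y t ht
    apply dist_le_of_edist_le_aux (by linarith [ht.2])
    have hW := W1_mix2_le_aux (ENNReal.ofReal (1 - t)) (ENNReal.ofReal t) (hone t ht)
      (x, y) (y, y)
    rw [add_comm (ENNReal.ofReal (1 - t) • Measure.dirac (x, y).2), ← add_smul,
      add_comm (ENNReal.ofReal t), hone t ht, one_smul] at hW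
    simp only [edist_self, mul_zero, add_zero] at hW
    calc edist (σ x y t) y
        = edist (β ⟨ENNReal.ofReal (1 - t) • Measure.dirac x + ENNReal.ofReal t • Measure.dirac y,
              memP1_mix_aux _ _ (hone t ht) x y⟩)
            (β ⟨Measure.dirac y, memP1_dirac_aux y⟩) := by rw [hβdirac, ← hσβ x y t ht]
      _ ≤ _ := le_trans (hLip _ _) hW
  -- bound D: for s ≤ t, dist (σ x y s) (σ x y t) ≤ (t - s) * dist x y
  have hD : ∀ (x y : X) (s t : ℝ), ∀ hs : s ∈ Set.Icc (0:ℝ) 1, ∀ ht : t ∈ Set.Icc (0:ℝ) 1,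
      s ≤ t → dist (σ x y s) (σ x y t) ≤ (t - s) * dist x y := by
    intro x y s t hs ht hst
    apply dist_le_of_edist_le_aux (by linarith)
    have hab : ENNReal.ofReal (1 - t) + ENNReal.ofReal (t - s) + ENNReal.ofReal s = 1 := by
      rw [← ENNReal.ofReal_add (by linarith [ht.2]) (by linarith),
        ← ENNReal.ofReal_add (by linarith [ht.2]) hs.1]
      norm_num
    have hW := W1_mix3_le_aux (ENNReal.ofReal (1 - t)) (ENNReal.ofReal (t - s))
      (ENNReal.ofReal s) hab (x, x) (x, y) (y, y)
    have e1 : ENNReal.ofReal (1 - t) + ENNReal.ofReal (t - s) = ENNReal.ofReal (1 - s) := by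
      rw [← ENNReal.ofReal_add (by linarith [ht.2]) (by linarith)]
      ring_nf
    have e2 : ENNReal.ofReal (t - s) + ENNReal.ofReal s = ENNReal.ofReal t := by
      rw [← ENNReal.ofReal_add (by linarith) hs.1]
      ring_nf
    rw [show (x, x).1 = x from rfl] at hW
    simp only at hW
    rw [← add_smul, e1] at hW
    rw [add_assoc (ENNReal.ofReal (1 - t) • Measure.dirac x), ← add_smul, e2] at hW
    simp only [edist_self, mul_zero, zero_add, add_zero] at hW
    calc edist (σ x y s) (σ x y t)
        = edist (β ⟨ENNReal.ofReal (1 - s) • Measure.dirac x + ENNReal.ofReal s • Measure.dirac y,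
              memP1_mix_aux _ _ (hone s hs) x y⟩)
            (β ⟨ENNReal.ofReal (1 - t) • Measure.dirac x + ENNReal.ofReal t • Measure.dirac y,
              memP1_mix_aux _ _ (hone t ht) x y⟩) := by rw [← hσβ x y s hs, ← hσβ x y t ht]
      _ ≤ _ := le_trans (hLip _ _) hW
  -- geodesic equality for s ≤ t
  have hgeo : ∀ (x y : X) (s t : ℝ), ∀ hs : s ∈ Set.Icc (0:ℝ) 1, ∀ ht : t ∈ Set.Icc (0:ℝ) 1,
      s ≤ t → dist (σ x y s) (σ x y t) = (t - s) * dist x y := by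
    intro x y s t hs ht hst
    refine le_antisymm (hD x y s t hs ht hst) ?_
    have t1 : dist x y ≤ dist x (σ x y s) + dist (σ x y s) y := dist_triangle _ _ _
    have t2 : dist (σ x y s) y ≤ dist (σ x y s) (σ x y t) + dist (σ x y t) y :=
      dist_triangle _ _ _
    have b1 := hB x y s hs
    have b2 := hC x y t ht
    nlinarith [dist_nonneg (x := x) (y := y)]
  refine ⟨⟨h0, h1, ?_⟩, ?_, ?_⟩
  · -- geodesic
    intro x y s hs t ht
    rcases le_total s t with hst | hst
    · rw [abs_of_nonpos (by linarith), neg_sub]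
      exact hgeo x y s t hs ht hst
    · rw [abs_of_nonneg (by linarith), dist_comm]
      exact hgeo x y t s ht hs hst
  · -- conical
    intro x y x' y' t ht
    have hW := W1_mix2_le_aux (ENNReal.ofReal (1 - t)) (ENNReal.ofReal t) (hone t ht)
      (x, x') (y, y')
    have key : edist (σ x y t) (σ x' y' t)
        ≤ ENNReal.ofReal (1 - t) * edist x x' + ENNReal.ofReal t * edist y y' := by
      rw [hσβ x y t ht, hσβ x' y' t ht]
      exact le_trans (hLip _ _) hW
    have h2 : edist (σ x y t) (σ x' y' t)
        ≤ ENNReal.ofReal ((1 - t) * dist x x' + t * dist y y') := by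
      rw [ENNReal.ofReal_add (mul_nonneg (by linarith [ht.2]) dist_nonneg)
          (mul_nonneg ht.1 dist_nonneg),
        ENNReal.ofReal_mul (by linarith [ht.2]), ENNReal.ofReal_mul ht.1,
        ← edist_dist, ← edist_dist]
      exact key
    exact (edist_le_ofReal (add_nonneg (mul_nonneg (by linarith [ht.2]) dist_nonneg)
      (mul_nonneg ht.1 dist_nonneg))).1 h2
  · -- reversible
    intro x y t ht
    have h1' := hσβ x y t ht
    have h2' := hσ y x (1 - t) (by constructor <;> linarith [ht.1, ht.2])
      ⟨ENNReal.ofReal (1 - t) • Measure.dirac x + ENNReal.ofReal t • Measure.dirac y,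
        memP1_mix_aux _ _ (hone t ht) x y⟩ (by rw [sub_sub_cancel]; exact add_comm _ _)
    rw [h1', h2']
end

section
/- Let (X,d) be a metric space, let A ⊆ X, and let {σ_{xy}}_{x,y∈A} be a collection of geodesics σ_{xy} : [0,1] → X such that σ_{xy}(0) = x, σ_{xy}(1) = y, and σ_{xy}(t) = σ_{yx}(1−t) for all t ∈ [0,1] and all x, y ∈ A. If d(σ_{xy}(t), σ_{xz}(t)) ≤ t·d(y,z) for all x, y, z ∈ A and all t ∈ [0,1], then d(σ_{x₁x₂}(t), σ_{y₁y₂}(t)) ≤ W₁((1−t)·δ_{x₁} + t·δ_{x₂}, (1−t)·δ_{y₁} + t·δ_{y₂}) for all t ∈ [0,1] and all x₁, x₂, y₁, y₂ ∈ A. -/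
open scoped ENNReal
open MeasureTheory

private lemma aux {X : Type*} [MetricSpace X] [MeasurableSpace X] [BorelSpace X]
    (m n x₁ x₂ y₁ y₂ : X) {t : ℝ} (ht0 : 0 ≤ t) (ht1 : t ≤ 1)
    (φ : X → ℝ) (hc : Continuous φ) (hφ0 : ∀ z, 0 ≤ φ z)
    (hlip : ∀ a b : X, φ a ≤ φ b + dist a b)
    (hkey : dist m n + ((1-t) * φ y₁ + t * φ y₂) ≤ (1-t) * φ x₁ + t * φ x₂) :
    edist m n ≤ W1 (ENNReal.ofReal (1 - t) • Measure.dirac x₁ + ENNReal.ofReal t • Measure.dirac x₂)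
      (ENNReal.ofReal (1 - t) • Measure.dirac y₁ + ENNReal.ofReal t • Measure.dirac y₂) := by
  refine le_iInf fun γ => le_iInf fun h => ?_
  obtain ⟨hp, hfst, hsnd⟩ := h
  have hφm : Measurable fun z => ENNReal.ofReal (φ z) :=
    ENNReal.measurable_ofReal.comp hc.measurable
  have hμ : ∀ a b : X,
      ∫⁻ z, ENNReal.ofReal (φ z)
        ∂(ENNReal.ofReal (1-t) • Measure.dirac a + ENNReal.ofReal t • Measure.dirac b)
      = ENNReal.ofReal (1-t) * ENNReal.ofReal (φ a) + ENNReal.ofReal t * ENNReal.ofReal (φ b) := by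
    intro a b
    rw [lintegral_add_measure, lintegral_smul_measure, lintegral_smul_measure,
      lintegral_dirac' _ hφm, lintegral_dirac' _ hφm]
    simp only [smul_eq_mul]
  have hF : ∫⁻ p, ENNReal.ofReal (φ p.1) ∂γ
      = ENNReal.ofReal (1-t) * ENNReal.ofReal (φ x₁) + ENNReal.ofReal t * ENNReal.ofReal (φ x₂) := by
    rw [← hμ x₁ x₂, ← hfst, lintegral_map hφm measurable_fst]
  have hG : ∫⁻ p, ENNReal.ofReal (φ p.2) ∂γ
      = ENNReal.ofReal (1-t) * ENNReal.ofReal (φ y₁) + ENNReal.ofReal t * ENNReal.ofReal (φ y₂) := by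
    rw [← hμ y₁ y₂, ← hsnd, lintegral_map hφm measurable_snd]
  have hmono : ∫⁻ p, ENNReal.ofReal (φ p.1) ∂γ
      ≤ ∫⁻ p : X × X, (ENNReal.ofReal (φ p.2) + edist p.1 p.2) ∂γ := by
    refine lintegral_mono fun p => ?_
    rw [edist_dist, ← ENNReal.ofReal_add (hφ0 _) dist_nonneg]
    exact ENNReal.ofReal_le_ofReal (hlip _ _)
  have hmsnd : Measurable fun p : X × X => ENNReal.ofReal (φ p.2) := hφm.comp measurable_snd
  rw [lintegral_add_left hmsnd] at hmono
  have hkey' : edist m n +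
      (ENNReal.ofReal (1-t) * ENNReal.ofReal (φ y₁) + ENNReal.ofReal t * ENNReal.ofReal (φ y₂))
      ≤ ENNReal.ofReal (1-t) * ENNReal.ofReal (φ x₁) + ENNReal.ofReal t * ENNReal.ofReal (φ x₂) := by
    rw [edist_dist, ← ENNReal.ofReal_mul (by linarith), ← ENNReal.ofReal_mul ht0,
      ← ENNReal.ofReal_mul (by linarith), ← ENNReal.ofReal_mul ht0,
      ← ENNReal.ofReal_add (mul_nonneg (by linarith) (hφ0 _)) (mul_nonneg ht0 (hφ0 _)),
      ← ENNReal.ofReal_add (mul_nonneg (by linarith) (hφ0 _)) (mul_nonneg ht0 (hφ0 _)),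
      ← ENNReal.ofReal_add dist_nonneg
        (add_nonneg (mul_nonneg (by linarith) (hφ0 _)) (mul_nonneg ht0 (hφ0 _)))]
    exact ENNReal.ofReal_le_ofReal hkey
  have hGne : ENNReal.ofReal (1-t) * ENNReal.ofReal (φ y₁)
      + ENNReal.ofReal t * ENNReal.ofReal (φ y₂) ≠ ⊤ := by finiteness
  have hchain : (ENNReal.ofReal (1-t) * ENNReal.ofReal (φ y₁)
        + ENNReal.ofReal t * ENNReal.ofReal (φ y₂)) + edist m n
      ≤ (ENNReal.ofReal (1-t) * ENNReal.ofReal (φ y₁)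
        + ENNReal.ofReal t * ENNReal.ofReal (φ y₂)) + ∫⁻ p, edist p.1 p.2 ∂γ := by
    rw [add_comm _ (edist m n)]
    calc edist m n + _ ≤ _ := hkey'
      _ ≤ _ := hF ▸ hmono
      _ = _ := by rw [hG]
  exact (ENNReal.add_le_add_iff_left hGne).mp hchain

/-- **Lemma 3.1.** Let `A ⊆ X` and let `{σ x y}_{x,y ∈ A}` be a family of geodesics with
`σ x y 0 = x`, `σ x y 1 = y`, `σ x y t = σ y x (1-t)`, and suppose
`dist (σ x y t) (σ x z t) ≤ t * dist y z` for all `x, y, z ∈ A` and `t ∈ [0,1]`. Then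
`dist (σ x₁ x₂ t) (σ y₁ y₂ t) ≤ W₁((1-t)δ_{x₁} + tδ_{x₂}, (1-t)δ_{y₁} + tδ_{y₂})`. -/
theorem dist_le_W1_of_conical_family
    {X : Type*} [MetricSpace X] [MeasurableSpace X] [BorelSpace X]
    (A : Set X) (σ : X → X → ℝ → X)
    (h0 : ∀ x ∈ A, ∀ y ∈ A, σ x y 0 = x)
    (h1 : ∀ x ∈ A, ∀ y ∈ A, σ x y 1 = y)
    (hgeo : ∀ x ∈ A, ∀ y ∈ A, ∀ s ∈ Set.Icc (0:ℝ) 1, ∀ t ∈ Set.Icc (0:ℝ) 1,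
      dist (σ x y s) (σ x y t) = |s - t| * dist x y)
    (hrev : ∀ x ∈ A, ∀ y ∈ A, ∀ t ∈ Set.Icc (0:ℝ) 1, σ x y t = σ y x (1 - t))
    (hcon : ∀ x ∈ A, ∀ y ∈ A, ∀ z ∈ A, ∀ t ∈ Set.Icc (0:ℝ) 1,
      dist (σ x y t) (σ x z t) ≤ t * dist y z) :
    ∀ t ∈ Set.Icc (0:ℝ) 1, ∀ x₁ ∈ A, ∀ x₂ ∈ A, ∀ y₁ ∈ A, ∀ y₂ ∈ A,
      edist (σ x₁ x₂ t) (σ y₁ y₂ t) ≤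
        W1 (ENNReal.ofReal (1 - t) • Measure.dirac x₁ + ENNReal.ofReal t • Measure.dirac x₂)
          (ENNReal.ofReal (1 - t) • Measure.dirac y₁ + ENNReal.ofReal t • Measure.dirac y₂) := by
  intro t ht x₁ hx₁ x₂ hx₂ y₁ hy₁ y₂ hy₂
  obtain ⟨ht0, ht1⟩ := ht
  have ht' : (1:ℝ) - t ∈ Set.Icc (0:ℝ) 1 := ⟨by linarith, by linarith⟩
  have htm : t ∈ Set.Icc (0:ℝ) 1 := ⟨ht0, ht1⟩
  -- bound B0
  have hB0 : dist (σ x₁ x₂ t) (σ y₁ y₂ t)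
      ≤ (1-t) * dist x₁ y₁ + t * dist x₂ y₂ := by
    have h₁ := hcon x₁ hx₁ x₂ hx₂ y₂ hy₂ t htm
    have h₂ := hcon y₂ hy₂ x₁ hx₁ y₁ hy₁ (1-t) ht'
    have e₁ := hrev x₁ hx₁ y₂ hy₂ t htm
    have e₂ := hrev y₁ hy₁ y₂ hy₂ t htm
    have T := dist_triangle (σ x₁ x₂ t) (σ x₁ y₂ t) (σ y₁ y₂ t)
    rw [e₁] at h₁
    rw [e₂]
    rw [e₂, e₁] at T
    linarith
  -- bound B1 (for t ≤ 1/2)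
  have hB1 : t ≤ 1/2 → dist (σ x₁ x₂ t) (σ y₁ y₂ t)
      ≤ (1-2*t) * dist x₁ y₁ + t * (dist x₁ y₂ + dist x₂ y₁) := by
    intro ht2
    have h₁ := hcon x₁ hx₁ x₂ hx₂ y₁ hy₁ t htm
    have e₁ := hrev x₁ hx₁ y₁ hy₁ t htm
    have h₂ := hgeo y₁ hy₁ x₁ hx₁ (1-t) ht' t htm
    have h₃ := hcon y₁ hy₁ x₁ hx₁ y₂ hy₂ t htm
    have habs : |1 - t - t| = 1 - 2*t := by rw [abs_of_nonneg (by linarith)]; ring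
    rw [habs, dist_comm y₁ x₁] at h₂
    have T1 := dist_triangle (σ x₁ x₂ t) (σ x₁ y₁ t) (σ y₁ y₂ t)
    have T2 := dist_triangle (σ x₁ y₁ t) (σ y₁ x₁ t) (σ y₁ y₂ t)
    rw [e₁] at T1 T2 h₁
    linarith
  -- bound B2 (for 1/2 ≤ t)
  have hB2 : 1/2 ≤ t → dist (σ x₁ x₂ t) (σ y₁ y₂ t)
      ≤ (2*t-1) * dist x₂ y₂ + (1-t) * (dist x₁ y₂ + dist x₂ y₁) := by
    intro ht2
    have e₀ := hrev x₁ hx₁ x₂ hx₂ t htm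
    have h₁ := hcon x₂ hx₂ x₁ hx₁ y₂ hy₂ (1-t) ht'
    have e₁ := hrev x₂ hx₂ y₂ hy₂ (1-t) ht'
    have h₂ := hgeo y₂ hy₂ x₂ hx₂ t htm (1-t) ht'
    have h₃ := hcon y₂ hy₂ x₂ hx₂ y₁ hy₁ (1-t) ht'
    have e₂ := hrev y₁ hy₁ y₂ hy₂ t htm
    have habs : |t - (1-t)| = 2*t - 1 := by rw [abs_of_nonneg (by linarith)]; ring
    rw [habs, dist_comm y₂ x₂] at h₂
    have hsimp : (1:ℝ) - (1 - t) = t := by ring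
    rw [hsimp] at e₁
    have T1 := dist_triangle (σ x₁ x₂ t) (σ x₂ y₂ (1-t)) (σ y₁ y₂ t)
    have T2 := dist_triangle (σ x₂ y₂ (1-t)) (σ y₂ x₂ (1-t)) (σ y₁ y₂ t)
    rw [e₁] at T2 T1 h₁
    rw [e₂, e₀]
    rw [e₂] at T1 T2
    rw [e₀] at T1
    linarith
  -- choose the dual potential shift s
  obtain ⟨s, hs_abs, hkey⟩ : ∃ s : ℝ, |s| ≤ dist y₁ y₂ ∧
      dist (σ x₁ x₂ t) (σ y₁ y₂ t) +
        ((1-t) * (min (dist y₁ y₁) (dist y₁ y₂ + s) + |s|)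
          + t * (min (dist y₂ y₁) (dist y₂ y₂ + s) + |s|))
      ≤ (1-t) * (min (dist x₁ y₁) (dist x₁ y₂ + s) + |s|)
          + t * (min (dist x₂ y₁) (dist x₂ y₂ + s) + |s|) := by
    have Tyy := dist_comm y₁ y₂
    have T11 := dist_triangle x₁ y₂ y₁
    have T12 := dist_triangle x₁ y₁ y₂
    have T21 := dist_triangle x₂ y₂ y₁
    have T22 := dist_triangle x₂ y₁ y₂
    have hd : dist y₂ y₁ = dist y₁ y₂ := dist_comm y₂ y₁
    rcases le_total (dist x₁ y₁ + dist x₂ y₂) (dist x₁ y₂ + dist x₂ y₁) with hcase | hcase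
    · -- s = d11 - d12, use B0
      refine ⟨dist x₁ y₁ - dist x₁ y₂, abs_le.mpr ⟨by linarith, by linarith⟩, ?_⟩
      rw [dist_self, dist_self, zero_add,
        min_eq_left (by linarith : (0:ℝ) ≤ dist y₁ y₂ + (dist x₁ y₁ - dist x₁ y₂)),
        min_eq_right (by linarith : dist x₁ y₁ - dist x₁ y₂ ≤ dist y₂ y₁),
        min_eq_left (by linarith : dist x₁ y₁ ≤ dist x₁ y₂ + (dist x₁ y₁ - dist x₁ y₂)),
        min_eq_right (by linarith : dist x₂ y₂ + (dist x₁ y₁ - dist x₁ y₂) ≤ dist x₂ y₁)]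
      linarith
    · rcases le_total t (1/2) with ht2 | ht2
      · -- s = d11 - d12, use B1
        have hB1' := hB1 ht2
        refine ⟨dist x₁ y₁ - dist x₁ y₂, abs_le.mpr ⟨by linarith, by linarith⟩, ?_⟩
        rw [dist_self, dist_self, zero_add,
          min_eq_left (by linarith : (0:ℝ) ≤ dist y₁ y₂ + (dist x₁ y₁ - dist x₁ y₂)),
          min_eq_right (by linarith : dist x₁ y₁ - dist x₁ y₂ ≤ dist y₂ y₁),
          min_eq_left (by linarith : dist x₁ y₁ ≤ dist x₁ y₂ + (dist x₁ y₁ - dist x₁ y₂)),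
          min_eq_left (by linarith : dist x₂ y₁ ≤ dist x₂ y₂ + (dist x₁ y₁ - dist x₁ y₂))]
        nlinarith [abs_nonneg (dist x₁ y₁ - dist x₁ y₂)]
      · -- s = d21 - d22, use B2
        have hB2' := hB2 ht2
        refine ⟨dist x₂ y₁ - dist x₂ y₂, abs_le.mpr ⟨by linarith, by linarith⟩, ?_⟩
        rw [dist_self, dist_self, zero_add,
          min_eq_left (by linarith : (0:ℝ) ≤ dist y₁ y₂ + (dist x₂ y₁ - dist x₂ y₂)),
          min_eq_right (by linarith : dist x₂ y₁ - dist x₂ y₂ ≤ dist y₂ y₁),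
          min_eq_right (by linarith : dist x₁ y₂ + (dist x₂ y₁ - dist x₂ y₂) ≤ dist x₁ y₁),
          min_eq_left (by linarith : dist x₂ y₁ ≤ dist x₂ y₂ + (dist x₂ y₁ - dist x₂ y₂))]
        nlinarith [abs_nonneg (dist x₂ y₁ - dist x₂ y₂)]
  refine aux _ _ _ _ _ _ ht0 ht1
    (fun z => min (dist z y₁) (dist z y₂ + s) + |s|) (by fun_prop) ?_ ?_ hkey
  · intro z
    show 0 ≤ min (dist z y₁) (dist z y₂ + s) + |s|
    have h1 : -|s| ≤ dist z y₁ := by linarith [dist_nonneg (x := z) (y := y₁), abs_nonneg s]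
    have h2 : -|s| ≤ dist z y₂ + s := by linarith [dist_nonneg (x := z) (y := y₂), neg_abs_le s]
    have := le_min h1 h2
    linarith
  · intro a b
    show min (dist a y₁) (dist a y₂ + s) + |s| ≤ min (dist b y₁) (dist b y₂ + s) + |s| + dist a b
    have h1 : dist a y₁ ≤ dist b y₁ + dist a b := by
      have := dist_triangle a b y₁; linarith
    have h2 : dist a y₂ + s ≤ dist b y₂ + s + dist a b := by
      have := dist_triangle a b y₂; linarith
    have := min_le_min h1 h2
    have h3 : min (dist b y₁ + dist a b) (dist b y₂ + s + dist a b)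
        = min (dist b y₁) (dist b y₂ + s) + dist a b := min_add_add_right _ _ _
    rw [h3] at this
    linarith
end

section
/- Let V be a real Banach space and let σ be a conical geodesic bicombing on V (with the metric induced by the norm), not assumed reversible. Then σ(x,y,t) = (1−t)·x + t·y for all x, y ∈ V and t ∈ [0,1]. In particular, V admits exactly one conical geodesic bicombing, given by linear segments. -/
open Finset in
lemma lens_iterate {V : Type*} [NormedAddCommGroup V] [NormedSpace ℝ V]
    (a b : V) (t : ℝ)
    (key : ∀ w : V, ‖w‖ ≤ (1 - t) * ‖w + a‖ + t * ‖w + b‖)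
    (ht0 : 0 ≤ t) (ht1 : t ≤ 1) :
    ∀ n : ℕ, ∀ w : V,
      ‖w‖ ≤ ∑ k ∈ range (n + 1),
        (n.choose k : ℝ) * t ^ k * (1 - t) ^ (n - k) * ‖w + (n - k) • a + k • b‖ := by
  have h1t : (0:ℝ) ≤ 1 - t := by linarith
  intro n
  induction n with
  | zero => intro w; simp
  | succ n ih =>
    intro w
    set B : ℕ → ℕ → ℝ := fun n k => (n.choose k : ℝ) * t ^ k * (1 - t) ^ (n - k) with hB
    set T : ℕ → ℝ := fun k => ‖w + (n + 1 - k) • a + k • b‖ with hT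
    have hchoose0 : (n.choose (n + 1) : ℝ) = 0 := by
      simp [Nat.choose_eq_zero_of_lt (Nat.lt_succ_self n)]
    have hA : (∑ k ∈ range (n + 2), (1 - t) * B n k * T k)
        = ∑ k ∈ range (n + 1), (1 - t) * B n k * T k := by
      rw [Finset.sum_range_succ]
      simp [hB, hchoose0]
    have hP : ∀ k ∈ range (n + 1),
        (1 - t) * B n (k + 1) * T (k + 1) + t * B n k * T (k + 1)
          = B (n + 1) (k + 1) * T (k + 1) := by
      intro k hk
      have hk' : k ≤ n := Nat.lt_succ_iff.mp (mem_range.mp hk)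
      have hsc : (1 - t) * B n (k + 1) + t * B n k = B (n + 1) (k + 1) := by
        rcases eq_or_lt_of_le hk' with h | h
        · subst h
          have h1 : (k.choose (k + 1) : ℝ) = 0 := by
            simp [Nat.choose_eq_zero_of_lt (Nat.lt_succ_self k)]
          simp only [hB, h1, Nat.choose_self, Nat.sub_self, Nat.add_sub_cancel_left,
            Nat.cast_one, Nat.add_sub_cancel]
          push_cast
          ring
        · have e1 : n - k = (n - (k + 1)) + 1 := by omega
          have e2 : n + 1 - (k + 1) = n - k := by omega
          simp only [hB]
          rw [Nat.choose_succ_succ n k, e2, e1]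
          push_cast
          ring
      rw [← hsc]; ring
    have h0term : B (n + 1) 0 = (1 - t) * B n 0 := by
      simp [hB]; ring
    calc ‖w‖ ≤ (1 - t) * ‖w + a‖ + t * ‖w + b‖ := key w
      _ ≤ (1 - t) * (∑ k ∈ range (n + 1), B n k * ‖(w + a) + (n - k) • a + k • b‖)
          + t * (∑ k ∈ range (n + 1), B n k * ‖(w + b) + (n - k) • a + k • b‖) := by
          gcongr
          · exact ih (w + a)
          · exact ih (w + b)
      _ = (∑ k ∈ range (n + 1), (1 - t) * B n k * T k)
          + (∑ k ∈ range (n + 1), t * B n k * T (k + 1)) := by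
          rw [Finset.mul_sum, Finset.mul_sum]
          congr 1
          · refine Finset.sum_congr rfl fun k hk => ?_
            have hk' : k ≤ n := Nat.lt_succ_iff.mp (mem_range.mp hk)
            have hv : (w + a) + (n - k) • a + k • b = w + (n + 1 - k) • a + k • b := by
              have hnk : n + 1 - k = (n - k) + 1 := by omega
              rw [hnk, succ_nsmul]; abel
            rw [hT, hv]; ring
          · refine Finset.sum_congr rfl fun k hk => ?_
            have hv : (w + b) + (n - k) • a + k • b = w + (n + 1 - (k + 1)) • a + (k + 1) • b := by
              have hnk : n + 1 - (k + 1) = n - k := by omega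
              rw [hnk, succ_nsmul]; abel
            rw [hT, hv]; ring
      _ = (∑ k ∈ range (n + 2), (1 - t) * B n k * T k)
          + (∑ k ∈ range (n + 1), t * B n k * T (k + 1)) := by rw [hA]
      _ = ((∑ k ∈ range (n + 1), (1 - t) * B n (k + 1) * T (k + 1)) + (1 - t) * B n 0 * T 0)
          + (∑ k ∈ range (n + 1), t * B n k * T (k + 1)) := by
          rw [Finset.sum_range_succ' (fun k => (1 - t) * B n k * T k) (n + 1)]
      _ = (∑ k ∈ range (n + 1),
            ((1 - t) * B n (k + 1) * T (k + 1) + t * B n k * T (k + 1))) + (1 - t) * B n 0 * T 0 := by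
          rw [Finset.sum_add_distrib]; ring
      _ = (∑ k ∈ range (n + 1), B (n + 1) (k + 1) * T (k + 1)) + B (n + 1) 0 * T 0 := by
          rw [Finset.sum_congr rfl hP, h0term]
      _ = ∑ k ∈ range (n + 1 + 1), B (n + 1) k * T k :=
          (Finset.sum_range_succ' (fun k => B (n + 1) k * T k) (n + 1)).symm

lemma lens_pin {V : Type*} [NormedAddCommGroup V] [NormedSpace ℝ V]
    (a b : V) (t : ℝ) (ht0 : 0 ≤ t) (ht1 : t ≤ 1)
    (key : ∀ w : V, ‖w‖ ≤ (1 - t) * ‖w + a‖ + t * ‖w + b‖) :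
    (1 - t) • a + t • b = 0 := by
  have h1t : (0:ℝ) ≤ 1 - t := by linarith
  set v : V := -((1 - t) • a + t • b) with hv
  set B : ℕ → ℕ → ℝ := fun n k => (n.choose k : ℝ) * t ^ k * (1 - t) ^ (n - k) with hB
  have hBnn : ∀ n k, 0 ≤ B n k := fun n k =>
    mul_nonneg (mul_nonneg (by positivity) (by positivity)) (by positivity)
  -- identities
  have hsum1 : ∀ n : ℕ, ∑ k ∈ Finset.range (n + 1), B n k = 1 := by
    intro n
    calc ∑ k ∈ Finset.range (n + 1), B n k
        = ∑ k ∈ Finset.range (n + 1), t ^ k * (1 - t) ^ (n - k) * (n.choose k : ℝ) :=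
          Finset.sum_congr rfl fun k _ => by simp only [hB]; ring
      _ = (t + (1 - t)) ^ n := (add_pow t (1 - t) n).symm
      _ = 1 := by norm_num
  have hvar : ∀ n : ℕ, ∑ k ∈ Finset.range (n + 1), B n k * ((k : ℝ) - n * t) ^ 2
      = n * t * (1 - t) := by
    intro n
    have h := congrArg (Polynomial.eval t) (bernsteinPolynomial.variance ℝ n)
    simp only [Polynomial.eval_finset_sum, Polynomial.eval_mul, Polynomial.eval_pow,
      Polynomial.eval_sub, Polynomial.eval_natCast, Polynomial.eval_smul,
      Polynomial.eval_X, bernsteinPolynomial, Polynomial.eval_one, smul_eq_mul,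
      nsmul_eq_mul] at h
    calc ∑ k ∈ Finset.range (n + 1), B n k * ((k : ℝ) - n * t) ^ 2
        = ∑ k ∈ Finset.range (n + 1),
            ((n : ℝ) * t - (k : ℝ)) ^ 2 * ((n.choose k : ℝ) * t ^ k * (1 - t) ^ (n - k)) :=
          Finset.sum_congr rfl fun k _ => by simp only [hB]; ring
      _ = (n : ℝ) * t * (1 - t) := h
  -- main estimate
  have hmain : ∀ n : ℕ, ((n : ℝ) * ‖v‖) ^ 2 ≤ (n : ℝ) * ‖b - a‖ ^ 2 := by
    intro n
    have hterm : ∀ k ∈ Finset.range (n + 1),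
        B n k * ‖(n • v : V) + (n - k) • a + k • b‖
          = B n k * (|(k : ℝ) - n * t| * ‖b - a‖) := by
      intro k hk
      have hk' : k ≤ n := Nat.lt_succ_iff.mp (Finset.mem_range.mp hk)
      have hvec : (n • v : V) + (n - k) • a + k • b = ((k : ℝ) - n * t) • (b - a) := by
        rw [← Nat.cast_smul_eq_nsmul ℝ n v, ← Nat.cast_smul_eq_nsmul ℝ (n - k) a,
          ← Nat.cast_smul_eq_nsmul ℝ k b, Nat.cast_sub hk', hv]
        module
      rw [hvec, norm_smul, Real.norm_eq_abs]
    have h1 : (n : ℝ) * ‖v‖ ≤ (∑ k ∈ Finset.range (n + 1), B n k * |(k : ℝ) - n * t|) * ‖b - a‖ := by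
      calc (n : ℝ) * ‖v‖ = ‖(n • v : V)‖ := by
            rw [← Nat.cast_smul_eq_nsmul ℝ n v, norm_smul, Real.norm_eq_abs,
              abs_of_nonneg (by positivity : (0:ℝ) ≤ (n:ℝ))]
        _ ≤ ∑ k ∈ Finset.range (n + 1), B n k * ‖(n • v : V) + (n - k) • a + k • b‖ :=
            lens_iterate a b t key ht0 ht1 n (n • v)
        _ = ∑ k ∈ Finset.range (n + 1), B n k * (|(k : ℝ) - n * t| * ‖b - a‖) :=
            Finset.sum_congr rfl hterm
        _ = (∑ k ∈ Finset.range (n + 1), B n k * |(k : ℝ) - n * t|) * ‖b - a‖ := by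
            rw [Finset.sum_mul]
            exact Finset.sum_congr rfl fun k _ => by ring
    have hcs : (∑ k ∈ Finset.range (n + 1), B n k * |(k : ℝ) - n * t|) ^ 2
        ≤ (n : ℝ) * t * (1 - t) := by
      have h2 := Finset.sum_mul_sq_le_sq_mul_sq (Finset.range (n + 1))
        (fun k => Real.sqrt (B n k)) (fun k => Real.sqrt (B n k) * |(k : ℝ) - n * t|)
      have e1 : ∀ k ∈ Finset.range (n + 1),
          Real.sqrt (B n k) * (Real.sqrt (B n k) * |(k : ℝ) - n * t|)
            = B n k * |(k : ℝ) - n * t| := by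
        intro k _
        rw [← mul_assoc, Real.mul_self_sqrt (hBnn n k)]
      have e2 : ∀ k ∈ Finset.range (n + 1), Real.sqrt (B n k) ^ 2 = B n k := fun k _ =>
        Real.sq_sqrt (hBnn n k)
      have e3 : ∀ k ∈ Finset.range (n + 1),
          (Real.sqrt (B n k) * |(k : ℝ) - n * t|) ^ 2 = B n k * ((k : ℝ) - n * t) ^ 2 := by
        intro k _
        rw [mul_pow, Real.sq_sqrt (hBnn n k), sq_abs]
      rw [Finset.sum_congr rfl e1, Finset.sum_congr rfl e2, Finset.sum_congr rfl e3,
        hsum1 n, hvar n, one_mul] at h2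
      exact h2
    have hnn : (0:ℝ) ≤ (n : ℝ) * ‖v‖ := by positivity
    have hbb : (0:ℝ) ≤ ‖b - a‖ := norm_nonneg _
    have hsq : ((n : ℝ) * ‖v‖) ^ 2
        ≤ (∑ k ∈ Finset.range (n + 1), B n k * |(k : ℝ) - n * t|) ^ 2 * ‖b - a‖ ^ 2 := by
      rw [← mul_pow]
      exact pow_le_pow_left₀ hnn h1 2
    calc ((n : ℝ) * ‖v‖) ^ 2 ≤ _ := hsq
      _ ≤ ((n : ℝ) * t * (1 - t)) * ‖b - a‖ ^ 2 := by
          have := sq_nonneg ‖b - a‖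
          exact mul_le_mul_of_nonneg_right hcs (by positivity)
      _ ≤ (n : ℝ) * ‖b - a‖ ^ 2 := by
          have htt : t * (1 - t) ≤ 1 := by nlinarith
          have hns : (0:ℝ) ≤ (n : ℝ) * ‖b - a‖ ^ 2 := by positivity
          calc (n : ℝ) * t * (1 - t) * ‖b - a‖ ^ 2
              = ((n : ℝ) * ‖b - a‖ ^ 2) * (t * (1 - t)) := by ring
            _ ≤ ((n : ℝ) * ‖b - a‖ ^ 2) * 1 := mul_le_mul_of_nonneg_left htt hns
            _ = (n : ℝ) * ‖b - a‖ ^ 2 := mul_one _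
  -- conclude v = 0
  have hv0 : ‖v‖ = 0 := by
    by_contra hne
    have hpos : 0 < ‖v‖ ^ 2 := by positivity
    obtain ⟨n, hn⟩ := exists_nat_gt (‖b - a‖ ^ 2 / ‖v‖ ^ 2)
    have h := hmain n
    have hn0 : (0:ℝ) ≤ ‖b - a‖ ^ 2 / ‖v‖ ^ 2 := by positivity
    have hn1 : (1:ℝ) ≤ (n:ℝ) := by
      have : (0:ℝ) < (n:ℝ) := lt_of_le_of_lt hn0 hn
      exact_mod_cast Nat.one_le_iff_ne_zero.mpr (by exact_mod_cast this.ne')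
    have hC : ‖b - a‖ ^ 2 < (n : ℝ) * ‖v‖ ^ 2 := by rwa [div_lt_iff₀ hpos] at hn
    have h2 : (n : ℝ) * ‖b - a‖ ^ 2 < (n : ℝ) * ((n : ℝ) * ‖v‖ ^ 2) :=
      mul_lt_mul_of_pos_left hC (by linarith)
    nlinarith [h, h2]
  have : v = 0 := norm_eq_zero.mp hv0
  rw [hv, neg_eq_zero] at this
  exact this

/-- **Proposition 3.3.** A Banach space admits only one conical geodesic bicombing, given by
linear segments: every conical geodesic bicombing `σ` (not assumed reversible) on a real
Banach space satisfies `σ x y t = (1 - t) • x + t • y` for all `x, y` and `t ∈ [0,1]`. -/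
theorem banach_conical_bicombing_eq_linear
    {V : Type*} [NormedAddCommGroup V] [NormedSpace ℝ V] [CompleteSpace V]
    (σ : V → V → ℝ → V) (hgeo : IsGeodesicBicombing σ) (hcon : IsConical σ) :
    ∀ x y : V, ∀ t ∈ Set.Icc (0:ℝ) 1, σ x y t = (1 - t) • x + t • y := by
  obtain ⟨h0, h1, hgeod⟩ := hgeo
  intro x y t ht
  set m : V := σ x y t with hm
  have hconst : ∀ z : V, σ z z t = z := by
    intro z
    have h := hgeod z z 0 ⟨le_refl 0, zero_le_one⟩ t ht
    rw [dist_self, mul_zero] at h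
    have := dist_eq_zero.mp h
    rw [h0] at this
    exact this.symm
  have key : ∀ w : V, ‖w‖ ≤ (1 - t) * ‖w + (x - m)‖ + t * ‖w + (y - m)‖ := by
    intro w
    have h := hcon x y (m - w) (m - w) t ht
    rw [hconst (m - w)] at h
    have e0 : dist m (m - w) = ‖w‖ := by
      rw [dist_eq_norm]
      congr 1
      abel
    have e1 : dist x (m - w) = ‖w + (x - m)‖ := by
      rw [dist_eq_norm]
      congr 1
      abel
    have e2 : dist y (m - w) = ‖w + (y - m)‖ := by
      rw [dist_eq_norm]
      congr 1
      abel
    rw [e0, e1, e2] at h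
    exact h
  have hpin := lens_pin (x - m) (y - m) t ht.1 ht.2 key
  have : (1 - t) • x + t • y - m = 0 := by
    rw [← hpin]
    rw [smul_sub, smul_sub]
    have hsm : (1 - t) • m + t • m = m := by
      rw [← add_smul]
      norm_num
    calc (1 - t) • x + t • y - m = (1 - t) • x + t • y - ((1 - t) • m + t • m) := by rw [hsm]
      _ = (1 - t) • x - (1 - t) • m + (t • y - t • m) := by abel
  have := sub_eq_zero.mp this
  exact this.symm
end

section
/- Let (X,d) be an injective metric space, let x, y ∈ X, let t ∈ [0,1], and let z ∈ X be a point satisfying d(z,w) ≤ (1−t)·d(x,w) + t·d(y,w) for all w ∈ X (i.e. z belongs to the Doss expectation of the measure (1−t)·δ_x + t·δ_y). Then there exists a reversible conical geodesic bicombing σ on X such that σ(x,y,t) = z. -/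
universe u

/-- A metric space `Y` is injective if every `1`-Lipschitz map into `Y` defined on a subset
of a metric space `B` extends to a `1`-Lipschitz map on all of `B`. -/
def IsInjectiveMetricSpace (Y : Type u) [MetricSpace Y] : Prop :=
  ∀ (B : Type u) [MetricSpace B] (A : Set B) (f : A → Y),
    LipschitzWith 1 f → ∃ g : B → Y, LipschitzWith 1 g ∧ ∀ a : A, g ↑a = f a

/-- An isometric embedding `e : X → E` into an injective metric space `E` is an injective hull
if every `1`-Lipschitz map `f : E → Z` such that `f ∘ e` is an isometric embedding is itself
an isometric embedding. -/
def IsInjectiveHull {X : Type u} {E : Type u} [MetricSpace X] [MetricSpace E] (e : X → E) :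
    Prop :=
  Isometry e ∧ IsInjectiveMetricSpace E ∧
    ∀ (Z : Type u) [MetricSpace Z] (f : E → Z),
      LipschitzWith 1 f → Isometry (f ∘ e) → Isometry f



open scoped ENNReal

noncomputable section

variable {X : Type u} [MetricSpace X]

/-- Embedding of `X` into `ℓ∞(X)` with basepoint `x0`. -/
def EmbAux (x0 : X) (u : X) : lp (fun _ : X => ℝ) ∞ :=
  ⟨fun w => dist u w - dist x0 w, memℓp_infty ⟨dist u x0, by
    rintro r ⟨w, rfl⟩
    simpa [Real.norm_eq_abs] using abs_dist_sub_le u x0 w⟩⟩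

lemma EmbAux_apply (x0 u w : X) : (EmbAux x0 u : ∀ _ : X, ℝ) w = dist u w - dist x0 w := rfl

lemma embAux_isometry (x0 : X) : Isometry (EmbAux x0 : X → lp (fun _ : X => ℝ) ∞) := by
  refine Isometry.of_dist_eq fun u v => ?_
  rw [dist_eq_norm]
  refine le_antisymm (lp.norm_le_of_forall_le dist_nonneg fun w => ?_) ?_
  · have : ‖(EmbAux x0 u - EmbAux x0 v : lp (fun _ : X => ℝ) ∞) w‖
        = |dist u w - dist v w| := by
      simp only [lp.coeFn_sub, Pi.sub_apply, EmbAux_apply, Real.norm_eq_abs]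
      ring_nf
    rw [this]
    exact abs_dist_sub_le u v w
  · have h := lp.norm_apply_le_norm (by norm_num : (∞ : ℝ≥0∞) ≠ 0)
      (EmbAux x0 u - EmbAux x0 v) v
    have hv : ‖(EmbAux x0 u - EmbAux x0 v : lp (fun _ : X => ℝ) ∞) v‖ = dist u v := by
      simp [lp.coeFn_sub, Pi.sub_apply, EmbAux_apply, Real.norm_eq_abs, dist_self,
        abs_of_nonneg dist_nonneg]
    rwa [hv] at h

/-- **Lemma 3.4.** Let `X` be an injective metric space, `x, y ∈ X`, `t ∈ [0,1]`, and let
`z` be a point of the Doss expectation of `(1-t)δ_x + tδ_y`, i.e.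
`d(z,w) ≤ (1-t) d(x,w) + t d(y,w)` for all `w`. Then there is a reversible conical geodesic
bicombing `σ` on `X` with `σ x y t = z`. -/
theorem doss_point_realized_by_reversible_conical_bicombing
    {X : Type u} [MetricSpace X] (hX : IsInjectiveMetricSpace X)
    (x y : X) (t : ℝ) (ht : t ∈ Set.Icc (0:ℝ) 1) (z : X)
    (hz : ∀ w : X, dist z w ≤ (1 - t) * dist x w + t * dist y w) :
    ∃ σ : X → X → ℝ → X, IsGeodesicBicombing σ ∧ IsConical σ ∧ IsReversible σ ∧
      σ x y t = z := by
  classical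
  obtain ⟨ht0, ht1⟩ := ht
  set e : X → lp (fun _ : X => ℝ) ∞ := EmbAux x with he
  have hiso : Isometry e := embAux_isometry x
  have hde : ∀ u v : X, dist (e u) (e v) = dist u v := fun u v => hiso.dist_eq u v
  set m : lp (fun _ : X => ℝ) ∞ := (1 - t) • e x + t • e y with hm
  -- key coordinate estimate
  have hkey : ∀ w : X, (1 - t) * dist x w + t * dist y w ≤ ‖m - e w‖ := by
    intro w
    have h := lp.norm_apply_le_norm (by norm_num : (∞ : ℝ≥0∞) ≠ 0) (m - e w) w
    have hc : ‖(m - e w : lp (fun _ : X => ℝ) ∞) w‖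
        = (1 - t) * dist x w + t * dist y w := by
      have : (m - e w : lp (fun _ : X => ℝ) ∞) w
          = (1 - t) * dist x w + t * dist y w := by
        simp only [hm, he, lp.coeFn_sub, lp.coeFn_add, lp.coeFn_smul, Pi.sub_apply,
          Pi.add_apply, Pi.smul_apply, EmbAux_apply, smul_eq_mul, dist_self]
        ring
      rw [this, Real.norm_eq_abs, abs_of_nonneg]
      nlinarith [dist_nonneg (x:=x) (y:=w), dist_nonneg (x:=y) (y:=w)]
    rwa [hc] at h
  set A : Set (lp (fun _ : X => ℝ) ∞) := Set.range e ∪ {m} with hA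
  set f : A → X := fun a => if h : ∃ u, e u = (a : lp (fun _ : X => ℝ) ∞) then h.choose else z
    with hf
  have hmemA : ∀ a : A, (∃ u, e u = (a : lp (fun _ : X => ℝ) ∞)) ∨
      (a : lp (fun _ : X => ℝ) ∞) = m := by
    intro a
    have h2 : (a : lp (fun _ : X => ℝ) ∞) ∈ Set.range e ∪ {m} := a.2
    rcases h2 with ⟨u, hu⟩ | h'
    · exact Or.inl ⟨u, hu⟩
    · exact Or.inr h'
  have hf1 : ∀ (a : A) (w : X), dist (f a) w ≤ ‖(a : lp (fun _ : X => ℝ) ∞) - e w‖ := by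
    intro a w
    by_cases h : ∃ u, e u = (a : lp (fun _ : X => ℝ) ∞)
    · rw [hf]; dsimp only; rw [dif_pos h]
      have hs : e h.choose = (a : lp (fun _ : X => ℝ) ∞) := h.choose_spec
      rw [← hde h.choose w, dist_eq_norm, hs]
    · have ha : (a : lp (fun _ : X => ℝ) ∞) = m := (hmemA a).resolve_left h
      rw [hf]; dsimp only; rw [dif_neg h, ha]
      exact (hz w).trans (hkey w)
  have hfe : ∀ (a : A) (h : ∃ u, e u = (a : lp (fun _ : X => ℝ) ∞)),
      e (f a) = (a : lp (fun _ : X => ℝ) ∞) := by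
    intro a h
    rw [hf]; dsimp only; rw [dif_pos h]; exact h.choose_spec
  have hLf : LipschitzWith 1 f := by
    have key : ∀ a b : A, (∃ u, e u = (b : lp (fun _ : X => ℝ) ∞)) →
        dist (f a) (f b) ≤ dist a b := by
      intro a b hb
      have h1 := hf1 a (f b)
      rw [hfe b hb] at h1
      rwa [Subtype.dist_eq, dist_eq_norm]
    refine LipschitzWith.of_dist_le_mul fun a b => ?_
    rw [NNReal.coe_one, one_mul]
    by_cases hb : ∃ u, e u = (b : lp (fun _ : X => ℝ) ∞)
    · exact key a b hb
    · by_cases ha : ∃ u, e u = (a : lp (fun _ : X => ℝ) ∞)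
      · rw [dist_comm (f a) (f b), dist_comm a b]; exact key b a ha
      · have hae : (a : lp (fun _ : X => ℝ) ∞) = m := (hmemA a).resolve_left ha
        have hbe : (b : lp (fun _ : X => ℝ) ∞) = m := (hmemA b).resolve_left hb
        have : a = b := Subtype.ext (hae.trans hbe.symm)
        simp [this]
  obtain ⟨g, hg, hgf⟩ := hX (lp (fun _ : X => ℝ) ∞) A f hLf
  have hgd : ∀ a b, dist (g a) (g b) ≤ ‖a - b‖ := by
    intro a b
    have := hg.dist_le_mul a b
    rwa [NNReal.coe_one, one_mul, dist_eq_norm] at this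
  have hge : ∀ u : X, g (e u) = u := by
    intro u
    have hmem : e u ∈ A := Or.inl ⟨u, rfl⟩
    have h : ∃ v, e v = ((⟨e u, hmem⟩ : A) : lp (fun _ : X => ℝ) ∞) := ⟨u, rfl⟩
    have := hgf ⟨e u, hmem⟩
    rw [this, hf]; dsimp only; rw [dif_pos h]
    exact hiso.injective h.choose_spec
  have hgm : g m = z := by
    have hmem : m ∈ A := Or.inr rfl
    have := hgf ⟨m, hmem⟩
    rw [this, hf]; dsimp only
    by_cases h : ∃ u, e u = ((⟨m, hmem⟩ : A) : lp (fun _ : X => ℝ) ∞)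
    · rw [dif_pos h]
      have hs : e h.choose = m := h.choose_spec
      have h0 : ‖m - e h.choose‖ = 0 := by rw [hs, sub_self, norm_zero]
      have h1 := hkey h.choose
      have h2 := hz h.choose
      have : dist z h.choose = 0 := le_antisymm (by linarith [h1.trans_eq h0, h2]) dist_nonneg
      exact (dist_eq_zero.mp this).symm
    · rw [dif_neg h]
  set σ : X → X → ℝ → X := fun u v s => g ((1 - s) • e u + s • e v) with hσ
  have hσ0 : ∀ u v : X, σ u v 0 = u := by
    intro u v; rw [hσ]; dsimp only
    rw [show ((1:ℝ) - 0) • e u + (0:ℝ) • e v = e u by simp, hge]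
  have hσ1 : ∀ u v : X, σ u v 1 = v := by
    intro u v; rw [hσ]; dsimp only
    rw [show ((1:ℝ) - 1) • e u + (1:ℝ) • e v = e v by simp, hge]
  have hub : ∀ (u v : X) (s s' : ℝ), dist (σ u v s) (σ u v s') ≤ |s - s'| * dist u v := by
    intro u v s s'
    rw [hσ]; dsimp only
    refine (hgd _ _).trans ?_
    have : ((1 - s) • e u + s • e v) - ((1 - s') • e u + s' • e v)
        = (s' - s) • (e u - e v) := by module
    rw [this, norm_smul, Real.norm_eq_abs, ← dist_eq_norm, hde, abs_sub_comm]
  refine ⟨σ, ⟨hσ0, hσ1, ?_⟩, ?_, ?_, ?_⟩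
  · -- geodesic
    intro u v s hs s' hs'
    obtain ⟨hs0, hs1⟩ := hs; obtain ⟨hs'0, hs'1⟩ := hs'
    have main : ∀ a b : ℝ, 0 ≤ a → a ≤ b → b ≤ 1 →
        dist (σ u v a) (σ u v b) = |a - b| * dist u v := by
      intro a b ha0 hab hb1
      refine le_antisymm (hub u v a b) ?_
      have h1 : dist u (σ u v a) ≤ a * dist u v := by
        have := hub u v 0 a
        rwa [hσ0, abs_of_nonpos (by linarith), neg_sub, sub_zero] at this
      have h2 : dist (σ u v b) v ≤ (1 - b) * dist u v := by
        have := hub u v b 1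
        rwa [hσ1, abs_of_nonpos (by linarith), neg_sub] at this
      have h3 := dist_triangle4 u (σ u v a) (σ u v b) v
      have h4 : dist u v = dist u v := rfl
      rw [abs_of_nonpos (by linarith), neg_sub]
      nlinarith [dist_nonneg (x := σ u v a) (y := σ u v b)]
    rcases le_total s s' with h | h
    · exact main s s' hs0 h hs'1
    · rw [dist_comm, abs_sub_comm]; exact main s' s hs'0 h hs1
  · -- conical
    intro u v u' v' s hs
    obtain ⟨hs0, hs1⟩ := hs
    rw [hσ]; dsimp only
    refine (hgd _ _).trans ?_
    have : ((1 - s) • e u + s • e v) - ((1 - s) • e u' + s • e v')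
        = (1 - s) • (e u - e u') + s • (e v - e v') := by module
    rw [this]
    refine (norm_add_le _ _).trans ?_
    rw [norm_smul, norm_smul, Real.norm_eq_abs, Real.norm_eq_abs,
      abs_of_nonneg (by linarith), abs_of_nonneg hs0, ← dist_eq_norm, ← dist_eq_norm,
      hde, hde]
  · -- reversible
    intro u v s _
    rw [hσ]; dsimp only
    congr 1
    module
  · -- σ x y t = z
    rw [hσ]; dsimp only
    rw [← hm, hgm]
end
end

section
/- Let (X,d) be a proper metric space. Then: (1) every sequence (σ⁽ⁿ⁾)_{n≥1} of conical geodesic bicombings on X has a subsequence that converges, uniformly on every set of the form B × B × [0,1] with B ⊆ X bounded, to a conical geodesic bicombing on X; and (2) if a sequence of reversible conical geodesic bicombings on X converges pointwise to a conical geodesic bicombing σ, then σ is reversible. -/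
open Filter Metric Set Topology

private lemma clamp_mem (t : ℝ) : max 0 (min 1 t) ∈ Set.Icc (0:ℝ) 1 :=
  ⟨le_max_left _ _, max_le (by norm_num) (min_le_left _ _)⟩

private lemma clamp_eq {t : ℝ} (ht : t ∈ Set.Icc (0:ℝ) 1) : max 0 (min 1 t) = t := by
  rw [min_eq_right ht.2, max_eq_right ht.1]

private lemma clamp_lip (s t : ℝ) : |max 0 (min 1 s) - max 0 (min 1 t)| ≤ |s - t| := by
  calc |max 0 (min 1 s) - max 0 (min 1 t)|
      = |max (min 1 s) 0 - max (min 1 t) 0| := by rw [max_comm, max_comm (min 1 t)]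
    _ ≤ |min 1 s - min 1 t| := abs_max_sub_max_le_abs _ _ _
    _ ≤ max |(1:ℝ) - 1| |s - t| := abs_min_sub_min_le_max _ _ _ _
    _ ≤ |s - t| := by simp

private lemma bicombing_modulus {X : Type*} [MetricSpace X] {σ : X → X → ℝ → X}
    (hg : IsGeodesicBicombing σ) (hc : IsConical σ) (x y x' y' : X) {s t : ℝ}
    (hs : s ∈ Set.Icc (0:ℝ) 1) (ht : t ∈ Set.Icc (0:ℝ) 1) :
    dist (σ x y s) (σ x' y' t) ≤ dist x x' + dist y y' + |s - t| * dist x y := by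
  have h1 := hg.2.2 x y s hs t ht
  have h2 := hc x y x' y' t ht
  have h3 := dist_triangle (σ x y s) (σ x y t) (σ x' y' t)
  have d1 : (0:ℝ) ≤ dist x x' := dist_nonneg
  have d2 : (0:ℝ) ≤ dist y y' := dist_nonneg
  nlinarith [ht.1, ht.2]

/-- **Lemma 4.1.** On a proper metric space: (1) every sequence of conical geodesic
bicombings has a subsequence converging, uniformly on `B × B × [0,1]` for every bounded
`B ⊆ X`, to a conical geodesic bicombing; (2) a pointwise limit (on `X × X × [0,1]`) of
reversible conical geodesic bicombings that is a conical geodesic bicombing is reversible. -/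
theorem conical_bicombings_compact_and_reversible_closed
    {X : Type*} [MetricSpace X] [ProperSpace X] :
    (∀ σseq : ℕ → X → X → ℝ → X,
      (∀ n, IsGeodesicBicombing (σseq n) ∧ IsConical (σseq n)) →
      ∃ φ : ℕ → ℕ, StrictMono φ ∧ ∃ σ : X → X → ℝ → X,
        IsGeodesicBicombing σ ∧ IsConical σ ∧
        ∀ B : Set X, Bornology.IsBounded B →
          TendstoUniformlyOn (fun n p => σseq (φ n) p.1 p.2.1 p.2.2)
            (fun p : X × X × ℝ => σ p.1 p.2.1 p.2.2) Filter.atTop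
            (B ×ˢ B ×ˢ Set.Icc (0:ℝ) 1)) ∧
    (∀ (σseq : ℕ → X → X → ℝ → X) (σ : X → X → ℝ → X),
      (∀ n, IsGeodesicBicombing (σseq n) ∧ IsConical (σseq n) ∧ IsReversible (σseq n)) →
      IsGeodesicBicombing σ → IsConical σ →
      (∀ x y : X, ∀ t ∈ Set.Icc (0:ℝ) 1,
        Filter.Tendsto (fun n => σseq n x y t) Filter.atTop (nhds (σ x y t))) →
      IsReversible σ) := by
  constructor
  · -- Part (1)
    intro σseq h
    rcases isEmpty_or_nonempty X with hX | hX
    · refine ⟨id, strictMono_id, σseq 0, (h 0).1, (h 0).2, fun B _ => ?_⟩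
      have : (B ×ˢ B ×ˢ Set.Icc (0:ℝ) 1) = ∅ := Set.eq_empty_of_isEmpty _
      rw [this]
      exact tendstoUniformlyOn_empty
    obtain ⟨x₀⟩ := hX
    set c : ℝ → ℝ := fun t => max 0 (min 1 t) with hc
    set F : ℕ → X × X × ℝ → X := fun n p => σseq n p.1 p.2.1 (c p.2.2) with hF
    -- component bounds in the product metric
    have hcomp : ∀ p q : X × X × ℝ, dist p.1 q.1 ≤ dist p q ∧ dist p.2.1 q.2.1 ≤ dist p q ∧
        |p.2.2 - q.2.2| ≤ dist p q := by
      intro p q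
      have h1 : dist p q = max (dist p.1 q.1) (dist p.2 q.2) := Prod.dist_eq
      have h2 : dist p.2 q.2 = max (dist p.2.1 q.2.1) (dist p.2.2 q.2.2) := Prod.dist_eq
      have h3 : dist p.2.2 q.2.2 = |p.2.2 - q.2.2| := Real.dist_eq _ _
      refine ⟨?_, ?_, ?_⟩
      · rw [h1]; exact le_max_left _ _
      · rw [h1]; exact le_trans (by rw [h2]; exact le_max_left _ _) (le_max_right _ _)
      · rw [h1]; exact le_trans (by rw [h2, h3]; exact le_max_right _ _) (le_max_right _ _)
    -- equicontinuity modulus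
    have hFmod : ∀ (n : ℕ) (p q : X × X × ℝ),
        dist (F n p) (F n q) ≤ dist p.1 q.1 + dist p.2.1 q.2.1 + |p.2.2 - q.2.2| * dist p.1 p.2.1 := by
      intro n p q
      have hm := bicombing_modulus (h n).1 (h n).2 p.1 p.2.1 q.1 q.2.1
        (clamp_mem p.2.2) (clamp_mem q.2.2)
      exact hm.trans (add_le_add le_rfl
        (mul_le_mul_of_nonneg_right (clamp_lip _ _) dist_nonneg))
    have hFmod' : ∀ (n : ℕ) (p q : X × X × ℝ),
        dist (F n p) (F n q) ≤ (2 + dist p.1 p.2.1) * dist p q := by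
      intro n p q
      obtain ⟨h1, h2, h3⟩ := hcomp p q
      have h4 : |p.2.2 - q.2.2| * dist p.1 p.2.1 ≤ dist p q * dist p.1 p.2.1 :=
        mul_le_mul_of_nonneg_right h3 dist_nonneg
      have h5 := hFmod n p q
      nlinarith [dist_nonneg (x := p.1) (y := p.2.1), dist_nonneg (x := p) (y := q)]
    -- uniform bound
    have hFbd : ∀ (n : ℕ) (p : X × X × ℝ),
        F n p ∈ closedBall x₀ (dist p.1 x₀ + dist p.1 p.2.1) := by
      intro n p
      rw [mem_closedBall]
      have h0 : σseq n p.1 p.2.1 0 = p.1 := (h n).1.1 p.1 p.2.1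
      have heq : dist (F n p) p.1 = |c p.2.2| * dist p.1 p.2.1 := by
        conv_lhs => rw [show p.1 = σseq n p.1 p.2.1 0 from h0.symm]
        simpa using (h n).1.2.2 p.1 p.2.1 (c p.2.2) (clamp_mem _) 0 (by norm_num)
      have hle : dist (F n p) p.1 ≤ dist p.1 p.2.1 := by
        rw [heq]
        have h01 := clamp_mem p.2.2
        have habs : |c p.2.2| ≤ 1 := by
          rw [abs_of_nonneg h01.1]; exact h01.2
        nlinarith [dist_nonneg (x := p.1) (y := p.2.1), abs_nonneg (c p.2.2)]
      calc dist (F n p) x₀ ≤ dist (F n p) p.1 + dist p.1 x₀ := dist_triangle _ _ _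
        _ ≤ dist p.1 p.2.1 + dist p.1 x₀ := by linarith
        _ = dist p.1 x₀ + dist p.1 p.2.1 := by ring
    -- dense sequence
    haveI : Nonempty (X × X × ℝ) := ⟨(x₀, x₀, 0)⟩
    set e : ℕ → X × X × ℝ := TopologicalSpace.denseSeq (X × X × ℝ) with he
    have hdense : DenseRange e := TopologicalSpace.denseRange_denseSeq _
    -- subsequence converging at all points of the dense sequence
    set K : ℕ → Set X := fun k => closedBall x₀ (dist (e k).1 x₀ + dist (e k).1 (e k).2.1) with hK
    have hKc : IsCompact (Set.pi Set.univ K) :=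
      isCompact_univ_pi fun k => isCompact_closedBall _ _
    have hmem : ∀ n, (fun k => F n (e k)) ∈ Set.pi Set.univ K := fun n k _ => hFbd n (e k)
    obtain ⟨L, -, φ, hφ, hLconv⟩ := hKc.tendsto_subseq hmem
    have hL : ∀ k, Tendsto (fun n => F (φ n) (e k)) atTop (𝓝 (L k)) := by
      intro k
      have := tendsto_pi_nhds.1 hLconv k
      simpa [Function.comp] using this
    -- pointwise convergence everywhere by a Cauchy argument
    have hcauchy : ∀ p : X × X × ℝ, ∃ l, Tendsto (fun n => F (φ n) p) atTop (𝓝 l) := by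
      intro p
      refine cauchySeq_tendsto_of_complete ?_
      rw [Metric.cauchySeq_iff]
      intro ε hε
      set C : ℝ := 2 + dist p.1 p.2.1 with hC
      have hd0 : (0:ℝ) ≤ dist p.1 p.2.1 := dist_nonneg
      have hCpos : 0 < C := by rw [hC]; linarith
      have hC0 : C ≠ 0 := ne_of_gt hCpos
      obtain ⟨k, hk⟩ := Metric.denseRange_iff.1 hdense p (ε / (4 * C)) (by positivity)
      have hek := (hL k).cauchySeq
      rw [Metric.cauchySeq_iff] at hek
      obtain ⟨N, hN⟩ := hek (ε / 4) (by positivity)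
      have key : ∀ m', dist (F (φ m') p) (F (φ m') (e k)) < ε / 4 := by
        intro m'
        calc dist (F (φ m') p) (F (φ m') (e k)) ≤ C * dist p (e k) := hFmod' _ _ _
          _ < C * (ε / (4 * C)) := mul_lt_mul_of_pos_left hk hCpos
          _ = ε / 4 := by field_simp
      refine ⟨N, fun m hm n hn => ?_⟩
      have b2 := hN m hm n hn
      have b1 := key m
      have b3 : dist (F (φ n) (e k)) (F (φ n) p) < ε / 4 := by
        rw [dist_comm]; exact key n
      calc dist (F (φ m) p) (F (φ n) p)
          ≤ dist (F (φ m) p) (F (φ m) (e k)) + dist (F (φ m) (e k)) (F (φ n) (e k)) +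
            dist (F (φ n) (e k)) (F (φ n) p) := dist_triangle4 _ _ _ _
        _ < ε := by linarith
    choose G hG using hcauchy
    have hGmod' : ∀ p q, dist (G p) (G q) ≤ (2 + dist p.1 p.2.1) * dist p q := fun p q =>
      le_of_tendsto ((hG p).dist (hG q)) (Eventually.of_forall fun n => hFmod' (φ n) p q)
    set σ : X → X → ℝ → X := fun x y t => G (x, y, t) with hσ
    have hFeq : ∀ (n : ℕ) (x y : X) {t : ℝ}, t ∈ Set.Icc (0:ℝ) 1 →
        F n (x, y, t) = σseq n x y t := by
      intro n x y t ht
      simp only [hF, hc]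
      rw [clamp_eq ht]
    -- endpoint and geodesic properties
    have hend0 : ∀ x y : X, σ x y 0 = x := by
      intro x y
      have h1 : Tendsto (fun n => F (φ n) (x, y, (0:ℝ))) atTop (𝓝 x) := by
        have hx : ∀ n : ℕ, F (φ n) (x, y, (0:ℝ)) = x := fun n => by
          rw [hFeq _ _ _ (by norm_num : (0:ℝ) ∈ Set.Icc (0:ℝ) 1)]
          exact (h (φ n)).1.1 x y
        rw [show (fun n => F (φ n) (x, y, (0:ℝ))) = fun _ => x from funext hx]
        exact tendsto_const_nhds
      exact tendsto_nhds_unique (hG (x, y, 0)) h1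
    have hend1 : ∀ x y : X, σ x y 1 = y := by
      intro x y
      have h1 : Tendsto (fun n => F (φ n) (x, y, (1:ℝ))) atTop (𝓝 y) := by
        have hx : ∀ n : ℕ, F (φ n) (x, y, (1:ℝ)) = y := fun n => by
          rw [hFeq _ _ _ (by norm_num : (1:ℝ) ∈ Set.Icc (0:ℝ) 1)]
          exact (h (φ n)).1.2.1 x y
        rw [show (fun n => F (φ n) (x, y, (1:ℝ))) = fun _ => y from funext hx]
        exact tendsto_const_nhds
      exact tendsto_nhds_unique (hG (x, y, 1)) h1
    have hgeo : ∀ x y : X, ∀ s ∈ Set.Icc (0:ℝ) 1, ∀ t ∈ Set.Icc (0:ℝ) 1,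
        dist (σ x y s) (σ x y t) = |s - t| * dist x y := by
      intro x y s hs t ht
      have h1 : Tendsto (fun n => dist (F (φ n) (x, y, s)) (F (φ n) (x, y, t))) atTop
          (𝓝 (dist (G (x, y, s)) (G (x, y, t)))) := (hG _).dist (hG _)
      have h2 : (fun n => dist (F (φ n) (x, y, s)) (F (φ n) (x, y, t))) =
          fun _ => |s - t| * dist x y := by
        funext n
        rw [hFeq _ _ _ hs, hFeq _ _ _ ht]
        exact (h (φ n)).1.2.2 x y s hs t ht
      rw [h2] at h1
      exact tendsto_nhds_unique h1 tendsto_const_nhds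
    have hcon : IsConical σ := by
      intro x y x' y' t ht
      refine le_of_tendsto ((hG (x, y, t)).dist (hG (x', y', t)))
        (Eventually.of_forall fun n => ?_)
      rw [hFeq _ _ _ ht, hFeq _ _ _ ht]
      exact (h (φ n)).2 x y x' y' t ht
    refine ⟨φ, hφ, σ, ⟨hend0, hend1, hgeo⟩, hcon, ?_⟩
    -- uniform convergence on bounded sets
    intro B hB
    obtain ⟨r, hr0, hrB⟩ := hB.subset_closedBall_lt 0 x₀
    set S : Set (X × X × ℝ) := closedBall x₀ r ×ˢ closedBall x₀ r ×ˢ Set.Icc (0:ℝ) 1 with hS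
    have hScomp : IsCompact S :=
      (isCompact_closedBall _ _).prod ((isCompact_closedBall _ _).prod isCompact_Icc)
    have hsub : B ×ˢ B ×ˢ Set.Icc (0:ℝ) 1 ⊆ S :=
      Set.prod_mono hrB (Set.prod_mono hrB Set.Subset.rfl)
    rw [Metric.tendstoUniformlyOn_iff]
    intro ε hε
    set C : ℝ := 2 + 2 * r with hCdef
    have hCpos : 0 < C := by rw [hCdef]; linarith
    set δ : ℝ := ε / (4 * C) with hδdef
    have hδpos : 0 < δ := by rw [hδdef]; positivity
    have hCδ : C * δ = ε / 4 := by
      rw [hδdef]; field_simp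
    have hconst : ∀ p ∈ S, 2 + dist p.1 p.2.1 ≤ C := by
      intro p hp
      have hp1 : dist p.1 x₀ ≤ r := hp.1
      have hp2 : dist p.2.1 x₀ ≤ r := hp.2.1
      have : dist p.1 p.2.1 ≤ dist p.1 x₀ + dist x₀ p.2.1 := dist_triangle _ _ _
      rw [dist_comm x₀ p.2.1] at this
      rw [hCdef]; linarith
    have hFmodS : ∀ p ∈ S, ∀ (q : X × X × ℝ) (n : ℕ), dist (F n p) (F n q) ≤ C * dist p q := by
      intro p hp q n
      exact (hFmod' n p q).trans (mul_le_mul_of_nonneg_right (hconst p hp) dist_nonneg)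
    have hGmodS : ∀ p ∈ S, ∀ q : X × X × ℝ, dist (G p) (G q) ≤ C * dist p q := by
      intro p hp q
      exact (hGmod' p q).trans (mul_le_mul_of_nonneg_right (hconst p hp) dist_nonneg)
    have hcover : S ⊆ ⋃ k, ball (e k) δ := by
      intro p _
      obtain ⟨k, hk⟩ := Metric.denseRange_iff.1 hdense p δ hδpos
      exact Set.mem_iUnion.2 ⟨k, mem_ball.2 hk⟩
    obtain ⟨T, hT⟩ := hScomp.elim_finite_subcover (fun k => ball (e k) δ)
      (fun k => isOpen_ball) hcover
    have hev : ∀ᶠ n in atTop, ∀ k ∈ T, dist (F (φ n) (e k)) (G (e k)) < ε / 4 :=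
      (eventually_all_finset T).2 fun k _ => Metric.tendsto_nhds.1 (hG (e k)) (ε / 4)
        (by positivity)
    filter_upwards [hev] with n hn
    intro p hp
    have hpS : p ∈ S := hsub hp
    have hpcov := hT hpS
    rw [Set.mem_iUnion₂] at hpcov
    obtain ⟨k, hkT, hpk⟩ := hpcov
    rw [mem_ball] at hpk
    have hpt : p.2.2 ∈ Set.Icc (0:ℝ) 1 := hp.2.2
    have e1 : F (φ n) p = σseq (φ n) p.1 p.2.1 p.2.2 := hFeq (φ n) p.1 p.2.1 hpt
    have b1 : dist (G p) (G (e k)) < ε / 4 := by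
      calc dist (G p) (G (e k)) ≤ C * dist p (e k) := hGmodS p hpS (e k)
        _ < C * δ := mul_lt_mul_of_pos_left hpk hCpos
        _ = ε / 4 := hCδ
    have b2 : dist (G (e k)) (F (φ n) (e k)) < ε / 4 := by
      rw [dist_comm]; exact hn k hkT
    have b3 : dist (F (φ n) (e k)) (F (φ n) p) < ε / 4 := by
      rw [dist_comm]
      calc dist (F (φ n) p) (F (φ n) (e k)) ≤ C * dist p (e k) := hFmodS p hpS (e k) (φ n)
        _ < C * δ := mul_lt_mul_of_pos_left hpk hCpos
        _ = ε / 4 := hCδ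
    calc dist (σ p.1 p.2.1 p.2.2) (σseq (φ n) p.1 p.2.1 p.2.2)
        = dist (G p) (F (φ n) p) := by rw [e1]
      _ ≤ dist (G p) (G (e k)) + dist (G (e k)) (F (φ n) (e k)) +
          dist (F (φ n) (e k)) (F (φ n) p) := dist_triangle4 _ _ _ _
      _ < ε := by linarith
  · -- Part (2)
    intro σseq σ h _ _ hconv x y t ht
    have ht' : 1 - t ∈ Set.Icc (0:ℝ) 1 := ⟨by linarith [ht.2], by linarith [ht.1]⟩
    have h1 := hconv x y t ht
    have h2 := hconv y x (1 - t) ht'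
    have heq : (fun n => σseq n x y t) = fun n => σseq n y x (1 - t) :=
      funext fun n => (h n).2.2 x y t ht
    rw [heq] at h1
    exact tendsto_nhds_unique h1 h2
end

section
/- Let (X,d) be a metric space admitting a conical geodesic bicombing φ, and fix a base point o ∈ X. For conical geodesic bicombings σ, τ on X and t ∈ [0,1], define Φ(σ,τ,t) : X × X × [0,1] → X by Φ(σ,τ,t)(x,y,s) = φ(σ(x,y,s), τ(x,y,s), t). Then: (1) for each pair of conical geodesic bicombings σ, τ on X and each t ∈ [0,1], the map Φ(σ,τ,t) is a conical geodesic bicombing on X; (2) Φ is a conical geodesic bicombing on the set CBI(X) of all conical geodesic bicombings on X equipped with the metric D_o(σ,τ) = sup{ 3^{−k} · d(σ(x,y,t), τ(x,y,t)) : k ≥ 0, x,y ∈ B_{2^k}(o), t ∈ [0,1] }; and (3) if σ and τ are reversible, then Φ(σ,τ,t) is reversible for every t ∈ [0,1]. -/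
/-- The metric `D_o` on the set of conical bicombings:
`D_o σ τ = sup { 3⁻ᵏ * dist (σ x y t) (τ x y t) : k ≥ 0, x, y ∈ B_{2^k}(o), t ∈ [0,1] }`. -/
noncomputable def Do {X : Type*} [MetricSpace X] (o : X) (σ τ : X → X → ℝ → X) : ℝ :=
  sSup {r : ℝ | ∃ (k : ℕ) (x y : X) (t : ℝ), x ∈ Metric.closedBall o (2 ^ k) ∧
    y ∈ Metric.closedBall o (2 ^ k) ∧ t ∈ Set.Icc (0:ℝ) 1 ∧
    r = ((3:ℝ) ^ k)⁻¹ * dist (σ x y t) (τ x y t)}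

/-- The interpolation map `Φ(σ, τ, t)(x, y, s) = φ(σ x y s, τ x y s, t)`. -/
def Phi {X : Type*} [MetricSpace X] (φ : X → X → ℝ → X)
    (σ τ : X → X → ℝ → X) (t : ℝ) : X → X → ℝ → X :=
  fun x y s => φ (σ x y s) (τ x y s) t

section Aux

variable {X : Type*} [MetricSpace X]

/-- The set whose supremum defines `Do`. -/
def DoSet (o : X) (σ τ : X → X → ℝ → X) : Set ℝ :=
  {r : ℝ | ∃ (k : ℕ) (x y : X) (t : ℝ), x ∈ Metric.closedBall o (2 ^ k) ∧
    y ∈ Metric.closedBall o (2 ^ k) ∧ t ∈ Set.Icc (0:ℝ) 1 ∧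
    r = ((3:ℝ) ^ k)⁻¹ * dist (σ x y t) (τ x y t)}

lemma Do_eq (o : X) (σ τ : X → X → ℝ → X) : Do o σ τ = sSup (DoSet o σ τ) := rfl

lemma phi_self {φ : X → X → ℝ → X} (hφ : IsGeodesicBicombing φ) (x : X) {t : ℝ}
    (ht : t ∈ Set.Icc (0:ℝ) 1) : φ x x t = x := by
  have h := hφ.2.2 x x t ht 0 ⟨le_rfl, zero_le_one⟩
  rw [dist_self, mul_zero, dist_eq_zero, hφ.1] at h
  exact h

lemma zero_mem_DoSet (o : X) {σ τ : X → X → ℝ → X} (hσ : IsGeodesicBicombing σ)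
    (hτ : IsGeodesicBicombing τ) : (0:ℝ) ∈ DoSet o σ τ :=
  ⟨0, o, o, 0, by simp, by simp, ⟨le_rfl, zero_le_one⟩, by
    rw [hσ.1, hτ.1, dist_self, mul_zero]⟩

lemma DoSet_bddAbove (o : X) {σ τ : X → X → ℝ → X} (hσ : IsGeodesicBicombing σ)
    (hτ : IsGeodesicBicombing τ) : BddAbove (DoSet o σ τ) := by
  refine ⟨4, ?_⟩
  rintro r ⟨k, x, y, t, hx, hy, ht, rfl⟩
  rw [Metric.mem_closedBall] at hx hy
  have hy' : dist o y ≤ 2 ^ k := by rw [dist_comm]; exact hy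
  have hxy : dist x y ≤ 2 * 2 ^ k := by
    have := dist_triangle x o y
    linarith
  have hσx : dist (σ x y t) x ≤ dist x y := by
    have h := hσ.2.2 x y t ht 0 ⟨le_rfl, zero_le_one⟩
    rw [hσ.1, sub_zero, abs_of_nonneg ht.1] at h
    rw [h]
    exact mul_le_of_le_one_left dist_nonneg ht.2
  have hτx : dist x (τ x y t) ≤ dist x y := by
    have h := hτ.2.2 x y t ht 0 ⟨le_rfl, zero_le_one⟩
    rw [hτ.1, sub_zero, abs_of_nonneg ht.1] at h
    rw [dist_comm, h]
    exact mul_le_of_le_one_left dist_nonneg ht.2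
  have hd : dist (σ x y t) (τ x y t) ≤ 2 * dist x y :=
    calc dist (σ x y t) (τ x y t) ≤ dist (σ x y t) x + dist x (τ x y t) := dist_triangle _ _ _
      _ ≤ dist x y + dist x y := add_le_add hσx hτx
      _ = 2 * dist x y := by ring
  have h23 : (2:ℝ) ^ k ≤ 3 ^ k := pow_le_pow_left₀ (by norm_num) (by norm_num) k
  have h3 : (0:ℝ) < 3 ^ k := by positivity
  calc ((3:ℝ) ^ k)⁻¹ * dist (σ x y t) (τ x y t)
      ≤ ((3:ℝ) ^ k)⁻¹ * (4 * 3 ^ k) := by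
        apply mul_le_mul_of_nonneg_left _ (by positivity)
        calc dist (σ x y t) (τ x y t) ≤ 2 * dist x y := hd
          _ ≤ 2 * (2 * 2 ^ k) := by linarith
          _ ≤ 4 * 3 ^ k := by linarith
    _ = 4 := by field_simp

lemma elem_le_Do (o : X) {σ τ : X → X → ℝ → X} (hσ : IsGeodesicBicombing σ)
    (hτ : IsGeodesicBicombing τ) {k : ℕ} {x y : X} {t : ℝ}
    (hx : x ∈ Metric.closedBall o (2 ^ k)) (hy : y ∈ Metric.closedBall o (2 ^ k))
    (ht : t ∈ Set.Icc (0:ℝ) 1) :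
    ((3:ℝ) ^ k)⁻¹ * dist (σ x y t) (τ x y t) ≤ Do o σ τ :=
  le_csSup (DoSet_bddAbove o hσ hτ) ⟨k, x, y, t, hx, hy, ht, rfl⟩

lemma geodesic_of_short {f : ℝ → X} {x y : X} (hf0 : f 0 = x) (hf1 : f 1 = y)
    (hshort : ∀ a ∈ Set.Icc (0:ℝ) 1, ∀ b ∈ Set.Icc (0:ℝ) 1,
      dist (f a) (f b) ≤ |a - b| * dist x y) :
    ∀ a ∈ Set.Icc (0:ℝ) 1, ∀ b ∈ Set.Icc (0:ℝ) 1,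
      dist (f a) (f b) = |a - b| * dist x y := by
  have key : ∀ a ∈ Set.Icc (0:ℝ) 1, ∀ b ∈ Set.Icc (0:ℝ) 1, a ≤ b →
      dist (f a) (f b) = (b - a) * dist x y := by
    intro a ha b hb hab
    refine le_antisymm ?_ ?_
    · have h := hshort a ha b hb
      rwa [abs_sub_comm, abs_of_nonneg (by linarith : (0:ℝ) ≤ b - a)] at h
    · have h1 : dist x (f a) ≤ a * dist x y := by
        have h := hshort 0 ⟨le_rfl, zero_le_one⟩ a ha
        rwa [hf0, zero_sub, abs_neg, abs_of_nonneg ha.1] at h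
      have h2 : dist (f b) y ≤ (1 - b) * dist x y := by
        have h := hshort b hb 1 ⟨zero_le_one, le_rfl⟩
        rwa [hf1, show |b - (1:ℝ)| = 1 - b by
          rw [abs_of_nonpos (by linarith [hb.2])]; ring] at h
      have htri : dist x y ≤ dist x (f a) + dist (f a) (f b) + dist (f b) y :=
        dist_triangle4 x (f a) (f b) y
      have hr : (b - a) * dist x y =
          dist x y - a * dist x y - (1 - b) * dist x y := by ring
      linarith
  intro a ha b hb
  rcases le_total a b with hab | hab
  · rw [abs_sub_comm, abs_of_nonneg (by linarith : (0:ℝ) ≤ b - a)]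
    exact key a ha b hb hab
  · rw [abs_of_nonneg (by linarith : (0:ℝ) ≤ a - b), dist_comm]
    rw [show a - b = a - b from rfl]
    rw [key b hb a ha hab]

lemma Phi_geo {φ σ τ : X → X → ℝ → X} (hφg : IsGeodesicBicombing φ) (hφc : IsConical φ)
    (hσ : IsGeodesicBicombing σ) (hτ : IsGeodesicBicombing τ) {t : ℝ}
    (ht : t ∈ Set.Icc (0:ℝ) 1) : IsGeodesicBicombing (Phi φ σ τ t) := by
  have h0 : ∀ x y : X, Phi φ σ τ t x y 0 = x := fun x y => by
    simp only [Phi]; rw [hσ.1, hτ.1]; exact phi_self hφg x ht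
  have h1 : ∀ x y : X, Phi φ σ τ t x y 1 = y := fun x y => by
    simp only [Phi]; rw [hσ.2.1, hτ.2.1]; exact phi_self hφg y ht
  refine ⟨h0, h1, fun x y => ?_⟩
  refine geodesic_of_short (f := Phi φ σ τ t x y) (h0 x y) (h1 x y) ?_
  intro a ha b hb
  calc dist (Phi φ σ τ t x y a) (Phi φ σ τ t x y b)
      ≤ (1 - t) * dist (σ x y a) (σ x y b) + t * dist (τ x y a) (τ x y b) :=
        hφc _ _ _ _ t ht
    _ = |a - b| * dist x y := by
        rw [hσ.2.2 x y a ha b hb, hτ.2.2 x y a ha b hb]; ring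

lemma sSup_mul_image {S : Set ℝ} (h0 : (0:ℝ) ∈ S) (hbdd : BddAbove S) {c : ℝ}
    (hc : 0 ≤ c) : sSup ((fun r => c * r) '' S) = c * sSup S := by
  rcases eq_or_lt_of_le hc with rfl | hc'
  · have himg : (fun r => (0:ℝ) * r) '' S = {0} := by
      ext z
      constructor
      · rintro ⟨r, hr, rfl⟩; simp
      · rintro hz
        simp only [Set.mem_singleton_iff] at hz
        exact ⟨0, h0, by simp [hz]⟩
    rw [himg, csSup_singleton, zero_mul]
  · refine IsLUB.csSup_eq ⟨?_, ?_⟩ ⟨c * 0, ⟨0, h0, rfl⟩⟩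
    · rintro z ⟨r, hr, rfl⟩
      exact mul_le_mul_of_nonneg_left (le_csSup hbdd hr) hc
    · intro b hb
      have hS : ∀ r ∈ S, r ≤ b / c := by
        intro r hr
        rw [le_div_iff₀ hc', mul_comm]
        exact hb ⟨r, hr, rfl⟩
      have hle : sSup S ≤ b / c := csSup_le ⟨0, h0⟩ hS
      calc c * sSup S ≤ c * (b / c) := mul_le_mul_of_nonneg_left hle hc
        _ = b := by field_simp

end Aux

/-- **Lemma 4.2.** If `φ` is a conical geodesic bicombing on `X` and `o ∈ X`, then:
(1) `Φ(σ, τ, t)` is a conical geodesic bicombing for all conical geodesic bicombings `σ, τ`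
and `t ∈ [0,1]`; (2) `Φ` is a conical geodesic bicombing on the set of conical geodesic
bicombings equipped with the metric `D_o`; (3) if `σ` and `τ` are reversible, so is
`Φ(σ, τ, t)` for every `t ∈ [0,1]`. -/
theorem Phi_is_conical_bicombing_on_CBI
    {X : Type*} [MetricSpace X] (o : X) (φ : X → X → ℝ → X)
    (hφgeo : IsGeodesicBicombing φ) (hφcon : IsConical φ) :
    -- (1) each `Φ(σ, τ, t)` is a conical geodesic bicombing
    (∀ σ τ : X → X → ℝ → X, IsGeodesicBicombing σ → IsConical σ →
      IsGeodesicBicombing τ → IsConical τ → ∀ t ∈ Set.Icc (0:ℝ) 1,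
        IsGeodesicBicombing (Phi φ σ τ t) ∧ IsConical (Phi φ σ τ t)) ∧
    -- (2) `Φ` is a geodesic bicombing for `D_o` ...
    (∀ σ τ : X → X → ℝ → X, IsGeodesicBicombing σ → IsConical σ →
      IsGeodesicBicombing τ → IsConical τ →
        Phi φ σ τ 0 = σ ∧ Phi φ σ τ 1 = τ ∧
        ∀ s ∈ Set.Icc (0:ℝ) 1, ∀ t ∈ Set.Icc (0:ℝ) 1,
          Do o (Phi φ σ τ s) (Phi φ σ τ t) = |s - t| * Do o σ τ) ∧
    -- ... which is conical for `D_o`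
    (∀ σ τ σ' τ' : X → X → ℝ → X, IsGeodesicBicombing σ → IsConical σ →
      IsGeodesicBicombing τ → IsConical τ → IsGeodesicBicombing σ' → IsConical σ' →
      IsGeodesicBicombing τ' → IsConical τ' → ∀ t ∈ Set.Icc (0:ℝ) 1,
        Do o (Phi φ σ τ t) (Phi φ σ' τ' t) ≤ (1 - t) * Do o σ σ' + t * Do o τ τ') ∧
    -- (3) reversibility is preserved
    (∀ σ τ : X → X → ℝ → X, IsGeodesicBicombing σ → IsConical σ → IsReversible σ →
      IsGeodesicBicombing τ → IsConical τ → IsReversible τ →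
        ∀ t ∈ Set.Icc (0:ℝ) 1, IsReversible (Phi φ σ τ t)) := by
  refine ⟨?_, ?_, ?_, ?_⟩
  · -- (1)
    intro σ τ hσg hσc hτg hτc t ht
    refine ⟨Phi_geo hφgeo hφcon hσg hτg ht, ?_⟩
    intro x y x' y' s hs
    have hA := hσc x y x' y' s hs
    have hB := hτc x y x' y' s hs
    calc dist (Phi φ σ τ t x y s) (Phi φ σ τ t x' y' s)
        ≤ (1 - t) * dist (σ x y s) (σ x' y' s) + t * dist (τ x y s) (τ x' y' s) :=
          hφcon _ _ _ _ t ht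
      _ ≤ (1 - t) * ((1 - s) * dist x x' + s * dist y y') +
            t * ((1 - s) * dist x x' + s * dist y y') :=
          add_le_add (mul_le_mul_of_nonneg_left hA (by linarith [ht.2]))
            (mul_le_mul_of_nonneg_left hB ht.1)
      _ = (1 - s) * dist x x' + s * dist y y' := by ring
  · -- (2) geodesic part
    intro σ τ hσg hσc hτg hτc
    refine ⟨?_, ?_, ?_⟩
    · funext x y s; exact hφgeo.1 _ _
    · funext x y s; exact hφgeo.2.1 _ _
    · intro s hs t ht
      have hset : DoSet o (Phi φ σ τ s) (Phi φ σ τ t) =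
          (fun r => |s - t| * r) '' DoSet o σ τ := by
        ext r
        constructor
        · rintro ⟨k, x, y, u, hx, hy, hu, rfl⟩
          refine ⟨((3:ℝ) ^ k)⁻¹ * dist (σ x y u) (τ x y u),
            ⟨k, x, y, u, hx, hy, hu, rfl⟩, ?_⟩
          simp only [Phi]
          rw [hφgeo.2.2 _ _ s hs t ht]; ring
        · rintro ⟨r', ⟨k, x, y, u, hx, hy, hu, rfl⟩, rfl⟩
          refine ⟨k, x, y, u, hx, hy, hu, ?_⟩
          simp only [Phi]
          rw [hφgeo.2.2 _ _ s hs t ht]; ring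
      rw [Do_eq, hset, sSup_mul_image (zero_mem_DoSet o hσg hτg)
        (DoSet_bddAbove o hσg hτg) (abs_nonneg _), Do_eq]
  · -- (2) conical part
    intro σ τ σ' τ' hσg hσc hτg hτc hσ'g hσ'c hτ'g hτ'c t ht
    have hΦ1 : IsGeodesicBicombing (Phi φ σ τ t) := Phi_geo hφgeo hφcon hσg hτg ht
    have hΦ2 : IsGeodesicBicombing (Phi φ σ' τ' t) := Phi_geo hφgeo hφcon hσ'g hτ'g ht
    rw [Do_eq]
    refine csSup_le ⟨0, zero_mem_DoSet o hΦ1 hΦ2⟩ ?_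
    rintro r ⟨k, x, y, u, hx, hy, hu, rfl⟩
    have h1 := elem_le_Do o hσg hσ'g hx hy hu
    have h2 := elem_le_Do o hτg hτ'g hx hy hu
    have hinv : (0:ℝ) ≤ ((3:ℝ) ^ k)⁻¹ := by positivity
    calc ((3:ℝ) ^ k)⁻¹ * dist (Phi φ σ τ t x y u) (Phi φ σ' τ' t x y u)
        ≤ ((3:ℝ) ^ k)⁻¹ *
            ((1 - t) * dist (σ x y u) (σ' x y u) + t * dist (τ x y u) (τ' x y u)) :=
          mul_le_mul_of_nonneg_left (hφcon _ _ _ _ t ht) hinv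
      _ = (1 - t) * (((3:ℝ) ^ k)⁻¹ * dist (σ x y u) (σ' x y u)) +
            t * (((3:ℝ) ^ k)⁻¹ * dist (τ x y u) (τ' x y u)) := by ring
      _ ≤ (1 - t) * Do o σ σ' + t * Do o τ τ' :=
          add_le_add (mul_le_mul_of_nonneg_left h1 (by linarith [ht.2]))
            (mul_le_mul_of_nonneg_left h2 ht.1)
  · -- (3)
    intro σ τ hσg hσc hσr hτg hτc hτr t ht x y s hs
    simp only [Phi]
    rw [hσr x y s hs, hτr x y s hs]
end

section
/- Let (X,d) be a nonempty compact metric space admitting a conical geodesic bicombing, and let S be a nonempty set of 1-Lipschitz self-maps of X that is closed under composition and left reversible, i.e. for all a, b ∈ S there exist c, d ∈ S with a ∘ c = b ∘ d. Then there exists a point x⋆ ∈ X such that f(x⋆) = x⋆ for all f ∈ S. -/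
section Aux

open Set

variable {X : Type*} [MetricSpace X]

/-- Iterated combination with equal weights: `bicMix σ x l` is the "average" of the
points `x :: l` formed by iterated application of the bicombing `σ`. -/
noncomputable def bicMix (σ : X → X → ℝ → X) : X → List X → X
  | x, [] => x
  | x, y :: l => σ x (bicMix σ y l) (((l.length : ℝ) + 1) / ((l.length : ℝ) + 2))

lemma frac_mem_Icc (n : ℕ) : ((n : ℝ) + 1) / ((n : ℝ) + 2) ∈ Set.Icc (0:ℝ) 1 := by
  have h2 : (0:ℝ) < (n : ℝ) + 2 := by positivity
  constructor
  · positivity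
  · rw [div_le_one h2]; linarith

lemma sigma_self {σ : X → X → ℝ → X} (hb : IsGeodesicBicombing σ) {t : ℝ}
    (ht : t ∈ Set.Icc (0:ℝ) 1) (z : X) : σ z z t = z := by
  have h := hb.2.2 z z t ht 0 ⟨le_refl 0, zero_le_one⟩
  rw [hb.1, dist_self, mul_zero] at h
  exact dist_eq_zero.mp h

lemma dist_sigma_le {σ : X → X → ℝ → X} (hb : IsGeodesicBicombing σ) (hc : IsConical σ)
    {t : ℝ} (ht : t ∈ Set.Icc (0:ℝ) 1) (x y w : X) :
    dist (σ x y t) w ≤ (1 - t) * dist x w + t * dist y w := by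
  have h := hc x y w w t ht
  rwa [sigma_self hb ht w] at h

lemma bicMix_mem {σ : X → X → ℝ → X} {K : Set X}
    (hK : ∀ x ∈ K, ∀ y ∈ K, ∀ t ∈ Set.Icc (0:ℝ) 1, σ x y t ∈ K) :
    ∀ (l : List X) (x : X), x ∈ K → (∀ y ∈ l, y ∈ K) → bicMix σ x l ∈ K := by
  intro l
  induction l with
  | nil => intro x hx _; exact hx
  | cons y l ih =>
    intro x hx hl
    refine hK x hx _ ?_ _ (frac_mem_Icc l.length)
    exact ih y (hl y List.mem_cons_self) fun z hz => hl z (List.mem_cons_of_mem _ hz)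

lemma bicMix_dist {σ : X → X → ℝ → X} (hb : IsGeodesicBicombing σ) (hc : IsConical σ) :
    ∀ (l : List X) (x w : X),
      dist (bicMix σ x l) w ≤
        (dist x w + (l.map (fun z => dist z w)).sum) / ((l.length : ℝ) + 1) := by
  intro l
  induction l with
  | nil => intro x w; simp [bicMix]
  | cons y l ih =>
    intro x w
    have hn1 : (0:ℝ) < (l.length : ℝ) + 1 := by positivity
    have hn2 : (0:ℝ) < (l.length : ℝ) + 2 := by positivity
    have ht := frac_mem_Icc l.length
    have h1 : dist (bicMix σ x (y :: l)) w ≤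
        (1 - ((l.length : ℝ) + 1) / ((l.length : ℝ) + 2)) * dist x w +
          (((l.length : ℝ) + 1) / ((l.length : ℝ) + 2)) * dist (bicMix σ y l) w :=
      dist_sigma_le hb hc ht x (bicMix σ y l) w
    have h2 : dist (bicMix σ y l) w ≤
        (dist y w + (l.map (fun z => dist z w)).sum) / ((l.length : ℝ) + 1) := ih y w
    have ht0 : (0:ℝ) ≤ ((l.length : ℝ) + 1) / ((l.length : ℝ) + 2) := ht.1
    have h3 : dist (bicMix σ x (y :: l)) w ≤
        (1 - ((l.length : ℝ) + 1) / ((l.length : ℝ) + 2)) * dist x w +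
          (((l.length : ℝ) + 1) / ((l.length : ℝ) + 2)) *
            ((dist y w + (l.map (fun z => dist z w)).sum) / ((l.length : ℝ) + 1)) := by
      refine h1.trans (add_le_add_right ?_ _)
      exact mul_le_mul_of_nonneg_left h2 ht0
    refine h3.trans (le_of_eq ?_)
    have e1 : ((y :: l).map (fun z => dist z w)).sum
        = dist y w + (l.map (fun z => dist z w)).sum := by simp
    have e2 : (((y :: l).length : ℝ) + 1) = (l.length : ℝ) + 2 := by
      push_cast [List.length_cons]; ring
    rw [e1, e2]
    field_simp
    ring

lemma list_sum_bound (L : List ℝ) (ρ : ℝ) (hub : ∀ x ∈ L, x ≤ ρ)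
    {x₀ : ℝ} (hmem : x₀ ∈ L) (hsmall : x₀ ≤ ρ / 2) :
    L.sum ≤ (L.length : ℝ) * ρ - ρ / 2 := by
  obtain ⟨s, t, rfl⟩ := List.append_of_mem hmem
  have hs : s.sum ≤ (s.length : ℝ) * ρ := by
    have := List.sum_le_card_nsmul s ρ (fun x hx => hub x (by simp [hx]))
    simpa [nsmul_eq_mul] using this
  have hts : t.sum ≤ (t.length : ℝ) * ρ := by
    have := List.sum_le_card_nsmul t ρ (fun x hx => hub x (by simp [hx]))
    simpa [nsmul_eq_mul] using this
  have hlen : ((s ++ x₀ :: t).length : ℝ) = (s.length : ℝ) + (t.length : ℝ) + 1 := by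
    push_cast [List.length_append, List.length_cons]; ring
  have hsum : (s ++ x₀ :: t).sum = s.sum + (x₀ + t.sum) := by
    simp [List.sum_append]
  rw [hsum, hlen]
  linarith

end Aux

/-- **Proposition 4.3 (Kijima).** Let `X` be a nonempty compact metric space with a conical
geodesic bicombing and let `S` be a nonempty left reversible semigroup of `1`-Lipschitz
self-maps of `X`. Then `S` has a common fixed point. -/
theorem common_fixed_point_of_left_reversible_semigroup
    {X : Type*} [MetricSpace X] [CompactSpace X] [Nonempty X]
    (hbic : ∃ σ : X → X → ℝ → X, IsGeodesicBicombing σ ∧ IsConical σ)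
    (S : Set (X → X)) (hne : S.Nonempty)
    (hlip : ∀ f ∈ S, LipschitzWith 1 f)
    (hcomp : ∀ f ∈ S, ∀ g ∈ S, f ∘ g ∈ S)
    (hrev : ∀ a ∈ S, ∀ b ∈ S, ∃ c ∈ S, ∃ d ∈ S, a ∘ c = b ∘ d) :
    ∃ x : X, ∀ f ∈ S, f x = x := by
  classical
  obtain ⟨σ, hb, hc⟩ := hbic
  obtain ⟨f₀, hf₀⟩ := hne
  have hcont : ∀ f ∈ S, Continuous f := fun f hf => (hlip f hf).continuous
  -- the family of nonempty closed convex invariant sets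
  set 𝒦 : Set (Set X) := {K | K.Nonempty ∧ IsClosed K ∧
      (∀ x ∈ K, ∀ y ∈ K, ∀ t ∈ Set.Icc (0:ℝ) 1, σ x y t ∈ K) ∧
      ∀ f ∈ S, ∀ x ∈ K, f x ∈ K} with h𝒦def
  have huniv : (Set.univ : Set X) ∈ 𝒦 :=
    ⟨Set.univ_nonempty, isClosed_univ, fun _ _ _ _ _ _ => trivial, fun _ _ _ _ => trivial⟩
  have hchains : ∀ c ⊆ 𝒦, IsChain (fun x1 x2 => x1 ⊆ x2) c → c.Nonempty →
      ∃ lb ∈ 𝒦, ∀ s ∈ c, lb ⊆ s := by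
    intro c hc𝒦 hchain hcne
    refine ⟨⋂₀ c, ⟨?_, ?_, ?_, ?_⟩, fun s hs => Set.sInter_subset_of_mem hs⟩
    · -- nonempty
      haveI : Nonempty c := hcne.to_subtype
      have hdir : Directed (fun x1 x2 => x1 ⊇ x2) (fun s : c => (s : Set X)) := by
        intro i j
        rcases hchain.total i.2 j.2 with h | h
        · exact ⟨i, subset_rfl, h⟩
        · exact ⟨j, h, subset_rfl⟩
      have hnei : (⋂ s : c, (s : Set X)).Nonempty :=
        IsCompact.nonempty_iInter_of_directed_nonempty_isCompact_isClosed
          (fun s : c => (s : Set X)) hdir (fun s => (hc𝒦 s.2).1)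
          (fun s => (hc𝒦 s.2).2.1.isCompact) (fun s => (hc𝒦 s.2).2.1)
      rwa [Set.sInter_eq_iInter]
    · exact isClosed_sInter fun s hs => (hc𝒦 hs).2.1
    · intro x hx y hy t ht
      exact Set.mem_sInter.mpr fun s hs =>
        (hc𝒦 hs).2.2.1 x (Set.mem_sInter.mp hx s hs) y (Set.mem_sInter.mp hy s hs) t ht
    · intro f hf x hx
      exact Set.mem_sInter.mpr fun s hs =>
        (hc𝒦 hs).2.2.2 f hf x (Set.mem_sInter.mp hx s hs)
  obtain ⟨K, -, hKmin⟩ := zorn_superset_nonempty 𝒦 hchains Set.univ huniv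
  obtain ⟨⟨x₀, hx₀K⟩, hKcl, hKconv, hKinv⟩ := hKmin.prop
  have hKcomp : IsCompact K := hKcl.isCompact
  -- the limit set Ω
  haveI : Nonempty S := ⟨⟨f₀, hf₀⟩⟩
  set T : S → Set X := fun a => (a : X → X) '' K with hTdef
  have hTne : ∀ a, (T a).Nonempty := fun a => ⟨(a : X → X) x₀, ⟨x₀, hx₀K, rfl⟩⟩
  have hTcomp : ∀ a, IsCompact (T a) := fun a => hKcomp.image (hcont _ a.2)
  have hTcl : ∀ a, IsClosed (T a) := fun a => (hTcomp a).isClosed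
  have hTsubK : ∀ a, T a ⊆ K := by
    rintro a x ⟨u, hu, rfl⟩
    exact hKinv _ a.2 u hu
  have hTdir : Directed (fun x1 x2 => x1 ⊇ x2) T := by
    intro a b
    obtain ⟨cm, hcS, dm, hdS, hcd⟩ := hrev (a : X → X) a.2 (b : X → X) b.2
    refine ⟨⟨(a : X → X) ∘ cm, hcomp _ a.2 _ hcS⟩, ?_, ?_⟩
    · rintro x ⟨u, hu, rfl⟩
      exact ⟨cm u, hKinv cm hcS u hu, rfl⟩
    · rintro x ⟨u, hu, rfl⟩
      refine ⟨dm u, hKinv dm hdS u hu, ?_⟩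
      exact (congrFun hcd u).symm
  set Ω : Set X := ⋂ a : S, T a with hΩdef
  have hΩne : Ω.Nonempty :=
    IsCompact.nonempty_iInter_of_directed_nonempty_isCompact_isClosed T hTdir hTne hTcomp hTcl
  have hΩcl : IsClosed Ω := isClosed_iInter fun a => hTcl a
  have hΩcomp : IsCompact Ω := hΩcl.isCompact
  have hΩsubK : Ω ⊆ K := (Set.iInter_subset T ⟨f₀, hf₀⟩).trans (hTsubK _)
  -- forward invariance
  have hΩfwd : ∀ f ∈ S, ∀ z ∈ Ω, f z ∈ Ω := by
    intro f hf z hz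
    refine Set.mem_iInter.mpr fun b => ?_
    obtain ⟨cm, hcS, dm, hdS, hcd⟩ := hrev f hf (b : X → X) b.2
    obtain ⟨u, huK, hu⟩ := Set.mem_iInter.mp hz ⟨cm, hcS⟩
    refine ⟨dm u, hKinv dm hdS u huK, ?_⟩
    have h1 : (f ∘ cm) u = ((b : X → X) ∘ dm) u := congrFun hcd u
    have hu' : cm u = z := hu
    calc (b : X → X) (dm u) = f (cm u) := h1.symm
      _ = f z := by rw [hu']
  -- surjectivity on Ω
  have hΩsurj : ∀ f ∈ S, ∀ z ∈ Ω, ∃ w ∈ Ω, f w = z := by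
    intro f hf z hz
    set E : S → Set X := fun a => T a ∩ {w | f w = z} with hEdef
    have hEcl : ∀ a, IsClosed (E a) :=
      fun a => (hTcl a).inter (isClosed_eq (hcont f hf) continuous_const)
    have hEcomp : ∀ a, IsCompact (E a) := fun a => (hEcl a).isCompact
    have hEne : ∀ a, (E a).Nonempty := by
      intro a
      have hz' : z ∈ T ⟨f ∘ (a : X → X), hcomp f hf _ a.2⟩ := Set.mem_iInter.mp hz _
      obtain ⟨u, huK, hu⟩ := hz'
      exact ⟨(a : X → X) u, ⟨u, huK, rfl⟩, hu⟩
    have hEdir : Directed (fun x1 x2 => x1 ⊇ x2) E := by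
      intro a b
      obtain ⟨e, hea, heb⟩ := hTdir a b
      exact ⟨e, Set.inter_subset_inter_left _ hea, Set.inter_subset_inter_left _ heb⟩
    obtain ⟨w, hw⟩ :=
      IsCompact.nonempty_iInter_of_directed_nonempty_isCompact_isClosed E hEdir hEne hEcomp hEcl
    refine ⟨w, Set.mem_iInter.mpr fun a => (Set.mem_iInter.mp hw a).1, ?_⟩
    exact (Set.mem_iInter.mp hw ⟨f₀, hf₀⟩).2
  -- the Chebyshev radius function
  set φ : X → ℝ := fun w => sSup ((fun z => dist w z) '' Ω) with hφdef
  have hbdd : ∀ w : X, BddAbove ((fun z => dist w z) '' Ω) := by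
    intro w
    refine ⟨Metric.diam (Set.univ : Set X), ?_⟩
    rintro r ⟨z, hz, rfl⟩
    exact Metric.dist_le_diam_of_mem Metric.isBounded_of_compactSpace trivial trivial
  have hφ_le : ∀ w r, (∀ z ∈ Ω, dist w z ≤ r) → φ w ≤ r := by
    intro w r h
    refine csSup_le (hΩne.image _) ?_
    rintro b ⟨z, hz, rfl⟩
    exact h z hz
  have hle_φ : ∀ w z, z ∈ Ω → dist w z ≤ φ w := fun w z hz => le_csSup (hbdd w) ⟨z, hz, rfl⟩
  have hφcont : Continuous φ := by
    refine (LipschitzWith.of_dist_le_mul (K := 1) fun x y => ?_).continuous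
    rw [NNReal.coe_one, one_mul, Real.dist_eq, abs_le]
    constructor
    · have : φ y ≤ φ x + dist x y := by
        refine hφ_le y _ fun z hz => ?_
        calc dist y z ≤ dist y x + dist x z := dist_triangle y x z
          _ ≤ dist x y + φ x := by rw [dist_comm y x]; exact add_le_add_right (hle_φ x z hz) _
          _ = φ x + dist x y := by ring
      linarith
    · have : φ x ≤ φ y + dist x y := by
        refine hφ_le x _ fun z hz => ?_
        calc dist x z ≤ dist x y + dist y z := dist_triangle x y z
          _ ≤ dist x y + φ y := add_le_add_right (hle_φ y z hz) _
          _ = φ y + dist x y := by ring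
      linarith
  -- minimize φ on K
  obtain ⟨w₀, hw₀K, hw₀min⟩ := hKcomp.exists_isMinOn ⟨x₀, hx₀K⟩ hφcont.continuousOn
  obtain ⟨z₁, hz₁⟩ := id hΩne
  have hr₁nonneg : 0 ≤ φ w₀ := le_trans dist_nonneg (hle_φ w₀ z₁ hz₁)
  -- the argmin set is in the family, hence equals K
  set C : Set X := K ∩ φ ⁻¹' (Set.Iic (φ w₀)) with hCdef
  have hC𝒦 : C ∈ 𝒦 := by
    refine ⟨⟨w₀, hw₀K, Set.mem_preimage.mpr Set.self_mem_Iic⟩, hKcl.inter (IsClosed.preimage hφcont isClosed_Iic), ?_, ?_⟩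
    · intro x hx y hy t ht
      refine ⟨hKconv x hx.1 y hy.1 t ht, ?_⟩
      have hx2 : φ x ≤ φ w₀ := hx.2
      have hy2 : φ y ≤ φ w₀ := hy.2
      refine hφ_le _ _ fun z hz => ?_
      calc dist (σ x y t) z ≤ (1 - t) * dist x z + t * dist y z := dist_sigma_le hb hc ht x y z
        _ ≤ (1 - t) * φ w₀ + t * φ w₀ := by
            have h1 : dist x z ≤ φ w₀ := (hle_φ x z hz).trans hx2
            have h2 : dist y z ≤ φ w₀ := (hle_φ y z hz).trans hy2
            have ht0 : 0 ≤ t := ht.1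
            have ht1 : 0 ≤ 1 - t := by linarith [ht.2]
            nlinarith
        _ = φ w₀ := by ring
    · intro f hf x hx
      refine ⟨hKinv f hf x hx.1, ?_⟩
      refine hφ_le _ _ fun z hz => ?_
      obtain ⟨w, hwΩ, hw⟩ := hΩsurj f hf z hz
      calc dist (f x) z = dist (f x) (f w) := by rw [hw]
        _ ≤ dist x w := by simpa using (hlip f hf).dist_le_mul x w
        _ ≤ φ x := hle_φ x w hwΩ
        _ ≤ φ w₀ := hx.2
  have hKC : K ⊆ C := hKmin.2 hC𝒦 (Set.inter_subset_left)
  have hφconst : ∀ w ∈ K, φ w = φ w₀ := by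
    intro w hw
    exact le_antisymm (hKC hw).2 (isMinOn_iff.mp hw₀min w hw)
  -- diameter of Ω
  set ρ : ℝ := Metric.diam Ω with hρdef
  have hdistρ : ∀ w ∈ Ω, ∀ z ∈ Ω, dist w z ≤ ρ :=
    fun w hw z hz => Metric.dist_le_diam_of_mem hΩcomp.isBounded hw hz
  have hρr₁ : ρ ≤ φ w₀ := by
    refine Metric.diam_le_of_forall_dist_le hr₁nonneg fun w hw z hz => ?_
    exact (hle_φ w z hz).trans (hφconst w (hΩsubK hw)).le
  -- diameter is zero
  have hρ0 : ρ ≤ 0 := by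
    by_contra hcon
    push_neg at hcon
    -- finite ρ/2-net of Ω with centers in Ω
    obtain ⟨Tn, hTnΩ, hTnfin, hTncov⟩ :=
      hΩcomp.elim_finite_subcover_image (b := Ω) (c := fun z => Metric.ball z (ρ / 2))
        (fun z _ => Metric.isOpen_ball)
        (fun z hz => Set.mem_biUnion hz (Metric.mem_ball_self (by linarith)))
    have hl_mem : ∀ z, z ∈ hTnfin.toFinset.toList ↔ z ∈ Tn := by
      intro z
      rw [Finset.mem_toList, Set.Finite.mem_toFinset]
    obtain ⟨z₀, l', hll⟩ : ∃ z₀ l', hTnfin.toFinset.toList = z₀ :: l' := by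
      cases h : hTnfin.toFinset.toList with
      | nil =>
        exfalso
        obtain ⟨y, hy⟩ := id hΩne
        obtain ⟨j, hjTn, hj⟩ := Set.mem_iUnion₂.mp (hTncov hy)
        have hmem := (hl_mem j).mpr hjTn
        rw [h] at hmem
        exact List.not_mem_nil hmem
      | cons a as => exact ⟨a, as, rfl⟩
    have hl_mem' : ∀ z, z ∈ z₀ :: l' ↔ z ∈ Tn := by
      intro z; rw [← hll]; exact hl_mem z
    have hlsubΩ : ∀ z ∈ z₀ :: l', z ∈ Ω := fun z hz => hTnΩ ((hl_mem' z).mp hz)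
    set u : X := bicMix σ z₀ l' with hudef
    have huK : u ∈ K :=
      bicMix_mem hKconv l' z₀ (hΩsubK (hlsubΩ z₀ List.mem_cons_self))
        (fun y hy => hΩsubK (hlsubΩ y (List.mem_cons_of_mem _ hy)))
    set n : ℝ := (l'.length : ℝ) + 1 with hndef
    have hnpos : (0:ℝ) < n := by positivity
    have hub : ∀ y ∈ Ω, dist u y ≤ ρ - ρ / 2 / n := by
      intro y hy
      have hmix := bicMix_dist hb hc l' z₀ y
      -- bound the sum
      obtain ⟨j, hjTn, hj⟩ := Set.mem_iUnion₂.mp (hTncov hy)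
      have hjl : j ∈ z₀ :: l' := (hl_mem' j).mpr hjTn
      have hjle : dist j y ≤ ρ / 2 := by
        rw [dist_comm]
        exact le_of_lt (Metric.mem_ball.mp hj)
      have hjmem : dist j y ∈ ((z₀ :: l').map (fun z => dist z y)) :=
        List.mem_map.mpr ⟨j, hjl, rfl⟩
      have hsum : (((z₀ :: l').map (fun z => dist z y)).sum : ℝ) ≤
          ((((z₀ :: l').map (fun z => dist z y)).length : ℝ)) * ρ - ρ / 2 := by
        refine list_sum_bound _ ρ ?_ hjmem hjle
        rintro x hx
        obtain ⟨z, hz, rfl⟩ := List.mem_map.mp hx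
        exact hdistρ z (hlsubΩ z hz) y hy
      have hlen : ((((z₀ :: l').map (fun z => dist z y)).length : ℝ)) = n := by
        rw [List.length_map, List.length_cons, hndef]
        push_cast
        ring
      rw [hlen] at hsum
      have hsum' : dist z₀ y + ((l'.map (fun z => dist z y)).sum : ℝ) ≤ n * ρ - ρ / 2 := by
        have hsplit : ((z₀ :: l').map (fun z => dist z y)).sum
            = dist z₀ y + (l'.map (fun z => dist z y)).sum := by simp
        rw [hsplit] at hsum
        exact hsum
      calc dist u y ≤ (dist z₀ y + (l'.map (fun z => dist z y)).sum) / ((l'.length : ℝ) + 1) := by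
            rw [hudef]; exact hmix
        _ = (dist z₀ y + (l'.map (fun z => dist z y)).sum) / n := by rw [hndef]
        _ ≤ (n * ρ - ρ / 2) / n := by gcongr
        _ = ρ - ρ / 2 / n := by field_simp
    have hφu : φ u ≤ ρ - ρ / 2 / n := hφ_le u _ hub
    have hφuK : φ u = φ w₀ := hφconst u huK
    have : ρ ≤ ρ - ρ / 2 / n := le_trans hρr₁ (hφuK ▸ hφu)
    have hpos : 0 < ρ / 2 / n := by positivity
    linarith
  have hρeq : ρ = 0 := le_antisymm hρ0 Metric.diam_nonneg
  obtain ⟨xs, hxs⟩ := id hΩne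
  refine ⟨xs, fun f hf => ?_⟩
  have hfxs : f xs ∈ Ω := hΩfwd f hf xs hxs
  have hd : dist (f xs) xs ≤ ρ := hdistρ _ hfxs _ hxs
  rw [hρeq] at hd
  exact dist_le_zero.mp hd
end

section
/- Let (X,d) be a proper metric space. If X admits a conical geodesic bicombing, then X admits a reversible conical geodesic bicombing. -/
open Filter Topology

namespace BicombingAux

variable {X : Type*} [MetricSpace X]

lemma mem01 : (0:ℝ) ∈ Set.Icc (0:ℝ) 1 := ⟨le_refl 0, zero_le_one⟩
lemma mem11 : (1:ℝ) ∈ Set.Icc (0:ℝ) 1 := ⟨zero_le_one, le_refl 1⟩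
lemma memhalf : (1/2:ℝ) ∈ Set.Icc (0:ℝ) 1 := by norm_num
lemma mem_sub {t : ℝ} (ht : t ∈ Set.Icc (0:ℝ) 1) : (1 - t) ∈ Set.Icc (0:ℝ) 1 :=
  ⟨by linarith [ht.2], by linarith [ht.1]⟩

variable {σ : X → X → ℝ → X}

lemma sigma_self (hg : IsGeodesicBicombing σ) (x : X) {t : ℝ} (ht : t ∈ Set.Icc (0:ℝ) 1) :
    σ x x t = x := by
  have h := hg.2.2 x x t ht 0 mem01
  rw [hg.1, dist_self, mul_zero] at h
  exact dist_eq_zero.mp h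

lemma mid_left (hg : IsGeodesicBicombing σ) (a b : X) :
    dist a (σ a b (1/2)) = dist a b / 2 := by
  have h := hg.2.2 a b 0 mem01 (1/2) memhalf
  rw [hg.1] at h
  rw [h, abs_of_nonpos (by norm_num : (0:ℝ) - 1/2 ≤ 0)]
  ring

lemma mid_right (hg : IsGeodesicBicombing σ) (a b : X) :
    dist b (σ a b (1/2)) = dist a b / 2 := by
  have h := hg.2.2 a b 1 mem11 (1/2) memhalf
  rw [hg.2.1] at h
  rw [h, abs_of_nonneg (by norm_num : (0:ℝ) ≤ 1 - 1/2)]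
  ring

lemma mid_conical (hc : IsConical σ) (a b a' b' : X) :
    dist (σ a b (1/2)) (σ a' b' (1/2)) ≤ (dist a a' + dist b b') / 2 := by
  have h := hc a b a' b' (1/2) memhalf
  linarith

lemma mid_conical_pt (hg : IsGeodesicBicombing σ) (hc : IsConical σ) (u v w : X) :
    dist (σ u v (1/2)) w ≤ (dist u w + dist v w) / 2 := by
  have h := hc u v w w (1/2) memhalf
  rw [sigma_self hg w memhalf] at h
  linarith

/-- If a path has the right endpoints and is `dist x y`-Lipschitz-type bounded, it is a
geodesic. -/
lemma geo_of_upper {γ : ℝ → X} {x y : X} (h0 : γ 0 = x) (h1 : γ 1 = y)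
    (hu : ∀ s ∈ Set.Icc (0:ℝ) 1, ∀ t ∈ Set.Icc (0:ℝ) 1,
      dist (γ s) (γ t) ≤ |s - t| * dist x y) :
    ∀ s ∈ Set.Icc (0:ℝ) 1, ∀ t ∈ Set.Icc (0:ℝ) 1,
      dist (γ s) (γ t) = |s - t| * dist x y := by
  have key : ∀ s ∈ Set.Icc (0:ℝ) 1, ∀ t ∈ Set.Icc (0:ℝ) 1, s ≤ t →
      dist (γ s) (γ t) = |s - t| * dist x y := by
    intro s hs t ht hst
    have h4 : dist x y ≤ dist x (γ s) + dist (γ s) (γ t) + dist (γ t) y := by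
      rw [← h0, ← h1]
      exact dist_triangle4 (γ 0) (γ s) (γ t) (γ 1)
    have hxs : dist x (γ s) ≤ s * dist x y := by
      have h := hu 0 mem01 s hs
      rw [h0] at h
      calc dist x (γ s) ≤ |0 - s| * dist x y := h
        _ = s * dist x y := by
            rw [abs_of_nonpos (by linarith [hs.1] : (0:ℝ) - s ≤ 0)]; ring
    have hty : dist (γ t) y ≤ (1 - t) * dist x y := by
      have h := hu t ht 1 mem11
      rw [h1] at h
      calc dist (γ t) y ≤ |t - 1| * dist x y := h
        _ = (1 - t) * dist x y := by
            rw [abs_of_nonpos (by linarith [ht.2] : t - 1 ≤ 0)]; ring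
    have habs : |s - t| = t - s := by
      rw [abs_of_nonpos (by linarith : s - t ≤ 0)]; ring
    have hup := hu s hs t ht
    rw [habs] at hup ⊢
    have hlow : (t - s) * dist x y ≤ dist (γ s) (γ t) := by nlinarith
    linarith
  intro s hs t ht
  rcases le_total s t with h | h
  · exact key s hs t ht h
  · rw [dist_comm, abs_sub_comm]
    exact key t ht s hs h

/-- The symmetrization iteration. -/
noncomputable def bIter (σ : X → X → ℝ → X) : ℕ → X → X → ℝ → X
  | 0 => σ
  | n+1 => fun x y t => σ (bIter σ n x y t) (bIter σ n y x (1 - t)) (1/2)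

lemma step_e (n : ℕ) (x y : X) (t : ℝ) :
    bIter σ (n+1) x y t = σ (bIter σ n x y t) (bIter σ n y x (1 - t)) (1/2) := rfl

lemma step_f (n : ℕ) (x y : X) (t : ℝ) :
    bIter σ (n+1) y x (1-t) = σ (bIter σ n y x (1-t)) (bIter σ n x y t) (1/2) := by
  have h : (1:ℝ) - (1 - t) = t := by ring
  show σ (bIter σ n y x (1-t)) (bIter σ n x y (1 - (1 - t))) (1/2) = _
  rw [h]

/-- Each iterate is a conical geodesic bicombing. -/
lemma bIter_props (hg : IsGeodesicBicombing σ) (hc : IsConical σ) :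
    ∀ n, IsGeodesicBicombing (bIter σ n) ∧ IsConical (bIter σ n) := by
  intro n
  induction n with
  | zero => exact ⟨hg, hc⟩
  | succ n ih =>
    obtain ⟨⟨p0, p1, pdist⟩, pcon⟩ := ih
    have e0 : ∀ x y : X, bIter σ (n+1) x y 0 = x := by
      intro x y
      rw [step_e, p0, show (1:ℝ) - 0 = 1 by ring, p1]
      exact sigma_self hg x memhalf
    have e1 : ∀ x y : X, bIter σ (n+1) x y 1 = y := by
      intro x y
      rw [step_e, p1, show (1:ℝ) - 1 = 0 by ring, p0]
      exact sigma_self hg y memhalf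
    have hcon' : IsConical (bIter σ (n+1)) := by
      intro x y x' y' t ht
      rw [step_e, step_e]
      have h1 := mid_conical hc (bIter σ n x y t) (bIter σ n y x (1-t))
        (bIter σ n x' y' t) (bIter σ n y' x' (1-t))
      have h2 := pcon x y x' y' t ht
      have h3 := pcon y x y' x' (1-t) (mem_sub ht)
      have h3' : dist (bIter σ n y x (1-t)) (bIter σ n y' x' (1-t)) ≤
          t * dist y y' + (1-t) * dist x x' := by
        calc dist (bIter σ n y x (1-t)) (bIter σ n y' x' (1-t))
            ≤ (1 - (1-t)) * dist y y' + (1-t) * dist x x' := h3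
          _ = t * dist y y' + (1-t) * dist x x' := by ring
      linarith
    refine ⟨⟨e0, e1, ?_⟩, hcon'⟩
    intro x y
    apply geo_of_upper (e0 x y) (e1 x y)
    intro s hs t ht
    rw [step_e, step_e]
    have h1 := mid_conical hc (bIter σ n x y s) (bIter σ n y x (1-s))
      (bIter σ n x y t) (bIter σ n y x (1-t))
    have h2 := pdist x y s hs t ht
    have h3 := pdist y x (1-s) (mem_sub hs) (1-t) (mem_sub ht)
    have habs : |1 - s - (1 - t)| = |s - t| := by
      rw [show (1:ℝ) - s - (1 - t) = -(s - t) by ring, abs_neg]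
    rw [habs, dist_comm y x] at h3
    linarith

/-- The key rigidity lemma: each of the four cross-distances between stage `n` and any later
stage equals half the asymmetry at stage `n`. -/
lemma rigid (hg : IsGeodesicBicombing σ) (hc : IsConical σ) (x y : X) (t : ℝ) :
    ∀ n k : ℕ,
      dist (bIter σ n x y t) (bIter σ (n+k+1) x y t)
        = dist (bIter σ n x y t) (bIter σ n y x (1-t)) / 2 ∧
      dist (bIter σ n x y t) (bIter σ (n+k+1) y x (1-t))
        = dist (bIter σ n x y t) (bIter σ n y x (1-t)) / 2 ∧
      dist (bIter σ n y x (1-t)) (bIter σ (n+k+1) y x (1-t))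
        = dist (bIter σ n x y t) (bIter σ n y x (1-t)) / 2 ∧
      dist (bIter σ n y x (1-t)) (bIter σ (n+k+1) x y t)
        = dist (bIter σ n x y t) (bIter σ n y x (1-t)) / 2 := by
  intro n k
  induction k with
  | zero =>
    refine ⟨?_, ?_, ?_, ?_⟩
    · rw [step_e n x y t, mid_left hg]
    · rw [step_f n x y t, mid_right hg, dist_comm (bIter σ n y x (1-t))]
    · rw [step_f n x y t, mid_left hg, dist_comm (bIter σ n y x (1-t))]
    · rw [step_e n x y t, mid_right hg]
  | succ k ih =>
    obtain ⟨ha, hb, hc2, hd⟩ := ih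
    have hu' : bIter σ (n+(k+1)+1) x y t
        = σ (bIter σ (n+k+1) x y t) (bIter σ (n+k+1) y x (1-t)) (1/2) :=
      step_e (n+k+1) x y t
    have hv' : bIter σ (n+(k+1)+1) y x (1-t)
        = σ (bIter σ (n+k+1) y x (1-t)) (bIter σ (n+k+1) x y t) (1/2) :=
      step_f (n+k+1) x y t
    set e := bIter σ n x y t with he
    set f := bIter σ n y x (1-t) with hf
    set u := bIter σ (n+k+1) x y t with hu
    set v := bIter σ (n+k+1) y x (1-t) with hv
    -- upper bounds
    have hA : dist e (σ u v (1/2)) ≤ dist e f / 2 := by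
      have h := mid_conical_pt hg hc u v e
      rw [dist_comm u e, dist_comm v e] at h
      rw [dist_comm]
      linarith
    have hB : dist e (σ v u (1/2)) ≤ dist e f / 2 := by
      have h := mid_conical_pt hg hc v u e
      rw [dist_comm u e, dist_comm v e] at h
      rw [dist_comm]
      linarith
    have hC : dist f (σ v u (1/2)) ≤ dist e f / 2 := by
      have h := mid_conical_pt hg hc v u f
      rw [dist_comm u f, dist_comm v f] at h
      rw [dist_comm]
      linarith
    have hD : dist f (σ u v (1/2)) ≤ dist e f / 2 := by
      have h := mid_conical_pt hg hc u v f
      rw [dist_comm u f, dist_comm v f] at h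
      rw [dist_comm]
      linarith
    -- lower bounds by the triangle inequality
    have t1 : dist e f ≤ dist e (σ v u (1/2)) + dist f (σ v u (1/2)) := by
      have h := dist_triangle e (σ v u (1/2)) f
      have hcm : dist (σ v u (1/2)) f = dist f (σ v u (1/2)) := dist_comm _ _
      linarith
    have t2 : dist e f ≤ dist e (σ u v (1/2)) + dist f (σ u v (1/2)) := by
      have h := dist_triangle e (σ u v (1/2)) f
      have hcm : dist (σ u v (1/2)) f = dist f (σ u v (1/2)) := dist_comm _ _
      linarith
    rw [hu', hv']
    exact ⟨by linarith, by linarith, by linarith, by linarith⟩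

lemma asym_antitone (hg : IsGeodesicBicombing σ) (hc : IsConical σ) (x y : X) (t : ℝ) :
    Antitone (fun n => dist (bIter σ n x y t) (bIter σ n y x (1-t))) := by
  apply antitone_nat_of_succ_le
  intro n
  show dist (bIter σ (n+1) x y t) (bIter σ (n+1) y x (1-t))
      ≤ dist (bIter σ n x y t) (bIter σ n y x (1-t))
  rw [step_e n x y t, step_f n x y t]
  have h := mid_conical hc (bIter σ n x y t) (bIter σ n y x (1-t))
    (bIter σ n y x (1-t)) (bIter σ n x y t)
  have hcm : dist (bIter σ n y x (1-t)) (bIter σ n x y t)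
      = dist (bIter σ n x y t) (bIter σ n y x (1-t)) := dist_comm _ _
  linarith

end BicombingAux

/-- **Lemma 4.4.** Every proper metric space admitting a conical geodesic bicombing admits a
reversible conical geodesic bicombing. -/
theorem proper_conical_bicombing_exists_reversible
    {X : Type*} [MetricSpace X] [ProperSpace X]
    (h : ∃ σ : X → X → ℝ → X, IsGeodesicBicombing σ ∧ IsConical σ) :
    ∃ τ : X → X → ℝ → X, IsGeodesicBicombing τ ∧ IsConical τ ∧ IsReversible τ := by
  classical
  open BicombingAux in
  obtain ⟨σ, hg, hc⟩ := h
  have props := bIter_props hg hc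
  -- the asymmetry tends to zero
  have asym_to_zero : ∀ x y : X, ∀ t ∈ Set.Icc (0:ℝ) 1,
      Tendsto (fun n => dist (bIter σ n x y t) (bIter σ n y x (1-t))) atTop (𝓝 0) := by
    intro x y t ht
    set r : ℕ → ℝ := fun n => dist (bIter σ n x y t) (bIter σ n y x (1-t)) with hrdef
    have hanti : Antitone r := asym_antitone hg hc x y t
    have hbdd : BddBelow (Set.range r) := ⟨0, by rintro _ ⟨n, rfl⟩; exact dist_nonneg⟩
    have htend := tendsto_atTop_ciInf hanti hbdd
    have hinf_nonneg : 0 ≤ ⨅ n, r n := le_ciInf (fun n => dist_nonneg)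
    have hinf : (⨅ n, r n) = 0 := by
      by_contra hne
      have hpos : 0 < ⨅ n, r n := lt_of_le_of_ne hinf_nonneg (Ne.symm hne)
      set L := ⨅ n, r n with hL
      have hmem : ∀ n, bIter σ n x y t ∈ Metric.closedBall x (dist x y) := by
        intro n
        obtain ⟨⟨q0, q1, qdist⟩, -⟩ := props n
        have hq := qdist x y t ht 0 mem01
        rw [q0] at hq
        have habs : |t - 0| = t := by rw [sub_zero, abs_of_nonneg ht.1]
        rw [Metric.mem_closedBall]
        calc dist (bIter σ n x y t) x = |t - 0| * dist x y := hq
          _ = t * dist x y := by rw [habs]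
          _ ≤ 1 * dist x y := mul_le_mul_of_nonneg_right ht.2 dist_nonneg
          _ = dist x y := one_mul _
      obtain ⟨a, -, φ, hφ, hconv⟩ :=
        (isCompact_closedBall x (dist x y)).tendsto_subseq hmem
      have hcs : CauchySeq (fun n => bIter σ (φ n) x y t) := hconv.cauchySeq
      rw [Metric.cauchySeq_iff'] at hcs
      obtain ⟨N, hN⟩ := hcs (L/2) (by linarith)
      have h1 := hN (N+1) (Nat.le_succ N)
      have hlt : φ N < φ (N+1) := hφ (Nat.lt_succ_self N)
      obtain ⟨k, hk⟩ : ∃ k, φ (N+1) = φ N + k + 1 := ⟨φ (N+1) - φ N - 1, by omega⟩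
      have heq := (rigid hg hc x y t (φ N) k).1
      rw [← hk] at heq
      have hge : L ≤ r (φ N) := ciInf_le hbdd (φ N)
      rw [dist_comm] at h1
      rw [heq] at h1
      have : r (φ N) = dist (bIter σ (φ N) x y t) (bIter σ (φ N) y x (1-t)) := rfl
      linarith [this ▸ h1]
    rw [hinf] at htend
    exact htend
  -- Cauchy sequences and limits
  have key_cauchy : ∀ x y : X, ∀ t ∈ Set.Icc (0:ℝ) 1,
      CauchySeq (fun n => bIter σ n x y t) := by
    intro x y t ht
    apply cauchySeq_of_le_tendsto_0
      (fun n => dist (bIter σ n x y t) (bIter σ n y x (1-t))) ?_ (asym_to_zero x y t ht)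
    intro n m N hn hm
    have hanti : Antitone (fun n => dist (bIter σ n x y t) (bIter σ n y x (1-t))) :=
      asym_antitone hg hc x y t
    rcases lt_trichotomy n m with hlt | heq | hgt
    · obtain ⟨k, hk⟩ : ∃ k, m = n + k + 1 := ⟨m - n - 1, by omega⟩
      have hr := (rigid hg hc x y t n k).1
      rw [← hk] at hr
      rw [hr]
      have h1 : dist (bIter σ n x y t) (bIter σ n y x (1-t))
          ≤ dist (bIter σ N x y t) (bIter σ N y x (1-t)) := hanti hn
      have h2 : 0 ≤ dist (bIter σ n x y t) (bIter σ n y x (1-t)) := dist_nonneg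
      linarith
    · subst heq
      rw [dist_self]
      exact dist_nonneg
    · obtain ⟨k, hk⟩ : ∃ k, n = m + k + 1 := ⟨n - m - 1, by omega⟩
      have hr := (rigid hg hc x y t m k).1
      rw [← hk] at hr
      rw [dist_comm, hr]
      have h1 : dist (bIter σ m x y t) (bIter σ m y x (1-t))
          ≤ dist (bIter σ N x y t) (bIter σ N y x (1-t)) := hanti hm
      have h2 : 0 ≤ dist (bIter σ m x y t) (bIter σ m y x (1-t)) := dist_nonneg
      linarith
  have hex : ∀ x y : X, ∀ t : ℝ, ∃ a : X,
      t ∈ Set.Icc (0:ℝ) 1 → Tendsto (fun n => bIter σ n x y t) atTop (𝓝 a) := by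
    intro x y t
    by_cases ht : t ∈ Set.Icc (0:ℝ) 1
    · obtain ⟨a, ha⟩ := cauchySeq_tendsto_of_complete (key_cauchy x y t ht)
      exact ⟨a, fun _ => ha⟩
    · exact ⟨x, fun hmem => absurd hmem ht⟩
  choose τ htend using hex
  refine ⟨τ, ⟨?_, ?_, ?_⟩, ?_, ?_⟩
  · -- τ x y 0 = x
    intro x y
    have h := htend x y 0 mem01
    have hconst : (fun n => bIter σ n x y 0) = fun _ => x :=
      funext (fun n => (props n).1.1 x y)
    rw [hconst] at h
    exact tendsto_nhds_unique h tendsto_const_nhds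
  · -- τ x y 1 = y
    intro x y
    have h := htend x y 1 mem11
    have hconst : (fun n => bIter σ n x y 1) = fun _ => y :=
      funext (fun n => (props n).1.2.1 x y)
    rw [hconst] at h
    exact tendsto_nhds_unique h tendsto_const_nhds
  · -- geodesic distance equality
    intro x y s hs t ht
    have h := (htend x y s hs).dist (htend x y t ht)
    have hconst : (fun n => dist (bIter σ n x y s) (bIter σ n x y t))
        = fun _ => |s - t| * dist x y :=
      funext (fun n => (props n).1.2.2 x y s hs t ht)
    rw [hconst] at h
    exact tendsto_nhds_unique h tendsto_const_nhds
  · -- conical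
    intro x y x' y' t ht
    have h := (htend x y t ht).dist (htend x' y' t ht)
    exact le_of_tendsto h (Filter.Eventually.of_forall (fun n => (props n).2 x y x' y' t ht))
  · -- reversible
    intro x y t ht
    have h := (htend x y t ht).dist (htend y x (1-t) (mem_sub ht))
    have h0 := asym_to_zero x y t ht
    have := tendsto_nhds_unique h h0
    exact dist_eq_zero.mp this
end
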